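/- arXiv:2405.10538 — 3 statements merged into one kernel-verified Lean document; each statement's English description precedes it below -/
import Mathlib

section
/- Let φ : ℕ → ℝ be non-decreasing with φ(n) ≥ 2 for all n. If the series ∑_{n≥1} ( n·(log φ(n))⁴/φ(n)² + log φ(n)/φ(n) ) converges, then the set F₃(φ) has Lebesgue measure zero. -/
open MeasureTheory Filter Set

/-- The Gauss map `T(x) = 1/x - ⌊1/x⌋`. -/
noncomputable def gaussMap (x : ℝ) : ℝ := 1 / x - ⌊1 / x⌋

/-- `cfA n x` is the `n`-th partial quotient `aₙ(x)` of `x` (for `n ≥ 1`),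
defined by `a₁(x) = ⌊1/x⌋` and `a_{n+1}(x) = a₁(Tⁿ x)`. -/
noncomputable def cfA (n : ℕ) (x : ℝ) : ℕ := ⌊1 / (gaussMap^[n - 1] x)⌋₊

/-- `cfProd ℓ n x = aₙ(x) · a_{n+1}(x) ⋯ a_{n+ℓ-1}(x)`. -/
noncomputable def cfProd (ℓ n : ℕ) (x : ℝ) : ℕ := ∏ i ∈ Finset.range ℓ, cfA (n + i) x

/-- The set `F_ℓ(φ)` of irrational `x ∈ (0,1)` such that for infinitely many `n`
there are `1 ≤ j < k ≤ n` with both products of `ℓ` consecutive partial quotients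
starting at `j` and at `k` at least `φ(n)`. -/
noncomputable def Fset (ℓ : ℕ) (φ : ℕ → ℝ) : Set ℝ :=
  {x | x ∈ Set.Ioo (0 : ℝ) 1 ∧ Irrational x ∧
    ∀ N : ℕ, ∃ n : ℕ, N ≤ n ∧ ∃ j k : ℕ, 1 ≤ j ∧ j < k ∧ k ≤ n ∧
      φ n ≤ (cfProd ℓ j x : ℝ) ∧ φ n ≤ (cfProd ℓ k x : ℝ)}

/-! ### Part A : basic dynamics of the Gauss map -/

def good (x : ℝ) : Prop := x ∈ Set.Ioo (0:ℝ) 1 ∧ Irrational x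

lemma Irrational.one_div'' {x : ℝ} (h : Irrational x) (hx : x ≠ 0) : Irrational (1/x) := by
  rw [one_div]
  rintro ⟨q, hq⟩
  exact h ⟨q⁻¹, by rw [Rat.cast_inv, hq, inv_inv]⟩

lemma good.pos {x : ℝ} (h : good x) : 0 < x := h.1.1
lemma good.lt_one {x : ℝ} (h : good x) : x < 1 := h.1.2
lemma good.irr {x : ℝ} (h : good x) : Irrational x := h.2

lemma good.one_lt_inv {x : ℝ} (h : good x) : 1 < 1/x := by
  rw [lt_div_iff₀ h.pos]; simpa using h.lt_one

lemma good.inv_irr {x : ℝ} (h : good x) : Irrational (1/x) :=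
  h.irr.one_div'' (ne_of_gt h.pos)

lemma good_gauss {x : ℝ} (h : good x) : good (gaussMap x) := by
  have hirr : Irrational (gaussMap x) := by
    simpa [gaussMap] using h.inv_irr.sub_intCast ⌊1/x⌋
  refine ⟨⟨?_, ?_⟩, hirr⟩
  · have h0 : 0 ≤ gaussMap x := by
      rw [gaussMap]; linarith [Int.floor_le (1/x)]
    rcases h0.lt_or_eq with h0 | h0
    · exact h0
    · exact absurd h0.symm (by exact_mod_cast hirr.ne_int 0)
  · rw [gaussMap]; linarith [Int.lt_floor_add_one (1/x)]

lemma good_iter {x : ℝ} (h : good x) (n : ℕ) : good (gaussMap^[n] x) := by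
  induction n with
  | zero => simpa using h
  | succ n ih => rw [Function.iterate_succ_apply']; exact good_gauss ih

lemma cfA_ge_one {x : ℝ} (h : good x) (n : ℕ) : 1 ≤ cfA n x := by
  have := (good_iter h (n-1)).one_lt_inv
  exact Nat.le_floor (by exact_mod_cast this.le)

lemma cfA_cast {x : ℝ} (h : good x) : ((cfA 1 x : ℕ) : ℝ) = ((⌊1/x⌋ : ℤ) : ℝ) := by
  have h0 : (0:ℤ) ≤ ⌊1/x⌋ := Int.floor_nonneg.2 (by linarith [h.one_lt_inv])
  rw [cfA]
  simp only [Nat.sub_self, Function.iterate_zero_apply]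
  rw [← Int.floor_toNat]
  exact_mod_cast congrArg (Int.cast : ℤ → ℝ) (Int.toNat_of_nonneg h0)

lemma one_div_eq {x : ℝ} (h : good x) : 1/x = (cfA 1 x : ℝ) + gaussMap x := by
  rw [cfA_cast h, gaussMap]; ring

lemma x_eq {x : ℝ} (h : good x) : x = 1/((cfA 1 x : ℝ) + gaussMap x) := by
  rw [← one_div_eq h, one_div_one_div]

lemma cfA_shift (n m : ℕ) (hm : 1 ≤ m) (x : ℝ) :
    cfA (n + m) x = cfA m (gaussMap^[n] x) := by
  have h1 : n + m - 1 = (m - 1) + n := by omega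
  rw [cfA, cfA, h1, Function.iterate_add_apply]

lemma cfA_gauss (m : ℕ) (hm : 1 ≤ m) (x : ℝ) : cfA m (gaussMap x) = cfA (m+1) x := by
  have := cfA_shift 1 m hm x
  rw [Function.iterate_one] at this
  rw [← this]
  congr 1
  omega

/-! ### Part B : words, cylinders, Möbius maps -/

def Ent (w : List ℕ) : Prop := ∀ a ∈ w, 1 ≤ a

noncomputable def wd : ℕ → ℝ → List ℕ
  | 0, _ => []
  | n+1, x => cfA 1 x :: wd n (gaussMap x)

noncomputable def hw : List ℕ → ℝ → ℝ
  | [], t => t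
  | a :: w, t => 1/((a:ℝ) + hw w t)

def cnt : List ℕ → ℕ × ℕ × ℕ × ℕ
  | [] => (0, 1, 1, 0)
  | a :: w => ((cnt w).2.2.1, (cnt w).2.2.2,
      a * (cnt w).2.2.1 + (cnt w).1, a * (cnt w).2.2.2 + (cnt w).2.1)

def pA (w : List ℕ) : ℕ := (cnt w).1
def pB (w : List ℕ) : ℕ := (cnt w).2.1
def qA (w : List ℕ) : ℕ := (cnt w).2.2.1
def qB (w : List ℕ) : ℕ := (cnt w).2.2.2

@[simp] lemma pA_nil : pA [] = 0 := rfl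
@[simp] lemma pB_nil : pB [] = 1 := rfl
@[simp] lemma qA_nil : qA [] = 1 := rfl
@[simp] lemma qB_nil : qB [] = 0 := rfl
@[simp] lemma pA_cons (a : ℕ) (w : List ℕ) : pA (a :: w) = qA w := rfl
@[simp] lemma pB_cons (a : ℕ) (w : List ℕ) : pB (a :: w) = qB w := rfl
@[simp] lemma qA_cons (a : ℕ) (w : List ℕ) : qA (a :: w) = a * qA w + pA w := rfl
@[simp] lemma qB_cons (a : ℕ) (w : List ℕ) : qB (a :: w) = a * qB w + pB w := rfl

lemma Ent.head {a : ℕ} {w : List ℕ} (h : Ent (a :: w)) : 1 ≤ a := h a (List.mem_cons_self)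
lemma Ent.tail {a : ℕ} {w : List ℕ} (h : Ent (a :: w)) : Ent w :=
  fun b hb => h b (List.mem_cons_of_mem a hb)

lemma cnt_facts {w : List ℕ} (h : Ent w) :
    1 ≤ qA w ∧ qB w ≤ qA w ∧ pA w ≤ qA w ∧ pA w + pB w ≤ qA w + qB w ∧
      qB w + pB w ≤ qA w + pA w ∧
      w.prod ≤ qA w ∧
      ((pB w : ℤ) * qA w - pA w * qB w = 1 ∨ (pB w : ℤ) * qA w - pA w * qB w = -1) := by
  induction w with
  | nil => simp
  | cons a w ih =>
    obtain ⟨h1, h2, h3, h4, h7, h5, h6⟩ := ih h.tail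
    have ha := h.head
    refine ⟨?_, ?_, ?_, ?_, ?_, ?_, ?_⟩
    · simp only [qA_cons]; nlinarith
    · simp only [qB_cons, qA_cons]; nlinarith
    · simp only [pA_cons, qA_cons]; nlinarith
    · simp only [pA_cons, pB_cons, qA_cons, qB_cons]; nlinarith
    · simp only [pA_cons, pB_cons, qA_cons, qB_cons]; nlinarith
    · simp only [List.prod_cons, qA_cons]
      calc a * w.prod ≤ a * qA w := Nat.mul_le_mul_left a h5
        _ ≤ a * qA w + pA w := Nat.le_add_right _ _
    · simp only [pA_cons, pB_cons, qA_cons, qB_cons]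
      push_cast
      rcases h6 with h6 | h6
      · right; nlinarith
      · left; nlinarith

lemma qA_pos {w : List ℕ} (h : Ent w) : (0:ℝ) < qA w := by
  exact_mod_cast Nat.lt_of_lt_of_le Nat.zero_lt_one (cnt_facts h).1

lemma den_pos {w : List ℕ} (h : Ent w) {t : ℝ} (ht : 0 ≤ t) :
    0 < (qA w : ℝ) + qB w * t := by
  have h1 := qA_pos h
  have h2 : (0:ℝ) ≤ (qB w : ℝ) * t := mul_nonneg (by positivity) ht
  linarith

lemma hw_eq {w : List ℕ} (h : Ent w) {t : ℝ} (ht : 0 ≤ t) :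
    hw w t = ((pA w : ℝ) + pB w * t) / ((qA w : ℝ) + qB w * t) := by
  induction w with
  | nil => simp [hw]
  | cons a w ih =>
    have hden := den_pos h.tail ht
    have hnum : (0:ℝ) ≤ (pA w : ℝ) + pB w * t := by positivity
    have hhw : 0 ≤ hw w t := by rw [ih h.tail]; positivity
    have ha : (1:ℝ) ≤ a := by exact_mod_cast h.head
    rw [hw, ih h.tail]
    simp only [pA_cons, pB_cons, qA_cons, qB_cons]
    push_cast
    have hkey : (a:ℝ) + ((pA w:ℝ) + pB w * t) / ((qA w:ℝ) + qB w * t)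
        = (((a:ℝ) * qA w + pA w) + ((a:ℝ) * qB w + pB w) * t) / ((qA w:ℝ) + qB w * t) := by
      rw [add_div' _ _ _ hden.ne']; congr 1; ring
    rw [hkey, one_div_div]

lemma hw_sub {w : List ℕ} (h : Ent w) {t s : ℝ} (ht : 0 ≤ t) (hs : 0 ≤ s) :
    hw w t - hw w s = ((pB w : ℝ) * qA w - pA w * qB w) * (t - s) /
      (((qA w : ℝ) + qB w * t) * ((qA w : ℝ) + qB w * s)) := by
  have h1 := den_pos h ht
  have h2 := den_pos h hs
  rw [hw_eq h ht, hw_eq h hs, div_sub_div _ _ h1.ne' h2.ne']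
  congr 1
  ring

lemma det_abs {w : List ℕ} (h : Ent w) :
    |(pB w : ℝ) * qA w - pA w * qB w| = 1 := by
  have h6 := (cnt_facts h).2.2.2.2.2.2
  have hcast : ((pB w : ℝ) * qA w - pA w * qB w) = (((pB w : ℤ) * qA w - pA w * qB w : ℤ) : ℝ) := by
    push_cast; ring
  rcases h6 with h6 | h6 <;> rw [hcast, h6] <;> norm_num

lemma hw_mem01 {w : List ℕ} (h : Ent w) {t : ℝ} (ht : t ∈ Icc (0:ℝ) 1) :
    hw w t ∈ Icc (0:ℝ) 1 := by
  obtain ⟨ht0, ht1⟩ := ht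
  obtain ⟨h1, h2, h3, h4, h7, h5, _⟩ := cnt_facts h
  have hden := den_pos h ht0
  rw [hw_eq h ht0]
  constructor
  · positivity
  · rw [div_le_one hden]
    have c3 : (pA w : ℝ) ≤ qA w := by exact_mod_cast h3
    have c4 : (pA w : ℝ) + pB w ≤ (qA w : ℝ) + qB w := by exact_mod_cast h4
    nlinarith

noncomputable def Iw (w : List ℕ) : Set ℝ :=
  Set.Ioo (min (hw w 0) (hw w 1)) (max (hw w 0) (hw w 1))

lemma vol_Iw {w : List ℕ} (h : Ent w) :
    volume (Iw w) = ENNReal.ofReal (1 / (((qA w : ℝ) + qB w) * qA w)) := by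
  have key : |hw w 1 - hw w 0| = 1 / (((qA w : ℝ) + qB w) * qA w) := by
    rw [hw_sub h zero_le_one le_rfl, abs_div, abs_mul, det_abs h]
    have d1 : (0:ℝ) < (qA w : ℝ) + qB w * 1 := den_pos h zero_le_one
    have d2 : (0:ℝ) < (qA w : ℝ) + qB w * 0 := den_pos h le_rfl
    rw [abs_of_pos (mul_pos d1 d2)]
    norm_num
  rw [Iw, Real.volume_Ioo, max_sub_min_eq_abs, key]

lemma mem_Ioo_min_max {u v z : ℝ} (h1 : u < z) (h2 : z < v) :
    z ∈ Ioo (min u v) (max u v) :=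
  ⟨lt_of_le_of_lt (min_le_left _ _) h1, lt_of_lt_of_le h2 (le_max_right _ _)⟩

lemma mem_Ioo_min_max' {u v z : ℝ} (h1 : v < z) (h2 : z < u) :
    z ∈ Ioo (min u v) (max u v) :=
  ⟨lt_of_le_of_lt (min_le_right _ _) h1, lt_of_lt_of_le h2 (le_max_left _ _)⟩

lemma hw_btwn {w : List ℕ} (h : Ent w) {t : ℝ} (ht : t ∈ Ioo (0:ℝ) 1) :
    hw w t ∈ Iw w := by
  obtain ⟨ht0, ht1⟩ := ht
  have d0 := den_pos h (le_refl (0:ℝ))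
  have dt := den_pos h ht0.le
  have d1 := den_pos h (zero_le_one (α := ℝ))
  have e1 := hw_sub h ht0.le (le_refl (0:ℝ))
  have e2 := hw_sub h (zero_le_one (α := ℝ)) ht0.le
  have hcast : ((pB w : ℝ) * qA w - pA w * qB w) = (((pB w : ℤ) * qA w - pA w * qB w : ℤ) : ℝ) := by
    push_cast; ring
  rcases (cnt_facts h).2.2.2.2.2.2 with h6 | h6
  · have hD : ((pB w : ℝ) * qA w - pA w * qB w) = 1 := by rw [hcast, h6]; norm_num
    apply mem_Ioo_min_max
    · have : 0 < hw w t - hw w 0 := by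
        rw [e1, hD, one_mul]
        apply div_pos (by linarith) (mul_pos dt d0)
      linarith
    · have : 0 < hw w 1 - hw w t := by
        rw [e2, hD, one_mul]
        apply div_pos (by linarith) (mul_pos d1 dt)
      linarith
  · have hD : ((pB w : ℝ) * qA w - pA w * qB w) = -1 := by rw [hcast, h6]; norm_num
    apply mem_Ioo_min_max'
    · have : 0 < hw w t - hw w 1 := by
        rw [show hw w t - hw w 1 = -(hw w 1 - hw w t) by ring, e2, hD]
        rw [show (-1 : ℝ) * (1 - t) = -(1-t) by ring, neg_div, neg_neg]
        apply div_pos (by linarith) (mul_pos d1 dt)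
      linarith
    · have : 0 < hw w 0 - hw w t := by
        rw [show hw w 0 - hw w t = -(hw w t - hw w 0) by ring, e1, hD]
        rw [show (-1 : ℝ) * (t - 0) = -(t-0) by ring, neg_div, neg_neg]
        apply div_pos (by linarith) (mul_pos dt d0)
      linarith

lemma x_eq_hw {x : ℝ} (h : good x) : ∀ n, x = hw (wd n x) (gaussMap^[n] x) := by
  intro n
  induction n generalizing x with
  | zero => simp [wd, hw]
  | succ n ih =>
    have hg := good_gauss h
    calc x = 1/((cfA 1 x:ℝ) + gaussMap x) := x_eq h
    _ = 1/((cfA 1 x:ℝ) + hw (wd n (gaussMap x)) (gaussMap^[n] (gaussMap x))) := by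
        rw [← ih hg]
    _ = hw (wd (n+1) x) (gaussMap^[n+1] x) := by rw [Function.iterate_succ_apply]; rfl

lemma wd_length (n : ℕ) (x : ℝ) : (wd n x).length = n := by
  induction n generalizing x with
  | zero => rfl
  | succ n ih => simp [wd, ih]

lemma wd_pos {x : ℝ} (h : good x) (n : ℕ) : Ent (wd n x) := by
  induction n generalizing x with
  | zero => intro a ha; simp [wd] at ha
  | succ n ih =>
    intro a ha
    rw [wd] at ha
    rcases List.mem_cons.1 ha with rfl | ha
    · exact cfA_ge_one h 1
    · exact ih (good_gauss h) a ha

lemma wd_one (x : ℝ) : wd 1 x = [cfA 1 x] := rfl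

lemma wd_two (x : ℝ) : wd 2 x = [cfA 1 x, cfA 2 x] := by
  show cfA 1 x :: cfA 1 (gaussMap x) :: [] = _
  rw [cfA_gauss 1 le_rfl x]

lemma wd_eq3 (k : ℕ) (x : ℝ) :
    wd (k+3) x = cfA 1 x :: cfA 2 x :: cfA 3 x :: wd k (gaussMap^[3] x) := by
  have h2 : cfA 1 (gaussMap x) = cfA 2 x := cfA_gauss 1 le_rfl x
  have h3 : cfA 1 (gaussMap (gaussMap x)) = cfA 3 x := by
    rw [cfA_gauss 1 le_rfl (gaussMap x), cfA_gauss 2 (by omega) x]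
  have h4 : gaussMap (gaussMap (gaussMap x)) = gaussMap^[3] x := by
    simp [Function.iterate_succ_apply]
  show cfA 1 x :: cfA 1 (gaussMap x) :: cfA 1 (gaussMap (gaussMap x)) ::
      wd k (gaussMap (gaussMap (gaussMap x))) = _
  rw [h2, h3, h4]

lemma wd_three (x : ℝ) : wd 3 x = [cfA 1 x, cfA 2 x, cfA 3 x] := by
  have := wd_eq3 0 x
  simpa [wd] using this

/-- Core step for the converse direction. -/
lemma core_cons {a u v y : ℝ} (ha : 1 ≤ a) (hu0 : 0 ≤ u) (hv1 : v ≤ 1) (huv : u ≤ v)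
    (hy : y ∈ Ioo (1/(a+v)) (1/(a+u))) :
    0 < y ∧ y < 1 ∧ a < 1/y ∧ 1/y < a + 1 ∧ (1/y - a) ∈ Ioo u v := by
  have hA : (0:ℝ) < a + u := by linarith
  have hB : (0:ℝ) < a + v := by linarith
  obtain ⟨hy1, hy2⟩ := hy
  have hy0 : 0 < y := lt_trans (by positivity) hy1
  have k1 : y * (a + u) < 1 := (lt_div_iff₀ hA).mp hy2
  have k2 : 1 < y * (a + v) := (div_lt_iff₀ hB).mp hy1
  have j1 : a + u < 1/y := by rw [lt_div_iff₀ hy0]; linarith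
  have j2 : 1/y < a + v := by rw [div_lt_iff₀ hy0]; linarith
  have hylt : y < 1 := by
    calc y < 1/(a+u) := hy2
    _ ≤ 1 := by rw [div_le_one hA]; linarith
  exact ⟨hy0, hylt, by linarith, by linarith, by constructor <;> linarith⟩

lemma helper_cons {a u v y : ℝ} (ha : 1 ≤ a) (hu : u ∈ Icc (0:ℝ) 1) (hv : v ∈ Icc (0:ℝ) 1)
    (hy : y ∈ Ioo (min (1/(a+u)) (1/(a+v))) (max (1/(a+u)) (1/(a+v)))) :
    0 < y ∧ y < 1 ∧ a < 1/y ∧ 1/y < a + 1 ∧ (1/y - a) ∈ Ioo (min u v) (max u v) := by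
  rcases le_total u v with huv | hvu
  · have hle : 1/(a+v) ≤ 1/(a+u) :=
      one_div_le_one_div_of_le (by linarith [hu.1]) (by linarith)
    rw [min_eq_right hle, max_eq_left hle] at hy
    obtain ⟨c1, c2, c3, c4, c5⟩ := core_cons ha hu.1 hv.2 huv hy
    exact ⟨c1, c2, c3, c4, by
      rw [min_eq_left huv, max_eq_right huv]; exact c5⟩
  · have hle : 1/(a+u) ≤ 1/(a+v) :=
      one_div_le_one_div_of_le (by linarith [hv.1]) (by linarith)
    rw [min_eq_left hle, max_eq_right hle] at hy
    obtain ⟨c1, c2, c3, c4, c5⟩ := core_cons ha hv.1 hu.2 hvu hy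
    exact ⟨c1, c2, c3, c4, by
      rw [min_eq_right hvu, max_eq_left hvu]; exact c5⟩

lemma irr_mem_Iw : ∀ (w : List ℕ), Ent w → ∀ y : ℝ, Irrational y → y ∈ Iw w →
    good y ∧ wd w.length y = w := by
  intro w
  induction w with
  | nil =>
    intro _ y hy hmem
    have hIw : Iw ([] : List ℕ) = Ioo (0:ℝ) 1 := by
      simp only [Iw]
      rw [show hw [] (0:ℝ) = 0 from rfl, show hw [] (1:ℝ) = 1 from rfl]
      rw [min_eq_left zero_le_one, max_eq_right zero_le_one]
    rw [hIw] at hmem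
    exact ⟨⟨hmem, hy⟩, rfl⟩
  | cons a w ih =>
    intro hE y hy hmem
    have ha : (1:ℝ) ≤ a := by exact_mod_cast hE.head
    have hEw := hE.tail
    have hu0m : hw w 0 ∈ Icc (0:ℝ) 1 := hw_mem01 hEw (by constructor <;> norm_num)
    have hu1m : hw w 1 ∈ Icc (0:ℝ) 1 := hw_mem01 hEw (by constructor <;> norm_num)
    have he0 : hw (a::w) 0 = 1/((a:ℝ) + hw w 0) := rfl
    have he1 : hw (a::w) 1 = 1/((a:ℝ) + hw w 1) := rfl
    rw [Iw, he0, he1] at hmem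
    obtain ⟨hy0, hy1, hfl1, hfl2, hz⟩ := helper_cons ha hu0m hu1m hmem
    have hfloor : ⌊1/y⌋ = (a : ℤ) := by
      rw [Int.floor_eq_iff]
      constructor
      · exact_mod_cast hfl1.le
      · push_cast; exact hfl2
    have hgauss : gaussMap y = 1/y - (a:ℝ) := by
      rw [gaussMap, hfloor]; push_cast; ring
    have hcfa : cfA 1 y = a := by
      rw [cfA]
      simp only [Nat.sub_self, Function.iterate_zero_apply]
      rw [← Int.floor_toNat, hfloor]
      exact Int.toNat_natCast a
    have hgirr : Irrational (gaussMap y) := by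
      simpa [gaussMap] using (hy.one_div'' hy0.ne').sub_intCast ⌊1/y⌋
    have hgmem : gaussMap y ∈ Iw w := by
      rw [hgauss, Iw]; exact hz
    obtain ⟨hgood', hwd'⟩ := ih hEw (gaussMap y) hgirr hgmem
    refine ⟨⟨⟨hy0, hy1⟩, hy⟩, ?_⟩
    rw [List.length_cons]
    show cfA 1 y :: wd w.length (gaussMap y) = a :: w
    rw [hcfa, hwd']

lemma mem_Iw {x : ℝ} (h : good x) (n : ℕ) : x ∈ Iw (wd n x) := by
  have hg := good_iter h n
  have := hw_btwn (wd_pos h n) (t := gaussMap^[n] x) ⟨hg.pos, hg.lt_one⟩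
  rwa [← x_eq_hw h n] at this

lemma Iw_disjoint {w w' : List ℕ} (hE : Ent w) (hE' : Ent w') (hlen : w.length = w'.length)
    (hne : w ≠ w') : Disjoint (Iw w) (Iw w') := by
  rw [Set.disjoint_iff_inter_eq_empty]
  by_contra hcon
  obtain ⟨y, hy, hymem⟩ := dense_irrational.exists_mem_open
    (IsOpen.inter isOpen_Ioo isOpen_Ioo) (Set.nonempty_iff_ne_empty.2 hcon)
  obtain ⟨_, h1⟩ := irr_mem_Iw w hE y hy hymem.1
  obtain ⟨_, h2⟩ := irr_mem_Iw w' hE' y hy hymem.2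
  exact hne (by rw [← h1, ← h2, hlen])

lemma image_meas {w : List ℕ} (h : Ent w) {s : Set ℝ} (hs : s ⊆ Icc 0 1) :
    volume (hw w '' s) ≤ ENNReal.ofReal (1/((qA w:ℝ) * qA w)) * volume s := by
  have hq := qA_pos h
  have hlip : LipschitzOnWith (Real.toNNReal (1/((qA w:ℝ) * qA w))) (hw w) (Icc 0 1) := by
    apply LipschitzOnWith.of_dist_le_mul
    intro t ht s' hs'
    rw [Real.dist_eq, Real.dist_eq, Real.coe_toNNReal _ (by positivity)]
    have e := hw_sub h ht.1 hs'.1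
    have d1 := den_pos h ht.1
    have d2 := den_pos h hs'.1
    rw [show hw w t - hw w s' = _ from e, abs_div, abs_mul, det_abs h, one_mul,
      abs_of_pos (mul_pos d1 d2)]
    have hden1 : (qA w:ℝ) ≤ (qA w:ℝ) + qB w * t :=
      le_add_of_nonneg_right (mul_nonneg (by positivity) ht.1)
    have hden2 : (qA w:ℝ) ≤ (qA w:ℝ) + qB w * s' :=
      le_add_of_nonneg_right (mul_nonneg (by positivity) hs'.1)
    rw [div_le_iff₀ (mul_pos d1 d2)]
    have habs : (0:ℝ) ≤ |t - s'| := abs_nonneg _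
    have key : (qA w:ℝ) * qA w ≤ ((qA w:ℝ) + qB w * t) * ((qA w:ℝ) + qB w * s') := by
      nlinarith
    calc |t - s'| = |t - s'| * ((qA w:ℝ) * qA w) * (1/((qA w:ℝ) * qA w)) := by
          field_simp
    _ ≤ |t - s'| * (((qA w:ℝ) + qB w * t) * ((qA w:ℝ) + qB w * s')) * (1/((qA w:ℝ) * qA w)) := by
          apply mul_le_mul_of_nonneg_right (mul_le_mul_of_nonneg_left key habs) (by positivity)
    _ = 1/((qA w:ℝ) * qA w) * |t - s'| * (((qA w:ℝ) + qB w * t) * ((qA w:ℝ) + qB w * s')) := by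
          ring
  have key := (hlip.mono hs).hausdorffMeasure_image_le (zero_le_one (α := ℝ))
  rw [MeasureTheory.hausdorffMeasure_real, ENNReal.rpow_one] at key
  exact key

example : True := trivial
/-! ### Part C : the master covering lemma -/

lemma ofReal_two : ENNReal.ofReal (2:ℝ) = 2 := by norm_num

lemma rat_null : volume {x : ℝ | ¬ Irrational x} = 0 := by
  have h : {x : ℝ | ¬ Irrational x} = Set.range ((↑) : ℚ → ℝ) := by
    ext x; simp [Irrational]
  rw [h]
  exact (Set.countable_range _).measure_zero _

lemma master (n : ℕ) (P : List ℕ → Prop) (G Bs : Set ℝ)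
    (hB : ∀ y : ℝ, good y → P (wd n y) → y ∈ Bs) :
    volume {x | good x ∧ P (wd n x) ∧ gaussMap^[n] x ∈ G} ≤
      2 * volume Bs * volume (G ∩ Set.Ioo 0 1) := by
  have hsub : {x | good x ∧ P (wd n x) ∧ gaussMap^[n] x ∈ G} ⊆
      ⋃ (w : {w : List ℕ // w.length = n ∧ Ent w ∧ P w}), hw w.1 '' (G ∩ Set.Ioo 0 1) := by
    rintro x ⟨hg, hP, hG⟩
    refine Set.mem_iUnion.2 ⟨⟨wd n x, wd_length n x, wd_pos hg n, hP⟩, ?_⟩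
    exact ⟨gaussMap^[n] x, ⟨hG, (good_iter hg n).1⟩, (x_eq_hw hg n).symm⟩
  have hIoo : G ∩ Set.Ioo 0 1 ⊆ Icc 0 1 := fun z hz => ⟨hz.2.1.le, hz.2.2.le⟩
  have hsum : (∑' (w : {w : List ℕ // w.length = n ∧ Ent w ∧ P w}),
      ENNReal.ofReal (1/((qA w.1:ℝ) * qA w.1))) ≤ 2 * volume Bs := by
    have step1 : ∀ (w : {w : List ℕ // w.length = n ∧ Ent w ∧ P w}),
        ENNReal.ofReal (1/((qA w.1:ℝ) * qA w.1)) ≤ 2 * volume (Iw w.1) := by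
      intro w
      rw [vol_Iw w.2.2.1]
      rw [← ofReal_two, ← ENNReal.ofReal_mul (by norm_num : (0:ℝ) ≤ 2)]
      apply ENNReal.ofReal_le_ofReal
      have hq := qA_pos w.2.2.1
      have hq2 : (qB w.1 : ℝ) ≤ qA w.1 := by exact_mod_cast (cnt_facts w.2.2.1).2.1
      have hq3 : (0:ℝ) < (qA w.1 : ℝ) + qB w.1 := by positivity
      rw [mul_one_div, div_le_div_iff₀ (by positivity) (by positivity)]
      nlinarith
    calc (∑' (w : {w : List ℕ // w.length = n ∧ Ent w ∧ P w}),
        ENNReal.ofReal (1/((qA w.1:ℝ) * qA w.1)))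
        ≤ ∑' (w : {w : List ℕ // w.length = n ∧ Ent w ∧ P w}), 2 * volume (Iw w.1) :=
          ENNReal.tsum_le_tsum step1
    _ = 2 * ∑' (w : {w : List ℕ // w.length = n ∧ Ent w ∧ P w}), volume (Iw w.1) :=
          ENNReal.tsum_mul_left
    _ = 2 * volume (⋃ (w : {w : List ℕ // w.length = n ∧ Ent w ∧ P w}), Iw w.1) := by
          congr 1
          refine (measure_iUnion ?_ ?_).symm
          · intro w w' hne
            have hval : w.1 ≠ w'.1 := fun h => hne (Subtype.ext h)
            exact Iw_disjoint w.2.2.1 w'.2.2.1 (by rw [w.2.1, w'.2.1]) hval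
          · intro w; exact measurableSet_Ioo
    _ ≤ 2 * volume Bs := by
          apply mul_le_mul_right
          have hcover : (⋃ (w : {w : List ℕ // w.length = n ∧ Ent w ∧ P w}), Iw w.1) ⊆
              Bs ∪ {x : ℝ | ¬ Irrational x} := by
            rintro y hy
            rcases Set.mem_iUnion.1 hy with ⟨w, hyw⟩
            by_cases hirr : Irrational y
            · left
              obtain ⟨hgood, hwd⟩ := irr_mem_Iw w.1 w.2.2.1 y hirr hyw
              rw [w.2.1] at hwd
              exact hB y hgood (by rw [hwd]; exact w.2.2.2)
            · right; exact hirr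
          calc volume (⋃ (w : {w : List ℕ // w.length = n ∧ Ent w ∧ P w}), Iw w.1)
              ≤ volume Bs + volume {x : ℝ | ¬ Irrational x} :=
                le_trans (measure_mono hcover) (measure_union_le _ _)
          _ = volume Bs := by rw [rat_null, add_zero]
  calc volume {x | good x ∧ P (wd n x) ∧ gaussMap^[n] x ∈ G}
      ≤ volume (⋃ (w : {w : List ℕ // w.length = n ∧ Ent w ∧ P w}),
          hw w.1 '' (G ∩ Set.Ioo 0 1)) := measure_mono hsub
  _ ≤ ∑' (w : {w : List ℕ // w.length = n ∧ Ent w ∧ P w}),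
        volume (hw w.1 '' (G ∩ Set.Ioo 0 1)) := measure_iUnion_le _
  _ ≤ ∑' (w : {w : List ℕ // w.length = n ∧ Ent w ∧ P w}),
        ENNReal.ofReal (1/((qA w.1:ℝ) * qA w.1)) * volume (G ∩ Set.Ioo 0 1) :=
      ENNReal.tsum_le_tsum (fun w => image_meas w.2.2.1 hIoo)
  _ = (∑' (w : {w : List ℕ // w.length = n ∧ Ent w ∧ P w}),
        ENNReal.ofReal (1/((qA w.1:ℝ) * qA w.1))) * volume (G ∩ Set.Ioo 0 1) :=
      ENNReal.tsum_mul_right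
  _ ≤ (2 * volume Bs) * volume (G ∩ Set.Ioo 0 1) := mul_le_mul_left hsum _
  _ = 2 * volume Bs * volume (G ∩ Set.Ioo 0 1) := by ring

/-! ### Part E : series estimates -/

lemma tsum_ofReal_le {h : ℕ → ℝ} {c : ℝ} (h0 : ∀ n, 0 ≤ h n)
    (hb : ∀ N, ∑ n ∈ Finset.range N, h n ≤ c) :
    ∑' n, ENNReal.ofReal (h n) ≤ ENNReal.ofReal c := by
  rw [ENNReal.tsum_eq_iSup_sum]
  apply iSup_le
  intro s
  obtain ⟨N, hN⟩ := Finset.exists_nat_subset_range s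
  calc ∑ n ∈ s, ENNReal.ofReal (h n) ≤ ∑ n ∈ Finset.range N, ENNReal.ofReal (h n) :=
        Finset.sum_le_sum_of_subset hN
  _ = ENNReal.ofReal (∑ n ∈ Finset.range N, h n) :=
        (ENNReal.ofReal_sum_of_nonneg (fun i _ => h0 i)).symm
  _ ≤ ENNReal.ofReal c := ENNReal.ofReal_le_ofReal (hb N)

lemma sum_sq_inv_le (t : ℝ) (ht : 1 ≤ t) (N : ℕ) :
    ∑ d ∈ Finset.range N, (if t ≤ (d:ℝ) then (((d:ℝ))^2)⁻¹ else 0) ≤ 2/t := by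
  have ht0 : 0 < t := lt_of_lt_of_le one_pos ht
  have hm1 : 1 ≤ ⌈t⌉₊ := Nat.one_le_ceil_iff.2 ht0
  have hmt : t ≤ (⌈t⌉₊ : ℝ) := Nat.le_ceil t
  have hc0 : (0:ℝ) < (⌈t⌉₊ : ℝ) := by exact_mod_cast Nat.lt_of_lt_of_le Nat.zero_lt_one hm1
  have key : ∀ N : ℕ, ∑ d ∈ Finset.range N, (if t ≤ (d:ℝ) then (((d:ℝ))^2)⁻¹ else 0)
      ≤ 2/t - 2/((max N ⌈t⌉₊ : ℕ) : ℝ) := by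
    intro N
    induction N with
    | zero =>
      rw [Finset.range_zero, Finset.sum_empty, max_eq_right (Nat.zero_le _)]
      have h2 : 2/((⌈t⌉₊:ℕ):ℝ) ≤ 2/t := by
        rw [div_le_div_iff₀ hc0 ht0]
        nlinarith
      linarith
    | succ N ihN =>
      rw [Finset.sum_range_succ]
      rcases le_or_gt (N+1) ⌈t⌉₊ with hc | hc
      · have hmax1 : max (N+1) ⌈t⌉₊ = ⌈t⌉₊ := max_eq_right hc
        have hmax0 : max N ⌈t⌉₊ = ⌈t⌉₊ := max_eq_right (by omega)
        have hltN : ((N:ℕ):ℝ) < t := Nat.lt_ceil.1 (by omega)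
        rw [if_neg (not_le.2 hltN), hmax1, add_zero]
        rw [hmax0] at ihN
        exact ihN
      · have hNm : ⌈t⌉₊ ≤ N := by omega
        have hmax1 : max (N+1) ⌈t⌉₊ = N+1 := max_eq_left (by omega)
        have hmax0 : max N ⌈t⌉₊ = N := max_eq_left hNm
        rw [hmax0] at ihN
        rw [hmax1]
        have hN1 : (1:ℝ) ≤ (N:ℝ) := by exact_mod_cast le_trans hm1 hNm
        have hN0 : (0:ℝ) < (N:ℝ) := by linarith
        have he : 2/(N:ℝ) - 2/((N:ℝ)+1) = 2/((N:ℝ)*((N:ℝ)+1)) := by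
          field_simp
          ring
        have hstep : (if t ≤ ((N:ℕ):ℝ) then (((N:ℕ):ℝ)^2)⁻¹ else 0)
            ≤ 2/(N:ℝ) - 2/((N:ℝ)+1) := by
          have hineq : (((N:ℝ))^2)⁻¹ ≤ 2/(N:ℝ) - 2/((N:ℝ)+1) := by
            rw [he, inv_eq_one_div, div_le_div_iff₀ (by positivity) (by positivity)]
            nlinarith
          split_ifs
          · exact hineq
          · rw [he]; positivity
        push_cast
        push_cast at ihN hstep
        linarith
  refine le_trans (key N) ?_
  have h1 : (0:ℝ) < ((max N ⌈t⌉₊ : ℕ) : ℝ) := by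
    have : 0 < max N ⌈t⌉₊ := by omega
    exact_mod_cast this
  have : (0:ℝ) ≤ 2/((max N ⌈t⌉₊ : ℕ) : ℝ) := by positivity
  linarith

lemma sum_Icc_harmonic (M : ℕ) :
    ∑ d ∈ Finset.Icc 1 M, 1/(d:ℝ) ≤ 1 + Real.log M := by
  induction M with
  | zero => simp
  | succ M ihM =>
    rcases Nat.eq_zero_or_pos M with rfl | hM'
    · norm_num
    · have hMpos : (0:ℝ) < (M:ℝ) := by exact_mod_cast hM'
      rw [Finset.sum_Icc_succ_top (by omega)]
      have hlog : 1/((M:ℝ)+1) ≤ Real.log ((M:ℝ)+1) - Real.log (M:ℝ) := by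
        rw [← Real.log_div (by positivity) (by positivity),
            Real.le_log_iff_exp_le (by positivity)]
        have hz : (0:ℝ) < (M:ℝ)/((M:ℝ)+1) := by positivity
        have hrep : (M:ℝ)/((M:ℝ)+1) = 1 - 1/((M:ℝ)+1) := by field_simp; ring
        have h2 : (M:ℝ)/((M:ℝ)+1) ≤ Real.exp (-(1/((M:ℝ)+1))) := by
          rw [hrep]
          linarith [Real.add_one_le_exp (-(1/((M:ℝ)+1)))]
        have h4 := one_div_le_one_div_of_le hz h2
        rwa [Real.exp_neg, one_div, inv_inv, one_div_div] at h4
      have hcast : Real.log ((M:ℕ)+1:ℝ) = Real.log ((M:ℝ)+1) := by norm_num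
      push_cast
      push_cast at ihM
      linarith
  
lemma sum_harmonic_le (u : ℝ) (hu : 1 ≤ u) (N : ℕ) :
    ∑ d ∈ Finset.range N, (if 1 ≤ d ∧ (d:ℝ) ≤ u then 1/(d:ℝ) else 0) ≤ 1 + Real.log u := by
  classical
  have hu0 : (0:ℝ) < u := lt_of_lt_of_le one_pos hu
  rw [← Finset.sum_filter (fun d : ℕ => 1 ≤ d ∧ (d:ℝ) ≤ u) (fun d : ℕ => 1/(d:ℝ))]
  have hsub : (Finset.range N).filter (fun d : ℕ => 1 ≤ d ∧ (d:ℝ) ≤ u) ⊆ Finset.Icc 1 ⌊u⌋₊ := by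
    intro d hd
    rw [Finset.mem_filter] at hd
    rw [Finset.mem_Icc]
    exact ⟨hd.2.1, Nat.le_floor hd.2.2⟩
  calc ∑ d ∈ (Finset.range N).filter (fun d : ℕ => 1 ≤ d ∧ (d:ℝ) ≤ u), 1/(d:ℝ)
      ≤ ∑ d ∈ Finset.Icc 1 ⌊u⌋₊, 1/(d:ℝ) :=
        Finset.sum_le_sum_of_subset_of_nonneg hsub (fun i _ _ => by positivity)
  _ ≤ 1 + Real.log ⌊u⌋₊ := sum_Icc_harmonic ⌊u⌋₊
  _ ≤ 1 + Real.log u := by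
      have h1 : (0:ℝ) < (⌊u⌋₊ : ℝ) := by
        have : 1 ≤ ⌊u⌋₊ := Nat.le_floor (by exact_mod_cast hu)
        exact_mod_cast Nat.lt_of_lt_of_le Nat.zero_lt_one this
      have := Real.log_le_log h1 (Nat.floor_le hu0.le)
      linarith

lemma sum_count_le (u c : ℝ) (hc : 0 ≤ c) (hu : 0 ≤ u) (N : ℕ) :
    ∑ d ∈ Finset.range N, (if 1 ≤ d ∧ (d:ℝ) < u then c else 0) ≤ (u+1)*c := by
  classical
  rw [← Finset.sum_filter (fun d : ℕ => 1 ≤ d ∧ (d:ℝ) < u) (fun _ : ℕ => c),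
    Finset.sum_const, nsmul_eq_mul]
  apply mul_le_mul_of_nonneg_right ?_ hc
  have hsub : (Finset.range N).filter (fun d : ℕ => 1 ≤ d ∧ (d:ℝ) < u) ⊆ Finset.range ⌈u⌉₊ := by
    intro d hd
    rw [Finset.mem_filter] at hd
    rw [Finset.mem_range]
    exact Nat.lt_ceil.2 hd.2.2
  calc (((Finset.range N).filter (fun d : ℕ => 1 ≤ d ∧ (d:ℝ) < u)).card : ℝ)
      ≤ ((Finset.range ⌈u⌉₊).card : ℝ) := by exact_mod_cast Finset.card_le_card hsub
  _ = (⌈u⌉₊ : ℝ) := by rw [Finset.card_range]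
  _ ≤ u + 1 := (Nat.ceil_lt_add_one hu).le

/-! Bound functions -/

noncomputable def mn (s : ℝ) : ℝ := if s ≤ 1 then 1 else 1/s
noncomputable def Wb (u : ℝ) : ℝ := if u ≤ 1 then 2 else (3 + Real.log u)/u
noncomputable def W2b (u : ℝ) : ℝ := if u ≤ 1 then 2 else 4/u
noncomputable def Vb (t : ℝ) : ℝ := if t ≤ 1 then 1 else 6/Real.sqrt t
noncomputable def V2b (s : ℝ) : ℝ := if s ≤ 1 then 4 else 6/Real.sqrt s

lemma mn_nonneg (s : ℝ) : 0 ≤ mn s := by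
  unfold mn; split_ifs with h
  · norm_num
  · push_neg at h; positivity

lemma mn_le_one (s : ℝ) : mn s ≤ 1 := by
  unfold mn; split_ifs with h
  · exact le_rfl
  · push_neg at h
    rw [div_le_one (by linarith)]
    linarith

lemma mn_pos (s : ℝ) : 0 < mn s := by
  unfold mn; split_ifs with h
  · norm_num
  · push_neg at h; positivity

lemma Wb_nonneg (u : ℝ) (hu : 0 < u) : 0 ≤ Wb u := by
  unfold Wb; split_ifs with h
  · norm_num
  · push_neg at h
    have : 0 ≤ Real.log u := Real.log_nonneg (by linarith)
    positivity

lemma W2b_nonneg (u : ℝ) (hu : 0 < u) : 0 ≤ W2b u := by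
  unfold W2b; split_ifs with h
  · norm_num
  · positivity

lemma Vb_nonneg (t : ℝ) : 0 ≤ Vb t := by
  unfold Vb; split_ifs with h
  · norm_num
  · positivity

lemma V2b_nonneg (s : ℝ) : 0 ≤ V2b s := by
  unfold V2b; split_ifs with h
  · norm_num
  · positivity

lemma three_add_log_le {t : ℝ} (ht : 1 ≤ t) : 3 + Real.log t ≤ 3 * Real.sqrt t := by
  have ht0 : (0:ℝ) < t := lt_of_lt_of_le one_pos ht
  have hs1 : 1 ≤ Real.sqrt t := by
    rw [show (1:ℝ) = Real.sqrt 1 by rw [Real.sqrt_one]]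
    exact Real.sqrt_le_sqrt ht
  have hlog : Real.log t = 2 * Real.log (Real.sqrt t) := by
    rw [Real.log_sqrt ht0.le]; ring
  have h2 : Real.log (Real.sqrt t) ≤ Real.sqrt t - 1 :=
    Real.log_le_sub_one_of_pos (by positivity)
  rw [hlog]
  linarith

lemma two_Wb_le {s : ℝ} (hs : 1 < s) : 2 * Wb s ≤ 6/Real.sqrt s := by
  have hs0 : (0:ℝ) < s := by linarith
  have hsq : (0:ℝ) < Real.sqrt s := Real.sqrt_pos.2 hs0
  rw [Wb, if_neg (not_le.2 hs)]
  have hlog := three_add_log_le hs.le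
  have hss : Real.sqrt s * Real.sqrt s = s := Real.mul_self_sqrt hs0.le
  have hrw : 2 * ((3 + Real.log s)/s) = (2*(3 + Real.log s))/s := by ring
  rw [hrw, div_le_div_iff₀ hs0 hsq]
  nlinarith [Real.log_nonneg hs.le]

/-! Composite sums -/

lemma R1 (u : ℝ) (hu : 0 < u) (N : ℕ) :
    ∑ e ∈ Finset.range N, (if 1 ≤ e then (((e:ℝ))^2)⁻¹ * mn (u/e) else 0) ≤ Wb u := by
  by_cases hu1 : u ≤ 1
  · rw [Wb, if_pos hu1]
    have hb : ∀ e ∈ Finset.range N, (if 1 ≤ e then (((e:ℝ))^2)⁻¹ * mn (u/e) else 0)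
        ≤ (if (1:ℝ) ≤ (e:ℝ) then (((e:ℝ))^2)⁻¹ else 0) := by
      intro e _
      split_ifs with h1 h2
      · exact mul_le_of_le_one_right (by positivity) (mn_le_one _)
      · exact absurd (by exact_mod_cast h1) h2
      · positivity
      · exact le_rfl
    calc _ ≤ ∑ e ∈ Finset.range N, (if (1:ℝ) ≤ (e:ℝ) then (((e:ℝ))^2)⁻¹ else 0) :=
          Finset.sum_le_sum hb
    _ ≤ 2/1 := sum_sq_inv_le 1 le_rfl N
    _ = 2 := by norm_num
  · push_neg at hu1
    rw [Wb, if_neg (not_le.2 hu1)]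
    have hb : ∀ e ∈ Finset.range N, (if 1 ≤ e then (((e:ℝ))^2)⁻¹ * mn (u/e) else 0)
        ≤ (1/u) * (if 1 ≤ e ∧ (e:ℝ) ≤ u then 1/(e:ℝ) else 0)
          + (if u ≤ (e:ℝ) then (((e:ℝ))^2)⁻¹ else 0) := by
      intro e _
      by_cases h1 : 1 ≤ e
      · have h1r : (1:ℝ) ≤ (e:ℝ) := by exact_mod_cast h1
        have he0 : (0:ℝ) < (e:ℝ) := by linarith
        rw [if_pos h1]
        rcases le_or_gt (e:ℝ) u with he | he
        · have hmn : mn (u/e) ≤ (e:ℝ)/u := by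
            unfold mn; split_ifs with h
            · rw [le_div_iff₀ hu]
              rw [div_le_one he0] at h
              linarith
            · rw [one_div_div]
          have hterm : (((e:ℝ))^2)⁻¹ * mn (u/e) ≤ (1/u) * (1/(e:ℝ)) := by
            calc (((e:ℝ))^2)⁻¹ * mn (u/e) ≤ (((e:ℝ))^2)⁻¹ * ((e:ℝ)/u) :=
                  mul_le_mul_of_nonneg_left hmn (by positivity)
            _ = (1/u) * (1/(e:ℝ)) := by field_simp
          rw [if_pos ⟨h1, he⟩]
          have hg2 : (0:ℝ) ≤ (if u ≤ (e:ℝ) then (((e:ℝ))^2)⁻¹ else 0) := by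
            split_ifs <;> positivity
          linarith
        · rw [if_neg (by push_neg; intro _; linarith), if_pos he.le, mul_zero, zero_add]
          exact mul_le_of_le_one_right (by positivity) (mn_le_one _)
      · rw [if_neg h1]
        have hg1 : (0:ℝ) ≤ (1/u) * (if 1 ≤ e ∧ (e:ℝ) ≤ u then 1/(e:ℝ) else 0) := by
          split_ifs <;> positivity
        have hg2 : (0:ℝ) ≤ (if u ≤ (e:ℝ) then (((e:ℝ))^2)⁻¹ else 0) := by
          split_ifs <;> positivity
        linarith
    calc _ ≤ ∑ e ∈ Finset.range N, ((1/u) * (if 1 ≤ e ∧ (e:ℝ) ≤ u then 1/(e:ℝ) else 0)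
          + (if u ≤ (e:ℝ) then (((e:ℝ))^2)⁻¹ else 0)) := Finset.sum_le_sum hb
    _ = (1/u) * (∑ e ∈ Finset.range N, (if 1 ≤ e ∧ (e:ℝ) ≤ u then 1/(e:ℝ) else 0))
          + ∑ e ∈ Finset.range N, (if u ≤ (e:ℝ) then (((e:ℝ))^2)⁻¹ else 0) := by
        rw [Finset.sum_add_distrib, Finset.mul_sum]
    _ ≤ (1/u) * (1 + Real.log u) + 2/u := by
        apply add_le_add
        · exact mul_le_mul_of_nonneg_left (sum_harmonic_le u hu1.le N) (by positivity)
        · exact sum_sq_inv_le u hu1.le N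
    _ = (3 + Real.log u)/u := by field_simp; ring

lemma R2 (u : ℝ) (hu : 0 < u) (N : ℕ) :
    ∑ f ∈ Finset.range N, (if 1 ≤ f then (((f:ℝ))^2)⁻¹ * (mn (u/f))^2 else 0) ≤ W2b u := by
  by_cases hu1 : u ≤ 1
  · rw [W2b, if_pos hu1]
    have hb : ∀ f ∈ Finset.range N, (if 1 ≤ f then (((f:ℝ))^2)⁻¹ * (mn (u/f))^2 else 0)
        ≤ (if (1:ℝ) ≤ (f:ℝ) then (((f:ℝ))^2)⁻¹ else 0) := by
      intro f _
      split_ifs with h1 h2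
      · apply mul_le_of_le_one_right (by positivity)
        calc (mn (u/f))^2 ≤ 1^2 := by
              apply pow_le_pow_left₀ (mn_nonneg _) (mn_le_one _)
        _ = 1 := one_pow 2
      · exact absurd (by exact_mod_cast h1) h2
      · positivity
      · exact le_rfl
    calc _ ≤ ∑ f ∈ Finset.range N, (if (1:ℝ) ≤ (f:ℝ) then (((f:ℝ))^2)⁻¹ else 0) :=
          Finset.sum_le_sum hb
    _ ≤ 2/1 := sum_sq_inv_le 1 le_rfl N
    _ = 2 := by norm_num
  · push_neg at hu1
    rw [W2b, if_neg (not_le.2 hu1)]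
    have hu0 : (0:ℝ) < u := by linarith
    have hb : ∀ f ∈ Finset.range N, (if 1 ≤ f then (((f:ℝ))^2)⁻¹ * (mn (u/f))^2 else 0)
        ≤ (if 1 ≤ f ∧ (f:ℝ) < u then ((u:ℝ)^2)⁻¹ else 0)
          + (if u ≤ (f:ℝ) then (((f:ℝ))^2)⁻¹ else 0) := by
      intro f _
      by_cases h1 : 1 ≤ f
      · have h1r : (1:ℝ) ≤ (f:ℝ) := by exact_mod_cast h1
        have hf0 : (0:ℝ) < (f:ℝ) := by linarith
        rw [if_pos h1]
        rcases lt_or_ge (f:ℝ) u with he | he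
        · have huf : 1 < u/(f:ℝ) := by rw [lt_div_iff₀ hf0]; linarith
          have hmn : mn (u/f) = (f:ℝ)/u := by
            rw [mn, if_neg (not_le.2 huf), one_div_div]
          have hterm : (((f:ℝ))^2)⁻¹ * (mn (u/f))^2 = ((u:ℝ)^2)⁻¹ := by
            rw [hmn, div_pow]
            field_simp
          rw [if_pos ⟨h1, he⟩, hterm]
          have hg2 : (0:ℝ) ≤ (if u ≤ (f:ℝ) then (((f:ℝ))^2)⁻¹ else 0) := by
            split_ifs <;> positivity
          linarith
        · rw [if_neg (by push_neg; intro _; linarith), if_pos he, zero_add]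
          apply mul_le_of_le_one_right (by positivity)
          calc (mn (u/f))^2 ≤ 1^2 := by
                apply pow_le_pow_left₀ (mn_nonneg _) (mn_le_one _)
          _ = 1 := one_pow 2
      · rw [if_neg h1]
        have hg1 : (0:ℝ) ≤ (if 1 ≤ f ∧ (f:ℝ) < u then ((u:ℝ)^2)⁻¹ else 0) := by
          split_ifs <;> positivity
        have hg2 : (0:ℝ) ≤ (if u ≤ (f:ℝ) then (((f:ℝ))^2)⁻¹ else 0) := by
          split_ifs <;> positivity
        linarith
    calc _ ≤ ∑ f ∈ Finset.range N, ((if 1 ≤ f ∧ (f:ℝ) < u then ((u:ℝ)^2)⁻¹ else 0)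
          + (if u ≤ (f:ℝ) then (((f:ℝ))^2)⁻¹ else 0)) := Finset.sum_le_sum hb
    _ = ∑ f ∈ Finset.range N, (if 1 ≤ f ∧ (f:ℝ) < u then ((u:ℝ)^2)⁻¹ else 0)
          + ∑ f ∈ Finset.range N, (if u ≤ (f:ℝ) then (((f:ℝ))^2)⁻¹ else 0) :=
        Finset.sum_add_distrib
    _ ≤ (u+1) * ((u:ℝ)^2)⁻¹ + 2/u := by
        apply add_le_add
        · exact sum_count_le u (((u:ℝ)^2)⁻¹) (by positivity) hu0.le N
        · exact sum_sq_inv_le u hu1.le N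
    _ ≤ 4/u := by
        have h1 : (u+1) * ((u:ℝ)^2)⁻¹ ≤ 2/u := by
          rw [inv_eq_one_div, ← mul_div_assoc, mul_one, div_le_div_iff₀ (by positivity) hu0]
          nlinarith
        have h2 : 2/u + 2/u = 4/u := by ring
        linarith

/-- Generic one-variable composite sum with piecewise bound function. -/
lemma R_gen (B : ℝ) (hB : 2 ≤ B) (C1 C2 : ℝ) (hC1 : 0 ≤ C1) (hC2 : 0 ≤ C2)
    (F : ℝ → ℝ) (hFlow : ∀ e : ℕ, 1 ≤ e → (e:ℝ) < B → (((e:ℝ))^2)⁻¹ * F (B/e) ≤ C1 * (1/(e:ℝ)) * (1/B))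
    (hFhigh : ∀ e : ℕ, 1 ≤ e → B ≤ (e:ℝ) → (((e:ℝ))^2)⁻¹ * F (B/e) ≤ C2 * (((e:ℝ))^2)⁻¹)
    (hF0 : ∀ e : ℕ, 1 ≤ e → 0 ≤ (((e:ℝ))^2)⁻¹ * F (B/e)) (N : ℕ) :
    ∑ e ∈ Finset.range N, (if 1 ≤ e then (((e:ℝ))^2)⁻¹ * F (B/e) else 0)
      ≤ C1 * (1 + Real.log B)/B + C2 * (2/B) := by
  have hB0 : (0:ℝ) < B := by linarith
  have hb : ∀ e ∈ Finset.range N, (if 1 ≤ e then (((e:ℝ))^2)⁻¹ * F (B/e) else 0)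
      ≤ (C1/B) * (if 1 ≤ e ∧ (e:ℝ) ≤ B then 1/(e:ℝ) else 0)
        + C2 * (if B ≤ (e:ℝ) then (((e:ℝ))^2)⁻¹ else 0) := by
    intro e _
    by_cases h1 : 1 ≤ e
    · rw [if_pos h1]
      have h1r : (1:ℝ) ≤ (e:ℝ) := by exact_mod_cast h1
      rcases lt_or_ge (e:ℝ) B with he | he
      · rw [if_pos ⟨h1, he.le⟩]
        have hg2 : (0:ℝ) ≤ C2 * (if B ≤ (e:ℝ) then (((e:ℝ))^2)⁻¹ else 0) := by
          split_ifs <;> positivity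
        have := hFlow e h1 he
        have heq : (C1/B) * (1/(e:ℝ)) = C1 * (1/(e:ℝ)) * (1/B) := by ring
        linarith [heq ▸ this]
      · rw [if_pos he]
        have hg1 : (0:ℝ) ≤ (C1/B) * (if 1 ≤ e ∧ (e:ℝ) ≤ B then 1/(e:ℝ) else 0) := by
          split_ifs <;> positivity
        linarith [hFhigh e h1 he]
    · rw [if_neg h1]
      have hg1 : (0:ℝ) ≤ (C1/B) * (if 1 ≤ e ∧ (e:ℝ) ≤ B then 1/(e:ℝ) else 0) := by
        split_ifs <;> positivity
      have hg2 : (0:ℝ) ≤ C2 * (if B ≤ (e:ℝ) then (((e:ℝ))^2)⁻¹ else 0) := by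
        split_ifs <;> positivity
      linarith
  calc ∑ e ∈ Finset.range N, (if 1 ≤ e then (((e:ℝ))^2)⁻¹ * F (B/e) else 0)
      ≤ ∑ e ∈ Finset.range N, ((C1/B) * (if 1 ≤ e ∧ (e:ℝ) ≤ B then 1/(e:ℝ) else 0)
        + C2 * (if B ≤ (e:ℝ) then (((e:ℝ))^2)⁻¹ else 0)) := Finset.sum_le_sum hb
  _ = (C1/B) * (∑ e ∈ Finset.range N, (if 1 ≤ e ∧ (e:ℝ) ≤ B then 1/(e:ℝ) else 0))
        + C2 * (∑ e ∈ Finset.range N, (if B ≤ (e:ℝ) then (((e:ℝ))^2)⁻¹ else 0)) := by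
      rw [Finset.sum_add_distrib, Finset.mul_sum, Finset.mul_sum]
  _ ≤ (C1/B) * (1 + Real.log B) + C2 * (2/B) := by
      apply add_le_add
      · exact mul_le_mul_of_nonneg_left (sum_harmonic_le B (by linarith) N) (by positivity)
      · exact mul_le_mul_of_nonneg_left (sum_sq_inv_le B (by linarith) N) hC2
  _ = C1 * (1 + Real.log B)/B + C2 * (2/B) := by ring

lemma R4 (B : ℝ) (hB : 2 ≤ B) (N : ℕ) :
    ∑ e ∈ Finset.range N, (if 1 ≤ e then (((e:ℝ))^2)⁻¹ * Wb (B/e) else 0)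
      ≤ 7*(1 + Real.log B)^2/B := by
  have hB0 : (0:ℝ) < B := by linarith
  have hlogB : 0 ≤ Real.log B := Real.log_nonneg (by linarith)
  have key := R_gen B hB (3 + Real.log B) 2 (by linarith) (by norm_num) Wb
    (fun e h1 he => by
      have h1r : (1:ℝ) ≤ (e:ℝ) := by exact_mod_cast h1
      have he0 : (0:ℝ) < (e:ℝ) := by linarith
      have hBe : 1 < B/e := by rw [lt_div_iff₀ he0]; nlinarith
      rw [Wb, if_neg (not_le.2 hBe)]
      have hlog2 : Real.log (B/(e:ℝ)) ≤ Real.log B := by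
        apply Real.log_le_log (by positivity)
        rw [div_le_iff₀ he0]; nlinarith
      have hlog3 : 0 ≤ Real.log (B/(e:ℝ)) := Real.log_nonneg hBe.le
      have heq : (((e:ℝ))^2)⁻¹ * ((3 + Real.log (B/(e:ℝ)))/(B/(e:ℝ)))
          = (3 + Real.log (B/(e:ℝ))) / ((e:ℝ)*B) := by
        field_simp
      have heq2 : (3 + Real.log B) * (1/(e:ℝ)) * (1/B) = (3 + Real.log B) / ((e:ℝ)*B) := by
        field_simp
      rw [heq, heq2]
      exact (div_le_div_iff_of_pos_right (by positivity)).mpr (by linarith))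
    (fun e h1 he => by
      have h1r : (1:ℝ) ≤ (e:ℝ) := by exact_mod_cast h1
      have he0 : (0:ℝ) < (e:ℝ) := by linarith
      have hBe : B/(e:ℝ) ≤ 1 := by rw [div_le_one he0]; linarith
      rw [Wb, if_pos hBe]
      exact le_of_eq (mul_comm _ _))
    (fun e h1 => by
      have h1r : (1:ℝ) ≤ (e:ℝ) := by exact_mod_cast h1
      have he0 : (0:ℝ) < (e:ℝ) := by linarith
      exact mul_nonneg (by positivity) (Wb_nonneg _ (by positivity))) N
  refine le_trans key ?_
  have hrw : (3 + Real.log B)*(1 + Real.log B)/B + 2*(2/B)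
      = ((3 + Real.log B)*(1 + Real.log B) + 4)/B := by ring
  rw [hrw]
  exact (div_le_div_iff_of_pos_right hB0).mpr (by nlinarith [sq_nonneg (Real.log B)])

lemma R3 (B : ℝ) (hB : 2 ≤ B) (N : ℕ) :
    ∑ e ∈ Finset.range N, (if 1 ≤ e then (((e:ℝ))^2)⁻¹ * W2b (B/e) else 0)
      ≤ 8*(1 + Real.log B)/B := by
  have hB0 : (0:ℝ) < B := by linarith
  have hlogB : 0 ≤ Real.log B := Real.log_nonneg (by linarith)
  have key := R_gen B hB 4 2 (by norm_num) (by norm_num) W2b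
    (fun e h1 he => by
      have h1r : (1:ℝ) ≤ (e:ℝ) := by exact_mod_cast h1
      have he0 : (0:ℝ) < (e:ℝ) := by linarith
      have hBe : 1 < B/e := by rw [lt_div_iff₀ he0]; nlinarith
      rw [W2b, if_neg (not_le.2 hBe)]
      apply le_of_eq
      field_simp)
    (fun e h1 he => by
      have h1r : (1:ℝ) ≤ (e:ℝ) := by exact_mod_cast h1
      have he0 : (0:ℝ) < (e:ℝ) := by linarith
      have hBe : B/(e:ℝ) ≤ 1 := by rw [div_le_one he0]; linarith
      rw [W2b, if_pos hBe]
      exact le_of_eq (mul_comm _ _))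
    (fun e h1 => by
      have h1r : (1:ℝ) ≤ (e:ℝ) := by exact_mod_cast h1
      have he0 : (0:ℝ) < (e:ℝ) := by linarith
      exact mul_nonneg (by positivity) (W2b_nonneg _ (by positivity))) N
  refine le_trans key ?_
  have hrw : 4*(1 + Real.log B)/B + 2*(2/B) = (4*(1 + Real.log B) + 4)/B := by ring
  rw [hrw]
  exact (div_le_div_iff_of_pos_right hB0).mpr (by nlinarith)

lemma RWV (B : ℝ) (hB : 2 ≤ B) (N : ℕ) :
    ∑ e ∈ Finset.range N, (if 1 ≤ e then (((e:ℝ))^2)⁻¹ * (Wb (B/e) * Vb (B/e)) else 0)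
      ≤ 22*(1 + Real.log B)/B := by
  have hB0 : (0:ℝ) < B := by linarith
  have hlogB : 0 ≤ Real.log B := Real.log_nonneg (by linarith)
  have key := R_gen B hB 18 2 (by norm_num) (by norm_num) (fun s => Wb s * Vb s)
    (fun e h1 he => by
      have h1r : (1:ℝ) ≤ (e:ℝ) := by exact_mod_cast h1
      have he0 : (0:ℝ) < (e:ℝ) := by linarith
      have hBe : 1 < B/e := by rw [lt_div_iff₀ he0]; nlinarith
      have hs0 : (0:ℝ) < B/e := by linarith
      have hsq : (0:ℝ) < Real.sqrt (B/e) := Real.sqrt_pos.2 hs0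
      have hss : Real.sqrt (B/e) * Real.sqrt (B/e) = B/e := Real.mul_self_sqrt hs0.le
      rw [Wb, Vb, if_neg (not_le.2 hBe), if_neg (not_le.2 hBe)]
      have hWV : (3 + Real.log (B/(e:ℝ)))/(B/(e:ℝ)) * (6/Real.sqrt (B/(e:ℝ)))
          ≤ 18/(B/(e:ℝ)) := by
        have h3 := three_add_log_le hBe.le
        rw [div_mul_div_comm, div_le_div_iff₀ (by positivity) hs0]
        calc (3 + Real.log (B/(e:ℝ))) * 6 * (B/(e:ℝ))
            ≤ 3 * Real.sqrt (B/(e:ℝ)) * 6 * (B/(e:ℝ)) := by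
              have hle : (0:ℝ) ≤ B/(e:ℝ) := hs0.le
              nlinarith
        _ = 18 * (B/(e:ℝ) * Real.sqrt (B/(e:ℝ))) := by ring
        _ = 18 * (B/(e:ℝ) * Real.sqrt (B/(e:ℝ))) := rfl
      calc (((e:ℝ))^2)⁻¹ * ((3 + Real.log (B/(e:ℝ)))/(B/(e:ℝ)) * (6/Real.sqrt (B/(e:ℝ))))
          ≤ (((e:ℝ))^2)⁻¹ * (18/(B/(e:ℝ))) := by
            apply mul_le_mul_of_nonneg_left hWV (by positivity)
      _ = 18 * (1/(e:ℝ)) * (1/B) := by field_simp)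
    (fun e h1 he => by
      have h1r : (1:ℝ) ≤ (e:ℝ) := by exact_mod_cast h1
      have he0 : (0:ℝ) < (e:ℝ) := by linarith
      have hBe : B/(e:ℝ) ≤ 1 := by rw [div_le_one he0]; linarith
      rw [Wb, Vb, if_pos hBe, if_pos hBe, mul_one]
      exact le_of_eq (mul_comm _ _))
    (fun e h1 => by
      have h1r : (1:ℝ) ≤ (e:ℝ) := by exact_mod_cast h1
      have he0 : (0:ℝ) < (e:ℝ) := by linarith
      have := Wb_nonneg (B/e) (by positivity)
      have := Vb_nonneg (B/e)
      positivity) N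
  refine le_trans key ?_
  have hrw : 18*(1 + Real.log B)/B + 2*(2/B) = (18*(1 + Real.log B) + 4)/B := by ring
  rw [hrw]
  exact (div_le_div_iff_of_pos_right hB0).mpr (by nlinarith)

lemma sum_thresh (s : ℝ) (hs : 0 < s) (N : ℕ) :
    ∑ d ∈ Finset.range N, (if 1 ≤ d ∧ s ≤ (d:ℝ) then (((d:ℝ))^2)⁻¹ else 0) ≤ 2 * mn s := by
  by_cases hs1 : s ≤ 1
  · rw [mn, if_pos hs1, mul_one]
    have hb : ∀ d ∈ Finset.range N, (if 1 ≤ d ∧ s ≤ (d:ℝ) then (((d:ℝ))^2)⁻¹ else 0)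
        ≤ (if (1:ℝ) ≤ (d:ℝ) then (((d:ℝ))^2)⁻¹ else 0) := by
      intro d _
      split_ifs with h1 h2
      · exact le_rfl
      · exact absurd (by exact_mod_cast h1.1) h2
      · positivity
      · exact le_rfl
    calc _ ≤ ∑ d ∈ Finset.range N, (if (1:ℝ) ≤ (d:ℝ) then (((d:ℝ))^2)⁻¹ else 0) :=
          Finset.sum_le_sum hb
    _ ≤ 2/1 := sum_sq_inv_le 1 le_rfl N
    _ = 2 := by norm_num
  · push_neg at hs1
    rw [mn, if_neg (not_le.2 hs1), mul_one_div]
    have hb : ∀ d ∈ Finset.range N, (if 1 ≤ d ∧ s ≤ (d:ℝ) then (((d:ℝ))^2)⁻¹ else 0)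
        ≤ (if s ≤ (d:ℝ) then (((d:ℝ))^2)⁻¹ else 0) := by
      intro d _
      split_ifs with h1 h2
      · exact le_rfl
      · exact absurd h1.2 h2
      · positivity
      · exact le_rfl
    calc _ ≤ ∑ d ∈ Finset.range N, (if s ≤ (d:ℝ) then (((d:ℝ))^2)⁻¹ else 0) :=
          Finset.sum_le_sum hb
    _ ≤ 2/s := sum_sq_inv_le s hs1.le N

/-! ### Part D : event estimates -/

noncomputable def Ev (B : ℝ) (j : ℕ) : Set ℝ :=
  {x | good x ∧ B ≤ (cfA j x : ℝ) * (cfA (j+1) x : ℝ) * (cfA (j+2) x : ℝ)}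

lemma two_mul_ofReal_le {a b c : ℝ} (ha : 0 ≤ a) (hb : 0 ≤ b) (h : 2*a*b ≤ c) :
    2 * ENNReal.ofReal a * ENNReal.ofReal b ≤ ENNReal.ofReal c := by
  rw [← ofReal_two, ← ENNReal.ofReal_mul (by norm_num : (0:ℝ) ≤ 2),
    ← ENNReal.ofReal_mul (by positivity)]
  exact ENNReal.ofReal_le_ofReal h

lemma vol_Iw_le_prod {w : List ℕ} (h : Ent w) :
    volume (Iw w) ≤ ENNReal.ofReal (((w.prod:ℝ))⁻¹ * ((w.prod:ℝ))⁻¹) := by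
  rw [vol_Iw h]
  apply ENNReal.ofReal_le_ofReal
  have hp : 0 < w.prod := List.prod_pos (fun a ha => h a ha)
  have hpr : (0:ℝ) < (w.prod:ℝ) := by exact_mod_cast hp
  have hq := qA_pos h
  have hqq : (w.prod:ℝ) ≤ (qA w:ℝ) := by exact_mod_cast (cnt_facts h).2.2.2.2.2.1
  have hqb : (0:ℝ) ≤ (qB w : ℝ) := by positivity
  rw [one_div, ← mul_inv]
  apply inv_anti₀ (by positivity)
  nlinarith

lemma base_meas (s : ℝ) :
    volume {y : ℝ | good y ∧ s ≤ (cfA 1 y : ℝ)} ≤ ENNReal.ofReal (mn s) := by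
  rw [mn]
  split_ifs with h1
  · calc volume {y : ℝ | good y ∧ s ≤ (cfA 1 y : ℝ)} ≤ volume (Set.Ioo (0:ℝ) 1) :=
        measure_mono (fun y hy => hy.1.1)
    _ = ENNReal.ofReal 1 := by rw [Real.volume_Ioo]; norm_num
  · push_neg at h1
    have hs : (0:ℝ) < s := lt_trans one_pos h1
    have hsub : {y : ℝ | good y ∧ s ≤ (cfA 1 y : ℝ)} ⊆ Set.Ioc 0 (1/s) := by
      rintro y ⟨hg, hcf⟩
      have hy0 := hg.pos
      have hfl : (cfA 1 y : ℝ) ≤ 1/y := by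
        rw [cfA]
        simp only [Nat.sub_self, Function.iterate_zero_apply]
        exact Nat.floor_le (by positivity)
      refine ⟨hy0, ?_⟩
      have h2 : s ≤ 1/y := le_trans hcf hfl
      rw [le_div_iff₀ hy0] at h2
      rw [le_div_iff₀ hs]
      linarith
    calc volume {y : ℝ | good y ∧ s ≤ (cfA 1 y : ℝ)} ≤ volume (Set.Ioc (0:ℝ) (1/s)) :=
        measure_mono hsub
    _ = ENNReal.ofReal (1/s) := by rw [Real.volume_Ioc, sub_zero]

lemma base2_meas (t : ℝ) (ht : 0 < t) :
    volume {y : ℝ | good y ∧ t ≤ (cfA 1 y : ℝ) * (cfA 2 y : ℝ)} ≤ ENNReal.ofReal (Vb t) := by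
  by_cases ht1 : t ≤ 1
  · rw [Vb, if_pos ht1]
    calc volume {y : ℝ | good y ∧ t ≤ (cfA 1 y : ℝ) * (cfA 2 y : ℝ)}
        ≤ volume (Set.Ioo (0:ℝ) 1) := measure_mono (fun y hy => hy.1.1)
    _ = ENNReal.ofReal 1 := by rw [Real.volume_Ioo]; norm_num
  · push_neg at ht1
    have hsub : {y : ℝ | good y ∧ t ≤ (cfA 1 y : ℝ) * (cfA 2 y : ℝ)} ⊆
        ⋃ (d : ℕ), {x : ℝ | good x ∧ wd 1 x = [d] ∧
          gaussMap^[1] x ∈ {z : ℝ | good z ∧ t/(d:ℝ) ≤ (cfA 1 z : ℝ)}} := by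
      rintro y ⟨hg, hcf⟩
      refine Set.mem_iUnion.2 ⟨cfA 1 y, hg, rfl, good_iter hg 1, ?_⟩
      have h2 : cfA 1 (gaussMap^[1] y) = cfA 2 y := (cfA_shift 1 1 le_rfl y).symm
      rw [h2]
      have hd0 : (0:ℝ) < (cfA 1 y : ℝ) := by exact_mod_cast cfA_ge_one hg 1
      rw [div_le_iff₀ hd0]
      calc t ≤ (cfA 1 y : ℝ) * (cfA 2 y : ℝ) := hcf
      _ = (cfA 2 y : ℝ) * (cfA 1 y : ℝ) := mul_comm _ _
    refine le_trans (measure_mono hsub) (le_trans (measure_iUnion_le _) ?_)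
    have hper : ∀ d : ℕ, volume {x : ℝ | good x ∧ wd 1 x = [d] ∧
          gaussMap^[1] x ∈ {z : ℝ | good z ∧ t/(d:ℝ) ≤ (cfA 1 z : ℝ)}}
        ≤ ENNReal.ofReal (if 1 ≤ d then 2 * ((((d:ℝ))^2)⁻¹ * mn (t/d)) else 0) := by
      intro d
      by_cases hd : 1 ≤ d
      · rw [if_pos hd]
        have hd0 : (0:ℝ) < (d:ℝ) := by exact_mod_cast hd
        have hEnt : Ent [d] := by intro a ha; simp at ha; omega
        refine le_trans (master 1 (fun w => w = [d])
          {z : ℝ | good z ∧ t/(d:ℝ) ≤ (cfA 1 z : ℝ)} (Iw [d])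
          (fun y hy hP => by rw [← hP]; exact mem_Iw hy 1)) ?_
        have h1 : volume (Iw [d]) ≤ ENNReal.ofReal ((((d:ℝ))^2)⁻¹) := by
          refine le_trans (vol_Iw_le_prod hEnt) (ENNReal.ofReal_le_ofReal (le_of_eq ?_))
          have hprod : (([d] : List ℕ).prod : ℝ) = (d:ℝ) := by simp
          rw [hprod]
          rw [sq]
          rw [mul_inv]
        have h2 : volume ({z : ℝ | good z ∧ t/(d:ℝ) ≤ (cfA 1 z : ℝ)} ∩ Set.Ioo 0 1)
            ≤ ENNReal.ofReal (mn (t/d)) :=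
          le_trans (measure_mono Set.inter_subset_left) (base_meas _)
        refine le_trans (mul_le_mul' (mul_le_mul' le_rfl h1) h2) ?_
        exact two_mul_ofReal_le (by positivity) (mn_nonneg _) (le_of_eq (by ring))
      · rw [if_neg hd]
        have hempty : {x : ℝ | good x ∧ wd 1 x = [d] ∧
            gaussMap^[1] x ∈ {z : ℝ | good z ∧ t/(d:ℝ) ≤ (cfA 1 z : ℝ)}} = ∅ := by
          rw [Set.eq_empty_iff_forall_notMem]
          rintro x ⟨hg, hwd, _⟩
          have hE := wd_pos hg 1
          rw [hwd] at hE
          exact hd (hE d (by simp))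
        rw [hempty, measure_empty]
        simp
    refine le_trans (ENNReal.tsum_le_tsum hper) ?_
    have hc : ∀ d : ℕ, (if 1 ≤ d then 2 * ((((d:ℝ))^2)⁻¹ * mn (t/d)) else 0)
        = 2 * (if 1 ≤ d then (((d:ℝ))^2)⁻¹ * mn (t/d) else 0) := by
      intro d; split_ifs <;> simp
    refine le_trans (tsum_ofReal_le (c := 2 * Wb t) (fun d => ?_) (fun N => ?_))
      (ENNReal.ofReal_le_ofReal ?_)
    · split_ifs with h
      · have := mn_nonneg (t/(d:ℝ))
        positivity
      · exact le_rfl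
    · rw [Finset.sum_congr rfl (fun d _ => hc d), ← Finset.mul_sum]
      have := R1 t ht N
      nlinarith [R1 t ht N]
    · rw [Vb, if_neg (not_le.2 ht1)]
      exact two_Wb_le ht1

lemma cfA_pos_real {x : ℝ} (h : good x) (n : ℕ) : (0:ℝ) < (cfA n x : ℝ) := by
  exact_mod_cast cfA_ge_one h n

lemma single_est (B : ℝ) (hB : 2 ≤ B) :
    volume (Ev B 1) ≤ ENNReal.ofReal (14*(1 + Real.log B)^2/B) := by
  have hB0 : (0:ℝ) < B := by linarith
  have hsub : Ev B 1 ⊆ ⋃ (d : ℕ), ⋃ (e : ℕ),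
      {x : ℝ | good x ∧ wd 2 x = [d, e] ∧
        gaussMap^[2] x ∈ {z : ℝ | good z ∧ B/((d:ℝ)*(e:ℝ)) ≤ (cfA 1 z : ℝ)}} := by
    rintro x ⟨hg, h1⟩
    refine Set.mem_iUnion.2 ⟨cfA 1 x, Set.mem_iUnion.2 ⟨cfA 2 x, hg, wd_two x,
      good_iter hg 2, ?_⟩⟩
    have h3 : cfA 1 (gaussMap^[2] x) = cfA 3 x := by
      rw [← cfA_shift 2 1 le_rfl x]
    rw [h3]
    have hd0 := cfA_pos_real hg 1
    have he0 := cfA_pos_real hg 2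
    rw [div_le_iff₀ (by positivity)]
    have h13 : (1:ℕ)+2 = 3 := rfl
    have h12 : (1:ℕ)+1 = 2 := rfl
    rw [h12, h13] at h1
    nlinarith [h1]
  refine le_trans (measure_mono hsub) (le_trans (measure_iUnion_le _) ?_)
  have step_d : ∀ d : ℕ, volume (⋃ (e : ℕ), {x : ℝ | good x ∧ wd 2 x = [d, e] ∧
        gaussMap^[2] x ∈ {z : ℝ | good z ∧ B/((d:ℝ)*(e:ℝ)) ≤ (cfA 1 z : ℝ)}})
      ≤ ENNReal.ofReal (if 1 ≤ d then 2*((((d:ℝ))^2)⁻¹ * Wb (B/(d:ℝ))) else 0) := by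
    intro d
    refine le_trans (measure_iUnion_le _) ?_
    have hper : ∀ e : ℕ, volume {x : ℝ | good x ∧ wd 2 x = [d, e] ∧
          gaussMap^[2] x ∈ {z : ℝ | good z ∧ B/((d:ℝ)*(e:ℝ)) ≤ (cfA 1 z : ℝ)}}
        ≤ ENNReal.ofReal (if 1 ≤ d ∧ 1 ≤ e then
            2*(((((d:ℝ))^2)⁻¹ * (((e:ℝ))^2)⁻¹) * mn (B/((d:ℝ)*(e:ℝ)))) else 0) := by
      intro e
      by_cases hde : 1 ≤ d ∧ 1 ≤ e
      · rw [if_pos hde]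
        have hd0 : (0:ℝ) < (d:ℝ) := by exact_mod_cast hde.1
        have he0 : (0:ℝ) < (e:ℝ) := by exact_mod_cast hde.2
        have hEnt : Ent [d, e] := by
          intro a ha; simp at ha; rcases ha with rfl | rfl
          · exact hde.1
          · exact hde.2
        refine le_trans (master 2 (fun w => w = [d, e])
          {z : ℝ | good z ∧ B/((d:ℝ)*(e:ℝ)) ≤ (cfA 1 z : ℝ)} (Iw [d, e])
          (fun y hy hP => by rw [← hP]; exact mem_Iw hy 2)) ?_
        have h1 : volume (Iw [d, e]) ≤
            ENNReal.ofReal ((((d:ℝ))^2)⁻¹ * (((e:ℝ))^2)⁻¹) := by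
          refine le_trans (vol_Iw_le_prod hEnt) (ENNReal.ofReal_le_ofReal (le_of_eq ?_))
          have hprod : (([d, e] : List ℕ).prod : ℝ) = (d:ℝ)*(e:ℝ) := by
            simp [List.prod_cons]
          rw [hprod]
          field_simp
        have h2 : volume ({z : ℝ | good z ∧ B/((d:ℝ)*(e:ℝ)) ≤ (cfA 1 z : ℝ)} ∩ Set.Ioo 0 1)
            ≤ ENNReal.ofReal (mn (B/((d:ℝ)*(e:ℝ)))) :=
          le_trans (measure_mono Set.inter_subset_left) (base_meas _)
        refine le_trans (mul_le_mul' (mul_le_mul' le_rfl h1) h2) ?_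
        exact two_mul_ofReal_le (by positivity) (mn_nonneg _) (le_of_eq (by ring))
      · rw [if_neg hde]
        have hempty : {x : ℝ | good x ∧ wd 2 x = [d, e] ∧
            gaussMap^[2] x ∈ {z : ℝ | good z ∧ B/((d:ℝ)*(e:ℝ)) ≤ (cfA 1 z : ℝ)}} = ∅ := by
          rw [Set.eq_empty_iff_forall_notMem]
          rintro x ⟨hg, hwd, _⟩
          have hE := wd_pos hg 2
          rw [hwd] at hE
          exact hde ⟨hE d (by simp), hE e (by simp)⟩
        rw [hempty, measure_empty]
        simp
    refine le_trans (ENNReal.tsum_le_tsum hper) ?_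
    by_cases hd : 1 ≤ d
    · rw [if_pos hd]
      have hd0 : (0:ℝ) < (d:ℝ) := by exact_mod_cast hd
      have hBd : (0:ℝ) < B/(d:ℝ) := by positivity
      refine le_trans (tsum_ofReal_le (c := 2*((((d:ℝ))^2)⁻¹ * Wb (B/(d:ℝ))))
        (fun e => ?_) (fun N => ?_)) (ENNReal.ofReal_le_ofReal ?_)
      · split_ifs with h
        · have := mn_nonneg (B/((d:ℝ)*(e:ℝ)))
          positivity
        · exact le_rfl
      · have hpt : ∀ e : ℕ, (if 1 ≤ d ∧ 1 ≤ e then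
            2*(((((d:ℝ))^2)⁻¹ * (((e:ℝ))^2)⁻¹) * mn (B/((d:ℝ)*(e:ℝ)))) else 0)
            = (2*(((d:ℝ))^2)⁻¹) * (if 1 ≤ e then (((e:ℝ))^2)⁻¹ * mn ((B/(d:ℝ))/(e:ℝ)) else 0) := by
          intro e
          have hdd : B/((d:ℝ)*(e:ℝ)) = (B/(d:ℝ))/(e:ℝ) := by
            rw [div_div]
          split_ifs with h1 h2 h3
          · rw [hdd]; ring
          · exact absurd h1.2 h2
          · exact absurd ⟨hd, h3⟩ h1
          · rw [mul_zero]
        rw [Finset.sum_congr rfl (fun e _ => hpt e), ← Finset.mul_sum]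
        have hR := R1 (B/(d:ℝ)) hBd N
        have h20 : (0:ℝ) ≤ 2*(((d:ℝ))^2)⁻¹ := by positivity
        calc (2*(((d:ℝ))^2)⁻¹) * (∑ e ∈ Finset.range N,
            (if 1 ≤ e then (((e:ℝ))^2)⁻¹ * mn ((B/(d:ℝ))/(e:ℝ)) else 0))
            ≤ (2*(((d:ℝ))^2)⁻¹) * Wb (B/(d:ℝ)) := mul_le_mul_of_nonneg_left hR h20
        _ = 2*((((d:ℝ))^2)⁻¹ * Wb (B/(d:ℝ))) := by ring
      · exact le_rfl
    · have hz : ∀ e : ℕ, (if 1 ≤ d ∧ 1 ≤ e then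
          2*(((((d:ℝ))^2)⁻¹ * (((e:ℝ))^2)⁻¹) * mn (B/((d:ℝ)*(e:ℝ)))) else 0) = 0 := by
        intro e
        rw [if_neg (fun h => hd h.1)]
      rw [if_neg hd]
      calc (∑' (e : ℕ), ENNReal.ofReal (if 1 ≤ d ∧ 1 ≤ e then
          2*(((((d:ℝ))^2)⁻¹ * (((e:ℝ))^2)⁻¹) * mn (B/((d:ℝ)*(e:ℝ)))) else 0))
          = ∑' (e : ℕ), ENNReal.ofReal 0 := tsum_congr (fun e => by rw [hz e])
      _ = 0 := by simp
      _ ≤ ENNReal.ofReal 0 := by simp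
  refine le_trans (ENNReal.tsum_le_tsum step_d) ?_
  refine le_trans (tsum_ofReal_le (c := 2*(7*(1 + Real.log B)^2/B))
    (fun d => ?_) (fun N => ?_)) (ENNReal.ofReal_le_ofReal ?_)
  · split_ifs with h
    · have hd0 : (0:ℝ) < (d:ℝ) := by exact_mod_cast h
      have := Wb_nonneg (B/(d:ℝ)) (by positivity)
      positivity
    · exact le_rfl
  · have hpt : ∀ d : ℕ, (if 1 ≤ d then 2*((((d:ℝ))^2)⁻¹ * Wb (B/(d:ℝ))) else 0)
        = 2 * (if 1 ≤ d then (((d:ℝ))^2)⁻¹ * Wb (B/(d:ℝ)) else 0) := by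
      intro d; split_ifs <;> simp
    rw [Finset.sum_congr rfl (fun d _ => hpt d), ← Finset.mul_sum]
    have hR := R4 B hB N
    linarith
  · exact le_of_eq (by ring)

lemma gap2_est (B : ℝ) (hB : 2 ≤ B) :
    volume (Ev B 1 ∩ Ev B 2) ≤ ENNReal.ofReal (32*(1 + Real.log B)/B) := by
  have hB0 : (0:ℝ) < B := by linarith
  have hsub : Ev B 1 ∩ Ev B 2 ⊆ ⋃ (e : ℕ), ⋃ (f : ℕ), ⋃ (d : ℕ),
      {x : ℝ | good x ∧ (wd 3 x = [d, e, f] ∧ B/((e:ℝ)*(f:ℝ)) ≤ (d:ℝ)) ∧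
        gaussMap^[3] x ∈ {z : ℝ | good z ∧ B/((e:ℝ)*(f:ℝ)) ≤ (cfA 1 z : ℝ)}} := by
    rintro x ⟨⟨hg, h1⟩, ⟨_, h2⟩⟩
    have h12 : (1:ℕ)+1 = 2 := rfl
    have h13 : (1:ℕ)+2 = 3 := rfl
    have h23 : (2:ℕ)+1 = 3 := rfl
    have h24 : (2:ℕ)+2 = 4 := rfl
    rw [h12, h13] at h1
    rw [h23, h24] at h2
    refine Set.mem_iUnion.2 ⟨cfA 2 x, Set.mem_iUnion.2 ⟨cfA 3 x,
      Set.mem_iUnion.2 ⟨cfA 1 x, hg, ⟨wd_three x, ?_⟩, good_iter hg 3, ?_⟩⟩⟩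
    · have hd0 := cfA_pos_real hg 1
      have he0 := cfA_pos_real hg 2
      have hf0 := cfA_pos_real hg 3
      rw [div_le_iff₀ (by positivity)]
      nlinarith [h1]
    · have h4 : cfA 1 (gaussMap^[3] x) = cfA 4 x := by
        rw [← cfA_shift 3 1 le_rfl x]
      rw [h4]
      have he0 := cfA_pos_real hg 2
      have hf0 := cfA_pos_real hg 3
      have h40 := cfA_pos_real hg 4
      rw [div_le_iff₀ (by positivity)]
      nlinarith [h2]
  refine le_trans (measure_mono hsub) (le_trans (measure_iUnion_le _) ?_)
  have step_e : ∀ e : ℕ, volume (⋃ (f : ℕ), ⋃ (d : ℕ),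
      {x : ℝ | good x ∧ (wd 3 x = [d, e, f] ∧ B/((e:ℝ)*(f:ℝ)) ≤ (d:ℝ)) ∧
        gaussMap^[3] x ∈ {z : ℝ | good z ∧ B/((e:ℝ)*(f:ℝ)) ≤ (cfA 1 z : ℝ)}})
      ≤ ENNReal.ofReal (if 1 ≤ e then 4*((((e:ℝ))^2)⁻¹ * W2b (B/(e:ℝ))) else 0) := by
    intro e
    refine le_trans (measure_iUnion_le _) ?_
    have step_f : ∀ f : ℕ, volume (⋃ (d : ℕ),
        {x : ℝ | good x ∧ (wd 3 x = [d, e, f] ∧ B/((e:ℝ)*(f:ℝ)) ≤ (d:ℝ)) ∧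
          gaussMap^[3] x ∈ {z : ℝ | good z ∧ B/((e:ℝ)*(f:ℝ)) ≤ (cfA 1 z : ℝ)}})
        ≤ ENNReal.ofReal (if 1 ≤ e ∧ 1 ≤ f then
            4*((((e:ℝ))^2)⁻¹ * ((((f:ℝ))^2)⁻¹ * (mn (B/((e:ℝ)*(f:ℝ))))^2)) else 0) := by
      intro f
      refine le_trans (measure_iUnion_le _) ?_
      have hper : ∀ d : ℕ, volume {x : ℝ | good x ∧ (wd 3 x = [d, e, f] ∧
            B/((e:ℝ)*(f:ℝ)) ≤ (d:ℝ)) ∧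
            gaussMap^[3] x ∈ {z : ℝ | good z ∧ B/((e:ℝ)*(f:ℝ)) ≤ (cfA 1 z : ℝ)}}
          ≤ ENNReal.ofReal (if 1 ≤ d ∧ 1 ≤ e ∧ 1 ≤ f ∧ B/((e:ℝ)*(f:ℝ)) ≤ (d:ℝ) then
              (2*((((e:ℝ))^2)⁻¹*(((f:ℝ))^2)⁻¹*mn (B/((e:ℝ)*(f:ℝ))))) * (((d:ℝ))^2)⁻¹
            else 0) := by
        intro d
        by_cases hc : 1 ≤ d ∧ 1 ≤ e ∧ 1 ≤ f ∧ B/((e:ℝ)*(f:ℝ)) ≤ (d:ℝ)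
        · rw [if_pos hc]
          obtain ⟨hd, he, hf, hthr⟩ := hc
          have hd0 : (0:ℝ) < (d:ℝ) := by exact_mod_cast hd
          have he0 : (0:ℝ) < (e:ℝ) := by exact_mod_cast he
          have hf0 : (0:ℝ) < (f:ℝ) := by exact_mod_cast hf
          have hEnt : Ent [d, e, f] := by
            intro a ha; simp at ha; rcases ha with rfl | rfl | rfl
            · exact hd
            · exact he
            · exact hf
          refine le_trans (master 3
            (fun w => w = [d, e, f] ∧ B/((e:ℝ)*(f:ℝ)) ≤ (d:ℝ))
            {z : ℝ | good z ∧ B/((e:ℝ)*(f:ℝ)) ≤ (cfA 1 z : ℝ)} (Iw [d, e, f])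
            (fun y hy hP => by rw [← hP.1]; exact mem_Iw hy 3)) ?_
          have h1 : volume (Iw [d, e, f]) ≤
              ENNReal.ofReal ((((d:ℝ))^2)⁻¹ * ((((e:ℝ))^2)⁻¹ * (((f:ℝ))^2)⁻¹)) := by
            refine le_trans (vol_Iw_le_prod hEnt) (ENNReal.ofReal_le_ofReal (le_of_eq ?_))
            have hprod : (([d, e, f] : List ℕ).prod : ℝ) = (d:ℝ)*((e:ℝ)*(f:ℝ)) := by
              push_cast [List.prod_cons, List.prod_nil]
              ring
            rw [hprod]
            field_simp
          have h2 : volume ({z : ℝ | good z ∧ B/((e:ℝ)*(f:ℝ)) ≤ (cfA 1 z : ℝ)} ∩ Set.Ioo 0 1)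
              ≤ ENNReal.ofReal (mn (B/((e:ℝ)*(f:ℝ)))) :=
            le_trans (measure_mono Set.inter_subset_left) (base_meas _)
          refine le_trans (mul_le_mul' (mul_le_mul' le_rfl h1) h2) ?_
          exact two_mul_ofReal_le (by positivity) (mn_nonneg _) (le_of_eq (by ring))
        · rw [if_neg hc]
          have hempty : {x : ℝ | good x ∧ (wd 3 x = [d, e, f] ∧
              B/((e:ℝ)*(f:ℝ)) ≤ (d:ℝ)) ∧
              gaussMap^[3] x ∈ {z : ℝ | good z ∧ B/((e:ℝ)*(f:ℝ)) ≤ (cfA 1 z : ℝ)}} = ∅ := by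
            rw [Set.eq_empty_iff_forall_notMem]
            rintro x ⟨hg, ⟨hwd, hthr⟩, _⟩
            have hE := wd_pos hg 3
            rw [hwd] at hE
            exact hc ⟨hE d (by simp), hE e (by simp), hE f (by simp), hthr⟩
          rw [hempty, measure_empty]
          simp
      refine le_trans (ENNReal.tsum_le_tsum hper) ?_
      by_cases hef : 1 ≤ e ∧ 1 ≤ f
      · rw [if_pos hef]
        have he0 : (0:ℝ) < (e:ℝ) := by exact_mod_cast hef.1
        have hf0 : (0:ℝ) < (f:ℝ) := by exact_mod_cast hef.2
        have hs0 : (0:ℝ) < B/((e:ℝ)*(f:ℝ)) := by positivity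
        have hmn0 := mn_nonneg (B/((e:ℝ)*(f:ℝ)))
        refine le_trans (tsum_ofReal_le
          (c := 4*((((e:ℝ))^2)⁻¹ * ((((f:ℝ))^2)⁻¹ * (mn (B/((e:ℝ)*(f:ℝ))))^2)))
          (fun d => ?_) (fun N => ?_))
          (ENNReal.ofReal_le_ofReal ?_)
        · split_ifs with h
          · positivity
          · exact le_rfl
        · have hpt : ∀ d : ℕ, (if 1 ≤ d ∧ 1 ≤ e ∧ 1 ≤ f ∧ B/((e:ℝ)*(f:ℝ)) ≤ (d:ℝ) then
              (2*((((e:ℝ))^2)⁻¹*(((f:ℝ))^2)⁻¹*mn (B/((e:ℝ)*(f:ℝ))))) * (((d:ℝ))^2)⁻¹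
              else 0)
              = (2*((((e:ℝ))^2)⁻¹*(((f:ℝ))^2)⁻¹*mn (B/((e:ℝ)*(f:ℝ)))))
                * (if 1 ≤ d ∧ B/((e:ℝ)*(f:ℝ)) ≤ (d:ℝ) then (((d:ℝ))^2)⁻¹ else 0) := by
            intro d
            split_ifs with h1 h2 h3
            · rfl
            · exact absurd ⟨h1.1, h1.2.2.2⟩ h2
            · exact absurd ⟨h3.1, hef.1, hef.2, h3.2⟩ h1
            · rw [mul_zero]
          rw [Finset.sum_congr rfl (fun d _ => hpt d), ← Finset.mul_sum]
          have hR := sum_thresh (B/((e:ℝ)*(f:ℝ))) hs0 N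
          have h20 : (0:ℝ) ≤ 2*((((e:ℝ))^2)⁻¹*(((f:ℝ))^2)⁻¹*mn (B/((e:ℝ)*(f:ℝ)))) := by
            positivity
          calc (2*((((e:ℝ))^2)⁻¹*(((f:ℝ))^2)⁻¹*mn (B/((e:ℝ)*(f:ℝ)))))
              * (∑ d ∈ Finset.range N,
                (if 1 ≤ d ∧ B/((e:ℝ)*(f:ℝ)) ≤ (d:ℝ) then (((d:ℝ))^2)⁻¹ else 0))
              ≤ (2*((((e:ℝ))^2)⁻¹*(((f:ℝ))^2)⁻¹*mn (B/((e:ℝ)*(f:ℝ)))))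
                * (2 * mn (B/((e:ℝ)*(f:ℝ)))) := mul_le_mul_of_nonneg_left hR h20
          _ = 4*((((e:ℝ))^2)⁻¹ * ((((f:ℝ))^2)⁻¹ * (mn (B/((e:ℝ)*(f:ℝ))))^2)) := by ring
        · exact le_rfl
      · rw [if_neg hef]
        have hz : ∀ d : ℕ, (if 1 ≤ d ∧ 1 ≤ e ∧ 1 ≤ f ∧ B/((e:ℝ)*(f:ℝ)) ≤ (d:ℝ) then
            (2*((((e:ℝ))^2)⁻¹*(((f:ℝ))^2)⁻¹*mn (B/((e:ℝ)*(f:ℝ))))) * (((d:ℝ))^2)⁻¹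
            else 0) = 0 := by
          intro d
          rw [if_neg (fun h => hef ⟨h.2.1, h.2.2.1⟩)]
        calc (∑' (d : ℕ), ENNReal.ofReal (if 1 ≤ d ∧ 1 ≤ e ∧ 1 ≤ f ∧
            B/((e:ℝ)*(f:ℝ)) ≤ (d:ℝ) then
            (2*((((e:ℝ))^2)⁻¹*(((f:ℝ))^2)⁻¹*mn (B/((e:ℝ)*(f:ℝ))))) * (((d:ℝ))^2)⁻¹
            else 0))
            = ∑' (d : ℕ), ENNReal.ofReal 0 := tsum_congr (fun d => by rw [hz d])
        _ = 0 := by simp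
        _ ≤ ENNReal.ofReal 0 := by simp
    refine le_trans (ENNReal.tsum_le_tsum step_f) ?_
    by_cases he : 1 ≤ e
    · rw [if_pos he]
      have he0 : (0:ℝ) < (e:ℝ) := by exact_mod_cast he
      have hBe : (0:ℝ) < B/(e:ℝ) := by positivity
      refine le_trans (tsum_ofReal_le (c := 4*((((e:ℝ))^2)⁻¹ * W2b (B/(e:ℝ))))
        (fun f => ?_) (fun N => ?_)) (ENNReal.ofReal_le_ofReal ?_)
      · split_ifs with h
        · have hf0 : (0:ℝ) < (f:ℝ) := by exact_mod_cast h.2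
          have := mn_nonneg (B/((e:ℝ)*(f:ℝ)))
          positivity
        · exact le_rfl
      · have hpt : ∀ f : ℕ, (if 1 ≤ e ∧ 1 ≤ f then
            4*((((e:ℝ))^2)⁻¹ * ((((f:ℝ))^2)⁻¹ * (mn (B/((e:ℝ)*(f:ℝ))))^2)) else 0)
            = (4*(((e:ℝ))^2)⁻¹)
              * (if 1 ≤ f then (((f:ℝ))^2)⁻¹ * (mn ((B/(e:ℝ))/(f:ℝ)))^2 else 0) := by
          intro f
          have hdd : B/((e:ℝ)*(f:ℝ)) = (B/(e:ℝ))/(f:ℝ) := by rw [div_div]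
          split_ifs with h1 h2 h3
          · rw [hdd]; ring
          · exact absurd h1.2 h2
          · exact absurd ⟨he, h3⟩ h1
          · rw [mul_zero]
        rw [Finset.sum_congr rfl (fun f _ => hpt f), ← Finset.mul_sum]
        have hR := R2 (B/(e:ℝ)) hBe N
        have h40 : (0:ℝ) ≤ 4*(((e:ℝ))^2)⁻¹ := by positivity
        calc (4*(((e:ℝ))^2)⁻¹) * (∑ f ∈ Finset.range N,
            (if 1 ≤ f then (((f:ℝ))^2)⁻¹ * (mn ((B/(e:ℝ))/(f:ℝ)))^2 else 0))
            ≤ (4*(((e:ℝ))^2)⁻¹) * W2b (B/(e:ℝ)) := mul_le_mul_of_nonneg_left hR h40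
        _ = 4*((((e:ℝ))^2)⁻¹ * W2b (B/(e:ℝ))) := by ring
      · exact le_rfl
    · rw [if_neg he]
      have hz : ∀ f : ℕ, (if 1 ≤ e ∧ 1 ≤ f then
          4*((((e:ℝ))^2)⁻¹ * ((((f:ℝ))^2)⁻¹ * (mn (B/((e:ℝ)*(f:ℝ))))^2)) else 0) = 0 := by
        intro f
        rw [if_neg (fun h => he h.1)]
      calc (∑' (f : ℕ), ENNReal.ofReal (if 1 ≤ e ∧ 1 ≤ f then
          4*((((e:ℝ))^2)⁻¹ * ((((f:ℝ))^2)⁻¹ * (mn (B/((e:ℝ)*(f:ℝ))))^2)) else 0))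
          = ∑' (f : ℕ), ENNReal.ofReal 0 := tsum_congr (fun f => by rw [hz f])
      _ = 0 := by simp
      _ ≤ ENNReal.ofReal 0 := by simp
  refine le_trans (ENNReal.tsum_le_tsum step_e) ?_
  refine le_trans (tsum_ofReal_le (c := 4*(8*(1 + Real.log B)/B))
    (fun e => ?_) (fun N => ?_)) (ENNReal.ofReal_le_ofReal ?_)
  · split_ifs with h
    · have he0 : (0:ℝ) < (e:ℝ) := by exact_mod_cast h
      have := W2b_nonneg (B/(e:ℝ)) (by positivity)
      positivity
    · exact le_rfl
  · have hpt : ∀ e : ℕ, (if 1 ≤ e then 4*((((e:ℝ))^2)⁻¹ * W2b (B/(e:ℝ))) else 0)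
        = 4 * (if 1 ≤ e then (((e:ℝ))^2)⁻¹ * W2b (B/(e:ℝ)) else 0) := by
      intro e; split_ifs <;> simp
    rw [Finset.sum_congr rfl (fun e _ => hpt e), ← Finset.mul_sum]
    have hR := R3 B hB N
    linarith
  · exact le_of_eq (by ring)

lemma gap3_est (B : ℝ) (hB : 2 ≤ B) :
    volume (Ev B 1 ∩ Ev B 3) ≤ ENNReal.ofReal (88*(1 + Real.log B)/B) := by
  have hB0 : (0:ℝ) < B := by linarith
  have hsub : Ev B 1 ∩ Ev B 3 ⊆ ⋃ (f : ℕ), ⋃ (e : ℕ), ⋃ (d : ℕ),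
      {x : ℝ | good x ∧ (wd 3 x = [d, e, f] ∧ B/((e:ℝ)*(f:ℝ)) ≤ (d:ℝ)) ∧
        gaussMap^[3] x ∈ {z : ℝ | good z ∧ B/(f:ℝ) ≤ (cfA 1 z : ℝ) * (cfA 2 z : ℝ)}} := by
    rintro x ⟨⟨hg, h1⟩, ⟨_, h2⟩⟩
    have h12 : (1:ℕ)+1 = 2 := rfl
    have h13 : (1:ℕ)+2 = 3 := rfl
    have h34 : (3:ℕ)+1 = 4 := rfl
    have h35 : (3:ℕ)+2 = 5 := rfl
    rw [h12, h13] at h1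
    rw [h34, h35] at h2
    refine Set.mem_iUnion.2 ⟨cfA 3 x, Set.mem_iUnion.2 ⟨cfA 2 x,
      Set.mem_iUnion.2 ⟨cfA 1 x, hg, ⟨wd_three x, ?_⟩, good_iter hg 3, ?_⟩⟩⟩
    · have hd0 := cfA_pos_real hg 1
      have he0 := cfA_pos_real hg 2
      have hf0 := cfA_pos_real hg 3
      rw [div_le_iff₀ (by positivity)]
      nlinarith [h1]
    · have h4 : cfA 1 (gaussMap^[3] x) = cfA 4 x := by
        rw [← cfA_shift 3 1 le_rfl x]
      have h5 : cfA 2 (gaussMap^[3] x) = cfA 5 x := by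
        rw [← cfA_shift 3 2 (by omega) x]
      rw [h4, h5]
      have hf0 := cfA_pos_real hg 3
      have h40 := cfA_pos_real hg 4
      have h50 := cfA_pos_real hg 5
      rw [div_le_iff₀ (by positivity)]
      nlinarith [h2]
  refine le_trans (measure_mono hsub) (le_trans (measure_iUnion_le _) ?_)
  have step_f : ∀ f : ℕ, volume (⋃ (e : ℕ), ⋃ (d : ℕ),
      {x : ℝ | good x ∧ (wd 3 x = [d, e, f] ∧ B/((e:ℝ)*(f:ℝ)) ≤ (d:ℝ)) ∧
        gaussMap^[3] x ∈ {z : ℝ | good z ∧ B/(f:ℝ) ≤ (cfA 1 z : ℝ) * (cfA 2 z : ℝ)}})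
      ≤ ENNReal.ofReal (if 1 ≤ f then
          4*((((f:ℝ))^2)⁻¹ * (Wb (B/(f:ℝ)) * Vb (B/(f:ℝ)))) else 0) := by
    intro f
    refine le_trans (measure_iUnion_le _) ?_
    have step_e : ∀ e : ℕ, volume (⋃ (d : ℕ),
        {x : ℝ | good x ∧ (wd 3 x = [d, e, f] ∧ B/((e:ℝ)*(f:ℝ)) ≤ (d:ℝ)) ∧
          gaussMap^[3] x ∈ {z : ℝ | good z ∧ B/(f:ℝ) ≤ (cfA 1 z : ℝ) * (cfA 2 z : ℝ)}})
        ≤ ENNReal.ofReal (if 1 ≤ e ∧ 1 ≤ f then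
            (4*((((f:ℝ))^2)⁻¹ * Vb (B/(f:ℝ))))
              * ((((e:ℝ))^2)⁻¹ * mn ((B/(f:ℝ))/(e:ℝ))) else 0) := by
      intro e
      refine le_trans (measure_iUnion_le _) ?_
      have hper : ∀ d : ℕ, volume {x : ℝ | good x ∧ (wd 3 x = [d, e, f] ∧
            B/((e:ℝ)*(f:ℝ)) ≤ (d:ℝ)) ∧
            gaussMap^[3] x ∈ {z : ℝ | good z ∧ B/(f:ℝ) ≤ (cfA 1 z : ℝ) * (cfA 2 z : ℝ)}}
          ≤ ENNReal.ofReal (if 1 ≤ d ∧ 1 ≤ e ∧ 1 ≤ f ∧ B/((e:ℝ)*(f:ℝ)) ≤ (d:ℝ) then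
              (2*((((e:ℝ))^2)⁻¹*(((f:ℝ))^2)⁻¹*Vb (B/(f:ℝ)))) * (((d:ℝ))^2)⁻¹
            else 0) := by
        intro d
        by_cases hc : 1 ≤ d ∧ 1 ≤ e ∧ 1 ≤ f ∧ B/((e:ℝ)*(f:ℝ)) ≤ (d:ℝ)
        · rw [if_pos hc]
          obtain ⟨hd, he, hf, hthr⟩ := hc
          have hd0 : (0:ℝ) < (d:ℝ) := by exact_mod_cast hd
          have he0 : (0:ℝ) < (e:ℝ) := by exact_mod_cast he
          have hf0 : (0:ℝ) < (f:ℝ) := by exact_mod_cast hf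
          have hEnt : Ent [d, e, f] := by
            intro a ha; simp at ha; rcases ha with rfl | rfl | rfl
            · exact hd
            · exact he
            · exact hf
          refine le_trans (master 3
            (fun w => w = [d, e, f] ∧ B/((e:ℝ)*(f:ℝ)) ≤ (d:ℝ))
            {z : ℝ | good z ∧ B/(f:ℝ) ≤ (cfA 1 z : ℝ) * (cfA 2 z : ℝ)} (Iw [d, e, f])
            (fun y hy hP => by rw [← hP.1]; exact mem_Iw hy 3)) ?_
          have h1 : volume (Iw [d, e, f]) ≤
              ENNReal.ofReal ((((d:ℝ))^2)⁻¹ * ((((e:ℝ))^2)⁻¹ * (((f:ℝ))^2)⁻¹)) := by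
            refine le_trans (vol_Iw_le_prod hEnt) (ENNReal.ofReal_le_ofReal (le_of_eq ?_))
            have hprod : (([d, e, f] : List ℕ).prod : ℝ) = (d:ℝ)*((e:ℝ)*(f:ℝ)) := by
              push_cast [List.prod_cons, List.prod_nil]
              ring
            rw [hprod]
            field_simp
          have h2 : volume ({z : ℝ | good z ∧ B/(f:ℝ) ≤ (cfA 1 z : ℝ) * (cfA 2 z : ℝ)}
                ∩ Set.Ioo 0 1)
              ≤ ENNReal.ofReal (Vb (B/(f:ℝ))) :=
            le_trans (measure_mono Set.inter_subset_left) (base2_meas _ (by positivity))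
          refine le_trans (mul_le_mul' (mul_le_mul' le_rfl h1) h2) ?_
          exact two_mul_ofReal_le (by positivity) (Vb_nonneg _) (le_of_eq (by ring))
        · rw [if_neg hc]
          have hempty : {x : ℝ | good x ∧ (wd 3 x = [d, e, f] ∧
              B/((e:ℝ)*(f:ℝ)) ≤ (d:ℝ)) ∧
              gaussMap^[3] x ∈ {z : ℝ | good z ∧ B/(f:ℝ) ≤ (cfA 1 z : ℝ) * (cfA 2 z : ℝ)}}
              = ∅ := by
            rw [Set.eq_empty_iff_forall_notMem]
            rintro x ⟨hg, ⟨hwd, hthr⟩, _⟩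
            have hE := wd_pos hg 3
            rw [hwd] at hE
            exact hc ⟨hE d (by simp), hE e (by simp), hE f (by simp), hthr⟩
          rw [hempty, measure_empty]
          simp
      refine le_trans (ENNReal.tsum_le_tsum hper) ?_
      by_cases hef : 1 ≤ e ∧ 1 ≤ f
      · rw [if_pos hef]
        have he0 : (0:ℝ) < (e:ℝ) := by exact_mod_cast hef.1
        have hf0 : (0:ℝ) < (f:ℝ) := by exact_mod_cast hef.2
        have hs0 : (0:ℝ) < B/((e:ℝ)*(f:ℝ)) := by positivity
        have hVb0 := Vb_nonneg (B/(f:ℝ))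
        refine le_trans (tsum_ofReal_le
          (c := (4*((((f:ℝ))^2)⁻¹ * Vb (B/(f:ℝ)))) * ((((e:ℝ))^2)⁻¹ * mn ((B/(f:ℝ))/(e:ℝ))))
          (fun d => ?_) (fun N => ?_))
          (ENNReal.ofReal_le_ofReal ?_)
        · split_ifs with h
          · positivity
          · exact le_rfl
        · have hpt : ∀ d : ℕ, (if 1 ≤ d ∧ 1 ≤ e ∧ 1 ≤ f ∧ B/((e:ℝ)*(f:ℝ)) ≤ (d:ℝ) then
              (2*((((e:ℝ))^2)⁻¹*(((f:ℝ))^2)⁻¹*Vb (B/(f:ℝ)))) * (((d:ℝ))^2)⁻¹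
              else 0)
              = (2*((((e:ℝ))^2)⁻¹*(((f:ℝ))^2)⁻¹*Vb (B/(f:ℝ))))
                * (if 1 ≤ d ∧ B/((e:ℝ)*(f:ℝ)) ≤ (d:ℝ) then (((d:ℝ))^2)⁻¹ else 0) := by
            intro d
            split_ifs with h1 h2 h3
            · rfl
            · exact absurd ⟨h1.1, h1.2.2.2⟩ h2
            · exact absurd ⟨h3.1, hef.1, hef.2, h3.2⟩ h1
            · rw [mul_zero]
          rw [Finset.sum_congr rfl (fun d _ => hpt d), ← Finset.mul_sum]
          have hR := sum_thresh (B/((e:ℝ)*(f:ℝ))) hs0 N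
          have h20 : (0:ℝ) ≤ 2*((((e:ℝ))^2)⁻¹*(((f:ℝ))^2)⁻¹*Vb (B/(f:ℝ))) := by positivity
          have hcomm : B/((e:ℝ)*(f:ℝ)) = (B/(f:ℝ))/(e:ℝ) := by
            rw [div_div, mul_comm]
          calc (2*((((e:ℝ))^2)⁻¹*(((f:ℝ))^2)⁻¹*Vb (B/(f:ℝ))))
              * (∑ d ∈ Finset.range N,
                (if 1 ≤ d ∧ B/((e:ℝ)*(f:ℝ)) ≤ (d:ℝ) then (((d:ℝ))^2)⁻¹ else 0))
              ≤ (2*((((e:ℝ))^2)⁻¹*(((f:ℝ))^2)⁻¹*Vb (B/(f:ℝ))))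
                * (2 * mn (B/((e:ℝ)*(f:ℝ)))) := mul_le_mul_of_nonneg_left hR h20
          _ = (4*((((f:ℝ))^2)⁻¹ * Vb (B/(f:ℝ))))
                * ((((e:ℝ))^2)⁻¹ * mn ((B/(f:ℝ))/(e:ℝ))) := by
              rw [← hcomm]; ring
        · exact le_rfl
      · rw [if_neg hef]
        have hz : ∀ d : ℕ, (if 1 ≤ d ∧ 1 ≤ e ∧ 1 ≤ f ∧ B/((e:ℝ)*(f:ℝ)) ≤ (d:ℝ) then
            (2*((((e:ℝ))^2)⁻¹*(((f:ℝ))^2)⁻¹*Vb (B/(f:ℝ)))) * (((d:ℝ))^2)⁻¹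
            else 0) = 0 := by
          intro d
          rw [if_neg (fun h => hef ⟨h.2.1, h.2.2.1⟩)]
        calc (∑' (d : ℕ), ENNReal.ofReal (if 1 ≤ d ∧ 1 ≤ e ∧ 1 ≤ f ∧
            B/((e:ℝ)*(f:ℝ)) ≤ (d:ℝ) then
            (2*((((e:ℝ))^2)⁻¹*(((f:ℝ))^2)⁻¹*Vb (B/(f:ℝ)))) * (((d:ℝ))^2)⁻¹
            else 0))
            = ∑' (d : ℕ), ENNReal.ofReal 0 := tsum_congr (fun d => by rw [hz d])
        _ = 0 := by simp
        _ ≤ ENNReal.ofReal 0 := by simp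
    refine le_trans (ENNReal.tsum_le_tsum step_e) ?_
    by_cases hf : 1 ≤ f
    · rw [if_pos hf]
      have hf0 : (0:ℝ) < (f:ℝ) := by exact_mod_cast hf
      have hBf : (0:ℝ) < B/(f:ℝ) := by positivity
      have hVb0 := Vb_nonneg (B/(f:ℝ))
      refine le_trans (tsum_ofReal_le
        (c := 4*((((f:ℝ))^2)⁻¹ * (Wb (B/(f:ℝ)) * Vb (B/(f:ℝ)))))
        (fun e => ?_) (fun N => ?_)) (ENNReal.ofReal_le_ofReal ?_)
      · split_ifs with h
        · have he0 : (0:ℝ) < (e:ℝ) := by exact_mod_cast h.1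
          have := mn_nonneg ((B/(f:ℝ))/(e:ℝ))
          positivity
        · exact le_rfl
      · have hpt : ∀ e : ℕ, (if 1 ≤ e ∧ 1 ≤ f then
            (4*((((f:ℝ))^2)⁻¹ * Vb (B/(f:ℝ))))
              * ((((e:ℝ))^2)⁻¹ * mn ((B/(f:ℝ))/(e:ℝ))) else 0)
            = (4*((((f:ℝ))^2)⁻¹ * Vb (B/(f:ℝ))))
              * (if 1 ≤ e then (((e:ℝ))^2)⁻¹ * mn ((B/(f:ℝ))/(e:ℝ)) else 0) := by
          intro e
          split_ifs with h1 h2 h3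
          · rfl
          · exact absurd h1.1 h2
          · exact absurd ⟨h3, hf⟩ h1
          · rw [mul_zero]
        rw [Finset.sum_congr rfl (fun e _ => hpt e), ← Finset.mul_sum]
        have hR := R1 (B/(f:ℝ)) hBf N
        have h40 : (0:ℝ) ≤ 4*((((f:ℝ))^2)⁻¹ * Vb (B/(f:ℝ))) := by positivity
        calc (4*((((f:ℝ))^2)⁻¹ * Vb (B/(f:ℝ)))) * (∑ e ∈ Finset.range N,
            (if 1 ≤ e then (((e:ℝ))^2)⁻¹ * mn ((B/(f:ℝ))/(e:ℝ)) else 0))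
            ≤ (4*((((f:ℝ))^2)⁻¹ * Vb (B/(f:ℝ)))) * Wb (B/(f:ℝ)) :=
              mul_le_mul_of_nonneg_left hR h40
        _ = 4*((((f:ℝ))^2)⁻¹ * (Wb (B/(f:ℝ)) * Vb (B/(f:ℝ)))) := by ring
      · exact le_rfl
    · rw [if_neg hf]
      have hz : ∀ e : ℕ, (if 1 ≤ e ∧ 1 ≤ f then
          (4*((((f:ℝ))^2)⁻¹ * Vb (B/(f:ℝ))))
            * ((((e:ℝ))^2)⁻¹ * mn ((B/(f:ℝ))/(e:ℝ))) else 0) = 0 := by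
        intro e
        rw [if_neg (fun h => hf h.2)]
      calc (∑' (e : ℕ), ENNReal.ofReal (if 1 ≤ e ∧ 1 ≤ f then
          (4*((((f:ℝ))^2)⁻¹ * Vb (B/(f:ℝ))))
            * ((((e:ℝ))^2)⁻¹ * mn ((B/(f:ℝ))/(e:ℝ))) else 0))
          = ∑' (e : ℕ), ENNReal.ofReal 0 := tsum_congr (fun e => by rw [hz e])
      _ = 0 := by simp
      _ ≤ ENNReal.ofReal 0 := by simp
  refine le_trans (ENNReal.tsum_le_tsum step_f) ?_
  refine le_trans (tsum_ofReal_le (c := 4*(22*(1 + Real.log B)/B))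
    (fun f => ?_) (fun N => ?_)) (ENNReal.ofReal_le_ofReal ?_)
  · split_ifs with h
    · have hf0 : (0:ℝ) < (f:ℝ) := by exact_mod_cast h
      have := Wb_nonneg (B/(f:ℝ)) (by positivity)
      have := Vb_nonneg (B/(f:ℝ))
      positivity
    · exact le_rfl
  · have hpt : ∀ f : ℕ, (if 1 ≤ f then
        4*((((f:ℝ))^2)⁻¹ * (Wb (B/(f:ℝ)) * Vb (B/(f:ℝ)))) else 0)
        = 4 * (if 1 ≤ f then (((f:ℝ))^2)⁻¹ * (Wb (B/(f:ℝ)) * Vb (B/(f:ℝ))) else 0) := by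
      intro f; split_ifs <;> simp
    rw [Finset.sum_congr rfl (fun f _ => hpt f), ← Finset.mul_sum]
    have hR := RWV B hB N
    linarith
  · exact le_of_eq (by ring)

lemma gapBig_est (B : ℝ) (hB : 2 ≤ B) (g : ℕ) (hg : 4 ≤ g) :
    volume (Ev B 1 ∩ Ev B g) ≤ ENNReal.ofReal (392*(1 + Real.log B)^4/B^2) := by
  have hB0 : (0:ℝ) < B := by linarith
  have hL1 : (1:ℝ) ≤ 1 + Real.log B := by linarith [Real.log_nonneg (by linarith : (1:ℝ) ≤ B)]
  have hsub : Ev B 1 ∩ Ev B g ⊆ {x : ℝ | good x ∧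
      (∃ d e f r, wd (g-1) x = d :: e :: f :: r ∧ B ≤ (d:ℝ)*(e:ℝ)*(f:ℝ)) ∧
      gaussMap^[g-1] x ∈ Ev B 1} := by
    rintro x ⟨⟨hgx, h1⟩, ⟨_, h2⟩⟩
    have h12 : (1:ℕ)+1 = 2 := rfl
    have h13 : (1:ℕ)+2 = 3 := rfl
    rw [h12, h13] at h1
    obtain ⟨k, hk⟩ : ∃ k, g - 1 = k + 3 := ⟨g - 4, by omega⟩
    refine ⟨hgx, ⟨cfA 1 x, cfA 2 x, cfA 3 x, wd k (gaussMap^[3] x), ?_, h1⟩,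
      good_iter hgx (g-1), ?_⟩
    · rw [hk, wd_eq3]
    · have e1 : cfA 1 (gaussMap^[g-1] x) = cfA g x := by
        rw [← cfA_shift (g-1) 1 le_rfl x]
        congr 1
        omega
      have e2 : cfA (1+1) (gaussMap^[g-1] x) = cfA (g+1) x := by
        rw [← cfA_shift (g-1) (1+1) (by omega) x]
        congr 1
        omega
      have e3 : cfA (1+2) (gaussMap^[g-1] x) = cfA (g+2) x := by
        rw [← cfA_shift (g-1) (1+2) (by omega) x]
        congr 1
        omega
      rw [e1, e2, e3]
      exact h2
  refine le_trans (measure_mono hsub) ?_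
  have hmaster := master (g-1)
    (fun w => ∃ d e f r, w = d :: e :: f :: r ∧ B ≤ (d:ℝ)*(e:ℝ)*(f:ℝ))
    (Ev B 1) (Ev B 1) ?_
  · refine le_trans hmaster ?_
    have h1 := single_est B hB
    have h2 : volume (Ev B 1 ∩ Set.Ioo 0 1) ≤ ENNReal.ofReal (14*(1 + Real.log B)^2/B) :=
      le_trans (measure_mono Set.inter_subset_left) h1
    refine le_trans (mul_le_mul' (mul_le_mul' le_rfl h1) h2) ?_
    exact two_mul_ofReal_le (by positivity) (by positivity) (le_of_eq (by ring))
  · rintro y hy ⟨d, e, f, r, hwd, hprod⟩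
    obtain ⟨k, hk⟩ : ∃ k, g - 1 = k + 3 := ⟨g - 4, by omega⟩
    rw [hk, wd_eq3] at hwd
    simp only [List.cons.injEq] at hwd
    obtain ⟨hd, he, hf, -⟩ := hwd
    refine ⟨hy, ?_⟩
    have h12 : (1:ℕ)+1 = 2 := rfl
    have h13 : (1:ℕ)+2 = 3 := rfl
    rw [h12, h13, hd, he, hf]
    exact hprod

lemma shiftE (B : ℝ) (j k : ℕ) (hj : 1 ≤ j) (hjk : j < k) :
    volume (Ev B j ∩ Ev B k) ≤ 2 * volume (Ev B 1 ∩ Ev B (k-j+1)) := by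
  have hsub : Ev B j ∩ Ev B k ⊆ {x : ℝ | good x ∧ (fun _ => True) (wd (j-1) x) ∧
      gaussMap^[j-1] x ∈ (Ev B 1 ∩ Ev B (k-j+1))} := by
    rintro x ⟨⟨hgx, hj'⟩, ⟨_, hk'⟩⟩
    have key : ∀ m : ℕ, 1 ≤ m → cfA m (gaussMap^[j-1] x) = cfA (j-1+m) x :=
      fun m hm => (cfA_shift (j-1) m hm x).symm
    refine ⟨hgx, trivial, ⟨good_iter hgx (j-1), ?_⟩, ⟨good_iter hgx (j-1), ?_⟩⟩
    · have e1 : cfA 1 (gaussMap^[j-1] x) = cfA j x := by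
        rw [key 1 le_rfl]; congr 1; omega
      have e2 : cfA (1+1) (gaussMap^[j-1] x) = cfA (j+1) x := by
        rw [key (1+1) (by omega)]; congr 1; omega
      have e3 : cfA (1+2) (gaussMap^[j-1] x) = cfA (j+2) x := by
        rw [key (1+2) (by omega)]; congr 1; omega
      rw [e1, e2, e3]
      exact hj'
    · have e1 : cfA (k-j+1) (gaussMap^[j-1] x) = cfA k x := by
        rw [key (k-j+1) (by omega)]; congr 1; omega
      have e2 : cfA (k-j+1+1) (gaussMap^[j-1] x) = cfA (k+1) x := by
        rw [key (k-j+1+1) (by omega)]; congr 1; omega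
      have e3 : cfA (k-j+1+2) (gaussMap^[j-1] x) = cfA (k+2) x := by
        rw [key (k-j+1+2) (by omega)]; congr 1; omega
      rw [e1, e2, e3]
      exact hk'
  refine le_trans (measure_mono hsub) ?_
  refine le_trans (master (j-1) (fun _ => True) (Ev B 1 ∩ Ev B (k-j+1)) (Set.Ioo 0 1)
    (fun y hy _ => hy.1)) ?_
  rw [Real.volume_Ioo]
  norm_num
  exact mul_le_mul_right (measure_mono Set.inter_subset_left) 2

/-! ### Part F : assembly -/

lemma cfProd_three (j : ℕ) (x : ℝ) :
    cfProd 3 j x = cfA j x * cfA (j+1) x * cfA (j+2) x := by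
  rw [cfProd, show (3:ℕ) = 2+1 from rfl, Finset.prod_range_succ,
    show (2:ℕ) = 1+1 from rfl, Finset.prod_range_succ, Finset.prod_range_one]
  norm_num

lemma Dk_est (B : ℝ) (hB : 2 ≤ B) (k : ℕ) :
    volume (⋃ j ∈ Finset.Ico 1 k, (Ev B j ∩ Ev B k)) ≤
      ENNReal.ofReal ((k:ℝ) * (784*(1 + Real.log B)^4/B^2) + 240*(1 + Real.log B)/B) := by
  classical
  have hB0 : (0:ℝ) < B := by linarith
  have hL1 : (1:ℝ) ≤ 1 + Real.log B := by
    linarith [Real.log_nonneg (by linarith : (1:ℝ) ≤ B)]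
  have hL0 : (0:ℝ) < 1 + Real.log B := by linarith
  have hterm : ∀ j ∈ Finset.Ico 1 k, volume (Ev B j ∩ Ev B k) ≤
      ENNReal.ofReal (784*(1 + Real.log B)^4/B^2 + ((if j = k-1 then 64*(1 + Real.log B)/B else 0)
        + (if j = k-2 then 176*(1 + Real.log B)/B else 0))) := by
    intro j hj
    rw [Finset.mem_Ico] at hj
    obtain ⟨hj1, hjk⟩ := hj
    have hk2 : 2 ≤ k := by omega
    have hshift := shiftE B j k hj1 hjk
    have hnn1 : (0:ℝ) ≤ (if j = k-1 then 64*(1 + Real.log B)/B else 0) := by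
      split_ifs
      · exact div_nonneg (by nlinarith) hB0.le
      · exact le_rfl
    have hnn2 : (0:ℝ) ≤ (if j = k-2 then 176*(1 + Real.log B)/B else 0) := by
      split_ifs
      · exact div_nonneg (by nlinarith) hB0.le
      · exact le_rfl
    have hnn3 : (0:ℝ) ≤ 784*(1 + Real.log B)^4/B^2 := by positivity
    rcases (show k - j + 1 = 2 ∨ k - j + 1 = 3 ∨ 4 ≤ k - j + 1 by omega) with hgv | hgv | hgv
    · have hjeq : j = k-1 := by omega
      have hne : ¬ (j = k-2) := by omega
      rw [hgv] at hshift
      refine le_trans hshift (le_trans (mul_le_mul' le_rfl (gap2_est B hB)) ?_)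
      rw [← ofReal_two, ← ENNReal.ofReal_mul (by norm_num : (0:ℝ) ≤ 2)]
      apply ENNReal.ofReal_le_ofReal
      rw [if_pos hjeq, if_neg hne]
      have he : 2*(32*(1 + Real.log B)/B) = 64*(1 + Real.log B)/B := by ring
      linarith
    · have hjeq : j = k-2 := by omega
      have hne : ¬ (j = k-1) := by omega
      rw [hgv] at hshift
      refine le_trans hshift (le_trans (mul_le_mul' le_rfl (gap3_est B hB)) ?_)
      rw [← ofReal_two, ← ENNReal.ofReal_mul (by norm_num : (0:ℝ) ≤ 2)]
      apply ENNReal.ofReal_le_ofReal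
      rw [if_neg hne, if_pos hjeq]
      have he : 2*(88*(1 + Real.log B)/B) = 176*(1 + Real.log B)/B := by ring
      linarith
    · refine le_trans hshift (le_trans (mul_le_mul' le_rfl (gapBig_est B hB _ hgv)) ?_)
      rw [← ofReal_two, ← ENNReal.ofReal_mul (by norm_num : (0:ℝ) ≤ 2)]
      apply ENNReal.ofReal_le_ofReal
      have he : 2*(392*(1 + Real.log B)^4/B^2) = 784*(1 + Real.log B)^4/B^2 := by ring
      linarith
  have hnn : ∀ j : ℕ, (0:ℝ) ≤ 784*(1 + Real.log B)^4/B^2 +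
      ((if j = k-1 then 64*(1 + Real.log B)/B else 0)
        + (if j = k-2 then 176*(1 + Real.log B)/B else 0)) := by
    intro j
    have hnn1 : (0:ℝ) ≤ (if j = k-1 then 64*(1 + Real.log B)/B else 0) := by
      split_ifs
      · exact div_nonneg (by nlinarith) hB0.le
      · exact le_rfl
    have hnn2 : (0:ℝ) ≤ (if j = k-2 then 176*(1 + Real.log B)/B else 0) := by
      split_ifs
      · exact div_nonneg (by nlinarith) hB0.le
      · exact le_rfl
    have hnn3 : (0:ℝ) ≤ 784*(1 + Real.log B)^4/B^2 := by positivity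
    linarith
  refine le_trans (measure_biUnion_finset_le _ _) ?_
  refine le_trans (Finset.sum_le_sum hterm) ?_
  rw [← ENNReal.ofReal_sum_of_nonneg (fun j _ => hnn j)]
  apply ENNReal.ofReal_le_ofReal
  rw [Finset.sum_add_distrib, Finset.sum_add_distrib, Finset.sum_const, nsmul_eq_mul]
  have hcard : ((Finset.Ico 1 k).card : ℝ) ≤ (k:ℝ) := by
    rw [Nat.card_Ico]
    exact_mod_cast Nat.sub_le k 1
  have hsum1 : (∑ j ∈ Finset.Ico 1 k, (if j = k-1 then 64*(1 + Real.log B)/B else 0))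
      ≤ 64*(1 + Real.log B)/B := by
    rw [Finset.sum_ite_eq' (Finset.Ico 1 k) (k-1) (fun _ => 64*(1 + Real.log B)/B)]
    split_ifs
    · exact le_rfl
    · exact div_nonneg (by nlinarith) hB0.le
  have hsum2 : (∑ j ∈ Finset.Ico 1 k, (if j = k-2 then 176*(1 + Real.log B)/B else 0))
      ≤ 176*(1 + Real.log B)/B := by
    rw [Finset.sum_ite_eq' (Finset.Ico 1 k) (k-2) (fun _ => 176*(1 + Real.log B)/B)]
    split_ifs
    · exact le_rfl
    · exact div_nonneg (by nlinarith) hB0.le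
  have hA : (0:ℝ) ≤ 784*(1 + Real.log B)^4/B^2 := by positivity
  have hcA := mul_le_mul_of_nonneg_right hcard hA
  have hsplit : 64*(1 + Real.log B)/B + 176*(1 + Real.log B)/B
      = 240*(1 + Real.log B)/B := by ring
  linarith

/-- Convergence part for ℓ = 3: if ∑ (n·(log φ n)⁴/φ(n)² + log φ(n)/φ(n)) < ∞,
then F₃(φ) is Lebesgue-null. -/
theorem stmt_0 (φ : ℕ → ℝ) (hmono : Monotone φ) (hφ : ∀ n, 2 ≤ φ n)
    (hsum : Summable fun n : ℕ =>
      (n : ℝ) * (Real.log (φ n)) ^ 4 / (φ n) ^ 2 + Real.log (φ n) / φ n) :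
    volume (Fset 3 φ) = 0 := by
  classical
  have hφ0 : ∀ n, (0:ℝ) < φ n := fun n => lt_of_lt_of_le two_pos (hφ n)
  have hlogφ : ∀ n, (0:ℝ) < Real.log (φ n) := fun n =>
    Real.log_pos (by linarith [hφ n])
  -- the D sets
  have hDk : ∀ k : ℕ, volume (⋃ j ∈ Finset.Ico 1 k, (Ev (φ k) j ∩ Ev (φ k) k)) ≤
      ENNReal.ofReal (31360 * ((k:ℝ) * (Real.log (φ k))^4/(φ k)^2 + Real.log (φ k)/(φ k))) := by
    intro k
    refine le_trans (Dk_est (φ k) (hφ k) k) (ENNReal.ofReal_le_ofReal ?_)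
    have hB := hφ k
    have hB0 := hφ0 k
    have hl := hlogφ k
    have hlog2 : (0.6931:ℝ) ≤ Real.log (φ k) := by
      have h2 : (0.6931:ℝ) ≤ Real.log 2 := by
        have := Real.log_two_gt_d9
        linarith
      have := Real.log_le_log two_pos (hφ k)
      linarith
    have hL : 1 + Real.log (φ k) ≤ 2.5 * Real.log (φ k) := by nlinarith
    have hL0 : (0:ℝ) ≤ 1 + Real.log (φ k) := by linarith
    have h4 : (1 + Real.log (φ k))^4 ≤ 40*(Real.log (φ k))^4 := by
      calc (1 + Real.log (φ k))^4 ≤ (2.5 * Real.log (φ k))^4 := by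
            apply pow_le_pow_left₀ hL0 hL
      _ ≤ 40*(Real.log (φ k))^4 := by
            have h25 : (2.5:ℝ)^4 = 39.0625 := by norm_num
            have hl4 : (0:ℝ) ≤ (Real.log (φ k))^4 := by positivity
            calc (2.5 * Real.log (φ k))^4 = 39.0625 * (Real.log (φ k))^4 := by ring
            _ ≤ 40*(Real.log (φ k))^4 := by linarith
    have e1 : (k:ℝ) * (784*(1 + Real.log (φ k))^4/(φ k)^2)
        ≤ 31360 * ((k:ℝ) * (Real.log (φ k))^4/(φ k)^2) := by
      have hk0 : (0:ℝ) ≤ (k:ℝ) := Nat.cast_nonneg k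
      have hB2 : (0:ℝ) < (φ k)^2 := by positivity
      have hrw1 : (k:ℝ) * (784*(1 + Real.log (φ k))^4/(φ k)^2)
          = ((k:ℝ) * (784*(1 + Real.log (φ k))^4))/(φ k)^2 := by ring
      have hrw2 : 31360 * ((k:ℝ) * (Real.log (φ k))^4/(φ k)^2)
          = ((k:ℝ) * (31360*(Real.log (φ k))^4))/(φ k)^2 := by ring
      rw [hrw1, hrw2]
      apply (div_le_div_iff_of_pos_right hB2).mpr
      apply mul_le_mul_of_nonneg_left ?_ hk0
      linarith
    have e2 : 240*(1 + Real.log (φ k))/(φ k) ≤ 31360 * (Real.log (φ k)/(φ k)) := by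
      have hrw : 31360 * (Real.log (φ k)/(φ k)) = (31360 * Real.log (φ k))/(φ k) := by ring
      have hrw2 : 240*(1 + Real.log (φ k))/(φ k) = (240*(1 + Real.log (φ k)))/(φ k) := by ring
      rw [hrw, hrw2]
      apply (div_le_div_iff_of_pos_right hB0).mpr
      nlinarith
    have hsplit : 31360 * ((k:ℝ) * (Real.log (φ k))^4/(φ k)^2 + Real.log (φ k)/(φ k))
        = 31360 * ((k:ℝ) * (Real.log (φ k))^4/(φ k)^2) + 31360 * (Real.log (φ k)/(φ k)) := by
      ring
    have e1' : (k:ℝ) * (784*(1 + Real.log (φ k))^4/(φ k)^2)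
        = (k:ℝ) * (784*(1 + Real.log (φ k))^4)/(φ k)^2 := by ring
    linarith
  -- summability
  have hgnn : ∀ k : ℕ, (0:ℝ) ≤ 31360 * ((k:ℝ) * (Real.log (φ k))^4/(φ k)^2
      + Real.log (φ k)/(φ k)) := by
    intro k
    have h1 : (0:ℝ) ≤ (k:ℝ) * (Real.log (φ k))^4/(φ k)^2 := by positivity
    have h2 : (0:ℝ) ≤ Real.log (φ k)/(φ k) := div_nonneg (hlogφ k).le (hφ0 k).le
    linarith
  have hgsum : Summable (fun k : ℕ => 31360 * ((k:ℝ) * (Real.log (φ k))^4/(φ k)^2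
      + Real.log (φ k)/(φ k))) := hsum.mul_left 31360
  have htsum : (∑' k : ℕ, volume (⋃ j ∈ Finset.Ico 1 k, (Ev (φ k) j ∩ Ev (φ k) k))) ≠ ⊤ := by
    apply ne_top_of_le_ne_top ?_ (ENNReal.tsum_le_tsum hDk)
    rw [← ENNReal.ofReal_tsum_of_nonneg hgnn hgsum]
    exact ENNReal.ofReal_ne_top
  have hnull : volume {x : ℝ | ∃ᶠ k in atTop,
      x ∈ ⋃ j ∈ Finset.Ico 1 k, (Ev (φ k) j ∩ Ev (φ k) k)} = 0 :=
    measure_setOf_frequently_eq_zero htsum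
  apply measure_mono_null ?_ hnull
  rintro x ⟨hx01, hxirr, hxF⟩
  have hgood : good x := ⟨hx01, hxirr⟩
  rw [Set.mem_setOf_eq, Filter.frequently_atTop]
  intro N
  -- φ is unbounded
  have hunb : ∀ C : ℝ, ∃ m, C < φ m := by
    by_contra hcon
    push_neg at hcon
    obtain ⟨C, hC⟩ := hcon
    have hC2 : (2:ℝ) ≤ C := le_trans (hφ 0) (hC 0)
    have hpos : (0:ℝ) < Real.log 2 / C := by
      apply div_pos (Real.log_pos one_lt_two) (by linarith)
    have hlb : ∀ n : ℕ, Real.log 2 / C ≤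
        (n:ℝ) * (Real.log (φ n))^4/(φ n)^2 + Real.log (φ n)/(φ n) := by
      intro n
      have h1 : (0:ℝ) ≤ (n:ℝ) * (Real.log (φ n))^4/(φ n)^2 := by positivity
      have h2 : Real.log 2 / C ≤ Real.log (φ n)/(φ n) := by
        apply div_le_div₀ (hlogφ n).le ?_ (hφ0 n) (hC n)
        exact Real.log_le_log two_pos (hφ n)
      linarith
    obtain ⟨n, hn⟩ := (hsum.tendsto_atTop_zero.eventually (gt_mem_nhds hpos)).exists
    exact absurd (hlb n) (not_le.2 hn)
  set V : ℝ := ∑ k' ∈ Finset.range N, ((cfProd 3 k' x : ℕ) : ℝ) with hV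
  obtain ⟨m, hm⟩ := hunb V
  obtain ⟨n, hnN, j, k, hj1, hjk, hkn, hPj, hPk⟩ := hxF (max N m)
  have hφn : V < φ n := lt_of_lt_of_le hm (hmono (le_trans (le_max_right _ _) hnN))
  have hkN : N ≤ k := by
    by_contra hlt
    push_neg at hlt
    have hle : ((cfProd 3 k x : ℕ):ℝ) ≤ V := by
      apply Finset.single_le_sum (f := fun k' => ((cfProd 3 k' x : ℕ):ℝ))
        (fun i _ => by positivity) (Finset.mem_range.2 hlt)
    linarith
  refine ⟨k, hkN, ?_⟩
  apply Set.mem_biUnion (Finset.mem_Ico.2 ⟨hj1, hjk⟩)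
  have hφk : φ k ≤ φ n := hmono hkn
  constructor
  · refine ⟨hgood, ?_⟩
    calc φ k ≤ φ n := hφk
    _ ≤ (cfProd 3 j x : ℝ) := hPj
    _ = (cfA j x : ℝ) * (cfA (j+1) x : ℝ) * (cfA (j+2) x : ℝ) := by
        rw [cfProd_three]
        push_cast
        ring
  · refine ⟨hgood, ?_⟩
    calc φ k ≤ φ n := hφk
    _ ≤ (cfProd 3 k x : ℝ) := hPk
    _ = (cfA k x : ℝ) * (cfA (k+1) x : ℝ) * (cfA (k+2) x : ℝ) := by
        rw [cfProd_three]
        push_cast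
        ring
end

section
/- For every j ∈ ℕ with j ≥ 1 there exist constants c₁, c₂ > 0 and M₀ > 1, depending only on j, such that for all real M ≥ M₀: c₁·(log M)^{j−1}/M ≤ ∑ 1/(a²·b₁²·b₂²⋯b_j²·c²) ≤ c₂·(log M)^{j−1}/M, where the sum ranges over all tuples (a, b₁, …, b_j, c) of positive integers satisfying a·b₁·b₂⋯b_j ≥ M and b₁·b₂⋯b_j·c ≥ M. -/
open MeasureTheory Filter Set

/-- The series ∑ 1/(a²·b₁²⋯b_j²·c²) over positive integer tuples with
a·b₁⋯b_j ≥ M and b₁⋯b_j·c ≥ M. -/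
noncomputable def overlapSum (j : ℕ) (M : ℝ) : ℝ :=
  ∑' p : {p : ℕ × (Fin j → ℕ) × ℕ //
      0 < p.1 ∧ (∀ i, 0 < p.2.1 i) ∧ 0 < p.2.2 ∧
      M ≤ ((p.1 * ∏ i, p.2.1 i : ℕ) : ℝ) ∧
      M ≤ (((∏ i, p.2.1 i) * p.2.2 : ℕ) : ℝ)},
    (1 : ℝ) /
      ((p.1.1 : ℝ) ^ 2 * (∏ i, (p.1.2.1 i : ℝ) ^ 2) * (p.1.2.2 : ℝ) ^ 2)


open scoped ENNReal Classical
open Filter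


noncomputable def qe (n : ℕ) : ℝ≥0∞ := ((n : ℝ≥0∞) ^ 2)⁻¹

noncomputable def rtail (n : ℕ) : ℝ := ∑' a : ℕ, if n ≤ a then ((a : ℝ) ^ 2)⁻¹ else 0

lemma rtail_summand_summable (n : ℕ) :
    Summable (fun a : ℕ => if n ≤ a then ((a : ℝ) ^ 2)⁻¹ else 0) := by
  apply Summable.of_nonneg_of_le (fun a => by positivity) (fun a => ?_)
    (Real.summable_one_div_nat_pow.mpr (by norm_num : 1 < 2))
  split
  · rw [one_div]
  · positivity

lemma rtail_le (n : ℕ) (hn : 0 < n) : rtail n ≤ 2 / n := by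
  have hs := rtail_summand_summable n
  have := hs.hasSum.tendsto_sum_nat
  refine le_of_tendsto this (Filter.Eventually.of_forall fun m => ?_)
  have : (∑ a ∈ Finset.range m, if n ≤ a then ((a : ℝ) ^ 2)⁻¹ else 0)
      = ∑ a ∈ Finset.Ioo (n-1) m, ((a : ℝ) ^ 2)⁻¹ := by
    rw [← Finset.sum_filter]
    congr 1
    ext a
    simp only [Finset.mem_filter, Finset.mem_Ioo, Finset.mem_range]
    omega
  rw [this]
  calc ∑ a ∈ Finset.Ioo (n-1) m, ((a : ℝ) ^ 2)⁻¹ ≤ 2 / ((n-1 : ℕ) + 1) := by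
        have := sum_Ioo_inv_sq_le (α := ℝ) (n-1) m
        simpa using this
    _ = 2 / n := by rw [Nat.cast_sub hn, Nat.cast_one]; ring_nf

lemma sum_Ico_inv_sq_ge (n : ℕ) (hn : 0 < n) :
    ∀ m, n ≤ m → (n : ℝ)⁻¹ - (m : ℝ)⁻¹ ≤ ∑ a ∈ Finset.Ico n m, ((a : ℝ) ^ 2)⁻¹ := by
  intro m
  refine Nat.le_induction ?_ ?_ m
  · simp
  · intro m hm IH
    rw [Finset.sum_Ico_succ_top hm]
    have hm0 : (0:ℝ) < m := by exact_mod_cast hn.trans_le hm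
    have key : (m : ℝ)⁻¹ - ((m+1 : ℕ) : ℝ)⁻¹ ≤ ((m : ℝ) ^ 2)⁻¹ := by
      push_cast
      rw [inv_sub_inv (ne_of_gt hm0) (by positivity), div_le_iff₀ (by positivity),
        inv_mul_eq_div, le_div_iff₀ (by positivity)]
      nlinarith
    linarith

lemma le_rtail (n : ℕ) (hn : 0 < n) : (n : ℝ)⁻¹ ≤ rtail n := by
  have hs := rtail_summand_summable n
  have h1 := hs.hasSum.tendsto_sum_nat
  have h2 : Tendsto (fun m : ℕ => (n : ℝ)⁻¹ - (m : ℝ)⁻¹) atTop (nhds ((n:ℝ)⁻¹ - 0)) :=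
    (tendsto_const_nhds).sub tendsto_inv_atTop_nhds_zero_nat
  rw [sub_zero] at h2
  refine le_of_tendsto_of_tendsto h2 h1 ?_
  filter_upwards [eventually_ge_atTop n] with m hmn
  refine (sum_Ico_inv_sq_ge n hn m hmn).trans (le_of_eq ?_)
  rw [← Finset.sum_filter]
  refine Finset.sum_congr ?_ (fun _ _ => rfl)
  ext a
  simp [Finset.mem_Ico, Finset.mem_range, and_comm]

noncomputable def Stail (n : ℕ) : ℝ≥0∞ := ∑' a : ℕ, if n ≤ a then qe a else 0

lemma qe_eq_ofReal (a : ℕ) (ha : 0 < a) : qe a = ENNReal.ofReal ((a : ℝ) ^ 2)⁻¹ := by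
  rw [qe, ENNReal.ofReal_inv_of_pos (by positivity), ENNReal.ofReal_pow (by positivity)]
  simp

lemma Stail_eq (n : ℕ) (hn : 0 < n) : Stail n = ENNReal.ofReal (rtail n) := by
  rw [rtail, ENNReal.ofReal_tsum_of_nonneg (fun a => by positivity) (rtail_summand_summable n)]
  refine tsum_congr fun a => ?_
  by_cases h : n ≤ a
  · simp only [h, if_true]
    exact qe_eq_ofReal a (hn.trans_le h)
  · simp [h]

lemma Stail_le (n : ℕ) (hn : 0 < n) : Stail n ≤ ENNReal.ofReal (2 / n) :=
  (Stail_eq n hn).le.trans (ENNReal.ofReal_le_ofReal (rtail_le n hn))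

lemma le_Stail (n : ℕ) (hn : 0 < n) : ENNReal.ofReal ((n : ℝ)⁻¹) ≤ Stail n := by
  rw [Stail_eq n hn]
  exact ENNReal.ofReal_le_ofReal (le_rtail n hn)

noncomputable def mu (M : ℝ) (B : ℕ) : ℝ≥0∞ := ENNReal.ofReal (min 1 ((B : ℝ) / M))

noncomputable def SB (M : ℝ) (B : ℕ) : ℝ≥0∞ := Stail (max 1 ⌈M / (B : ℝ)⌉₊)

noncomputable def V (j : ℕ) (M : ℝ) : ℝ≥0∞ :=
  ∑' b : Fin j → ℕ,
    if ∀ i, 0 < b i then (∏ i, qe (b i)) * (mu M (∏ i, b i)) ^ 2 else 0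

noncomputable def Ae (j : ℕ) (M : ℝ) : ℝ≥0∞ :=
  ∑' b : Fin j → ℕ,
    if ∀ i, 0 < b i then (∏ i, qe (b i)) * (SB M (∏ i, b i)) ^ 2 else 0

-- comparison between SB and mu
lemma mu_le_SB (M : ℝ) (B : ℕ) (hM : 1 ≤ M) (hB : 0 < B) :
    mu M B ≤ 2 * SB M B := by
  set x : ℝ := M / B with hx
  have hx0 : 0 < x := div_pos (by linarith) (by exact_mod_cast hB)
  set n0 : ℕ := max 1 ⌈x⌉₊ with hn0
  have hn0pos : 0 < n0 := le_max_left 1 _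
  have hle : (n0 : ℝ) ≤ 2 * max 1 x := by
    rcases le_or_gt x 1 with h | h
    · have : ⌈x⌉₊ ≤ 1 := Nat.ceil_le.mpr (by simpa using h)
      have : n0 = 1 := by omega
      rw [this]
      have : (1:ℝ) ≤ max 1 x := le_max_left 1 x
      push_cast; linarith
    · have h1 : (⌈x⌉₊ : ℝ) < x + 1 := Nat.ceil_lt_add_one hx0.le
      have h2 : (n0 : ℝ) ≤ max 1 (⌈x⌉₊ : ℝ) := by
        rcases max_cases 1 ⌈x⌉₊ with ⟨h', _⟩ | ⟨h', _⟩ <;> rw [hn0, h'] <;> push_cast <;>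
          simp [le_max_left, le_max_right]
      have h3 : max 1 x = x := max_eq_right h.le
      rw [h3]
      have : max 1 (⌈x⌉₊ : ℝ) ≤ x + 1 := by
        apply max_le (by linarith) h1.le
      linarith
  have key : min 1 ((B:ℝ)/M) ≤ 2 * (n0:ℝ)⁻¹ := by
    have hBM : (B:ℝ)/M = x⁻¹ := by rw [hx, inv_div]
    rw [hBM]
    have hmax : (0:ℝ) < max 1 x := lt_of_lt_of_le one_pos (le_max_left _ _)
    have : min 1 x⁻¹ = (max 1 x)⁻¹ := by
      rcases le_total x 1 with h | h
      · rw [max_eq_left h, min_eq_left ((one_le_inv₀ hx0).mpr h), inv_one]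
      · rw [max_eq_right h, min_eq_right ((inv_le_one₀ hx0).mpr h)]
    rw [this]
    have hn0' : (0:ℝ) < n0 := by exact_mod_cast hn0pos
    calc (max 1 x)⁻¹ ≤ 2 / (n0:ℝ) := by
          rw [le_div_iff₀ hn0', inv_mul_eq_div, div_le_iff₀ hmax]
          linarith
      _ = 2 * (n0:ℝ)⁻¹ := by rw [div_eq_mul_inv]
  calc mu M B = ENNReal.ofReal (min 1 ((B:ℝ)/M)) := rfl
    _ ≤ ENNReal.ofReal (2 * (n0:ℝ)⁻¹) := ENNReal.ofReal_le_ofReal key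
    _ = 2 * ENNReal.ofReal ((n0:ℝ)⁻¹) := by
          rw [ENNReal.ofReal_mul (by norm_num), ENNReal.ofReal_ofNat]
    _ ≤ 2 * Stail n0 := by gcongr; exact le_Stail n0 hn0pos
    _ = 2 * SB M B := rfl

lemma SB_le_mu (M : ℝ) (B : ℕ) (hM : 1 ≤ M) (hB : 0 < B) :
    SB M B ≤ 2 * mu M B := by
  set x : ℝ := M / B with hx
  have hx0 : 0 < x := div_pos (by linarith) (by exact_mod_cast hB)
  set n0 : ℕ := max 1 ⌈x⌉₊ with hn0
  have hn0pos : 0 < n0 := le_max_left 1 _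
  have hge : max 1 x ≤ (n0 : ℝ) := by
    apply max_le
    · exact_mod_cast hn0pos
    · exact (Nat.le_ceil x).trans (by exact_mod_cast le_max_right 1 ⌈x⌉₊)
  have key : 2 / (n0:ℝ) ≤ 2 * min 1 ((B:ℝ)/M) := by
    have hBM : (B:ℝ)/M = x⁻¹ := by rw [hx, inv_div]
    rw [hBM]
    have hmax : (0:ℝ) < max 1 x := lt_of_lt_of_le one_pos (le_max_left _ _)
    have hmin : min 1 x⁻¹ = (max 1 x)⁻¹ := by
      rcases le_total x 1 with h | h
      · rw [max_eq_left h, min_eq_left ((one_le_inv₀ hx0).mpr h), inv_one]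
      · rw [max_eq_right h, min_eq_right ((inv_le_one₀ hx0).mpr h)]
    rw [hmin, div_eq_mul_inv]
    have hn0' : (0:ℝ) < n0 := by exact_mod_cast hn0pos
    gcongr
  calc SB M B = Stail n0 := rfl
    _ ≤ ENNReal.ofReal (2 / n0) := Stail_le n0 hn0pos
    _ ≤ ENNReal.ofReal (2 * min 1 ((B:ℝ)/M)) := ENNReal.ofReal_le_ofReal key
    _ = 2 * mu M B := by
          rw [ENNReal.ofReal_mul (by norm_num), ENNReal.ofReal_ofNat]; rfl

lemma Ae_le_V (j : ℕ) (M : ℝ) (hM : 1 ≤ M) : Ae j M ≤ 4 * V j M := by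
  rw [Ae, V, ← ENNReal.tsum_mul_left]
  refine Summable.tsum_le_tsum (fun b => ?_) ENNReal.summable ENNReal.summable
  by_cases h : ∀ i, 0 < b i
  · rw [if_pos h, if_pos h]
    have hB : 0 < ∏ i, b i := Finset.prod_pos fun i _ => h i
    have := SB_le_mu M (∏ i, b i) hM hB
    calc (∏ i, qe (b i)) * SB M (∏ i, b i) ^ 2
        ≤ (∏ i, qe (b i)) * (2 * mu M (∏ i, b i)) ^ 2 := by gcongr
      _ = 4 * ((∏ i, qe (b i)) * mu M (∏ i, b i) ^ 2) := by ring
  · simp [h]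

lemma V_le_Ae (j : ℕ) (M : ℝ) (hM : 1 ≤ M) : V j M ≤ 4 * Ae j M := by
  rw [Ae, V, ← ENNReal.tsum_mul_left]
  refine Summable.tsum_le_tsum (fun b => ?_) ENNReal.summable ENNReal.summable
  by_cases h : ∀ i, 0 < b i
  · rw [if_pos h, if_pos h]
    have hB : 0 < ∏ i, b i := Finset.prod_pos fun i _ => h i
    have := mu_le_SB M (∏ i, b i) hM hB
    calc (∏ i, qe (b i)) * mu M (∏ i, b i) ^ 2
        ≤ (∏ i, qe (b i)) * (2 * SB M (∏ i, b i)) ^ 2 := by gcongr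
      _ = 4 * ((∏ i, qe (b i)) * SB M (∏ i, b i) ^ 2) := by ring
  · simp [h]

lemma V_succ (j : ℕ) (M : ℝ) :
    V (j+1) M = ∑' n : ℕ, if 0 < n then qe n * V j (M / n) else 0 := by
  rw [V, ← Equiv.tsum_eq (Fin.consEquiv (fun _ : Fin (j+1) => ℕ)), ENNReal.tsum_prod']
  refine tsum_congr fun n => ?_
  have hcons : ∀ t : Fin j → ℕ,
      (Fin.consEquiv (fun _ : Fin (j+1) => ℕ)) (n, t) = Fin.cons (α := fun _ : Fin (j+1) => ℕ) n t := fun t => rfl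
  by_cases hn : 0 < n
  · rw [if_pos hn, V, ← ENNReal.tsum_mul_left]
    refine tsum_congr fun t => ?_
    rw [hcons]
    have hcond : (∀ i : Fin (j+1), 0 < Fin.cons (α := fun _ : Fin (j+1) => ℕ) n t i) ↔ (0 < n ∧ ∀ i, 0 < t i) := by
      rw [Fin.forall_fin_succ]
      simp [Fin.cons_zero, Fin.cons_succ]
    have hprod1 : (∏ i : Fin (j+1), qe (Fin.cons (α := fun _ : Fin (j+1) => ℕ) n t i)) = qe n * ∏ i, qe (t i) := by
      rw [Fin.prod_univ_succ]
      simp [Fin.cons_zero, Fin.cons_succ]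
    have hprod2 : (∏ i : Fin (j+1), Fin.cons (α := fun _ : Fin (j+1) => ℕ) n t i) = n * ∏ i, t i := by
      rw [Fin.prod_univ_succ]
      simp [Fin.cons_zero, Fin.cons_succ]
    have hmu : mu M (n * ∏ i, t i) = mu (M / n) (∏ i, t i) := by
      rw [mu, mu]
      congr 2
      rw [div_div_eq_mul_div]
      push_cast
      ring
    by_cases ht : ∀ i, 0 < t i
    · rw [if_pos (hcond.mpr ⟨hn, ht⟩), if_pos ht, hprod1, hprod2, hmu]
      ring
    · rw [if_neg (fun h => ht (hcond.mp h).2), if_neg ht, mul_zero]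
  · rw [if_neg hn]
    refine (tsum_congr fun t => ?_).trans tsum_zero
    rw [hcons]
    refine if_neg (fun h => hn ?_)
    have := h 0
    rwa [Fin.cons_zero] at this

lemma V_zero (M : ℝ) : V 0 M = (mu M 1) ^ 2 := by
  rw [V]
  rw [tsum_eq_single (fun i : Fin 0 => i.elim0) ?_]
  · rw [if_pos (fun i => i.elim0)]
    simp
  · intro b' hb'
    exact absurd (funext fun i => i.elim0) hb'

lemma mu_le_one (M : ℝ) (B : ℕ) : mu M B ≤ 1 := by
  rw [mu, ← ENNReal.ofReal_one]
  exact ENNReal.ofReal_le_ofReal (min_le_left _ _)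

lemma Stail_one_le : Stail 1 ≤ 2 := by
  refine (Stail_le 1 one_pos).trans ?_
  rw [Nat.cast_one]
  norm_num

lemma V_le_two_pow (j : ℕ) (M : ℝ) : V j M ≤ 2 ^ j := by
  induction j generalizing M with
  | zero =>
    rw [V_zero]
    calc (mu M 1) ^ 2 ≤ 1 ^ 2 := by gcongr; exact mu_le_one M 1
      _ = 2 ^ 0 := by norm_num
  | succ j ih =>
    rw [V_succ]
    calc (∑' n : ℕ, if 0 < n then qe n * V j (M / n) else 0)
        ≤ ∑' n : ℕ, (if 0 < n then qe n else 0) * 2 ^ j := by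
          refine Summable.tsum_le_tsum (fun n => ?_) ENNReal.summable ENNReal.summable
          by_cases hn : 0 < n
          · rw [if_pos hn, if_pos hn]
            exact mul_le_mul_right (ih (M / n)) _
          · rw [if_neg hn, if_neg hn, zero_mul]
      _ = Stail 1 * 2 ^ j := by
            rw [ENNReal.tsum_mul_right]
            congr 1
      _ ≤ 2 * 2 ^ j := mul_le_mul_left Stail_one_le _
      _ = 2 ^ (j+1) := by ring

lemma mu_div_one (M : ℝ) (n : ℕ) : mu (M / n) 1 = ENNReal.ofReal (min 1 ((n : ℝ) / M)) := by
  rw [mu, Nat.cast_one, one_div_div]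

lemma qe_mul_ofReal_sq (n : ℕ) (hn : 0 < n) (M : ℝ) (hM : 0 < M) :
    qe n * (ENNReal.ofReal ((n : ℝ) / M)) ^ 2 = ENNReal.ofReal (1 / M ^ 2) := by
  have hn' : (0:ℝ) < n := by exact_mod_cast hn
  rw [qe_eq_ofReal n hn, ← ENNReal.ofReal_pow (by positivity), ← ENNReal.ofReal_mul (by positivity)]
  congr 1
  field_simp

lemma V_one_upper (M : ℝ) (hM : 2 ≤ M) : V 1 M ≤ ENNReal.ofReal (3 / M) := by
  have hM0 : (0:ℝ) < M := by linarith
  set K := ⌊M⌋₊ with hK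
  have hKM : (K : ℝ) ≤ M := Nat.floor_le hM0.le
  have hMK : M < (K : ℝ) + 1 := Nat.lt_floor_add_one M
  rw [V_succ 0 M]
  have hle : ∀ n : ℕ, (if 0 < n then qe n * V 0 (M / n) else 0)
      ≤ (if 0 < n ∧ n ≤ K then ENNReal.ofReal (1 / M ^ 2) else 0)
        + (if K + 1 ≤ n then qe n else 0) := by
    intro n
    by_cases hn : 0 < n
    · rcases le_or_gt n K with h | h
      · rw [if_pos hn, if_pos ⟨hn, h⟩]
        refine le_trans ?_ (le_add_of_nonneg_right (zero_le))
        rw [V_zero, mu_div_one]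
        calc qe n * ENNReal.ofReal (min 1 ((n:ℝ)/M)) ^ 2
            ≤ qe n * ENNReal.ofReal ((n:ℝ)/M) ^ 2 := by
              gcongr
              exact min_le_right _ _
          _ = ENNReal.ofReal (1 / M ^ 2) := qe_mul_ofReal_sq n hn M hM0
      · rw [if_pos hn, if_pos (by omega : K + 1 ≤ n), if_neg (by omega)]
        refine le_trans ?_ (le_add_of_nonneg_left (zero_le))
        calc qe n * V 0 (M / n) ≤ qe n * 1 := by
              refine mul_le_mul_right ?_ _
              rw [V_zero]
              calc (mu (M/n) 1) ^ 2 ≤ 1 ^ 2 := by gcongr; exact mu_le_one _ _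
                _ = 1 := one_pow 2
          _ = qe n := mul_one _
    · rw [if_neg hn]
      exact zero_le
  calc (∑' n : ℕ, if 0 < n then qe n * V 0 (M / n) else 0)
      ≤ ∑' n : ℕ, ((if 0 < n ∧ n ≤ K then ENNReal.ofReal (1 / M ^ 2) else 0)
        + (if K + 1 ≤ n then qe n else 0)) :=
        Summable.tsum_le_tsum hle ENNReal.summable ENNReal.summable
    _ = (∑' n : ℕ, if 0 < n ∧ n ≤ K then ENNReal.ofReal (1 / M ^ 2) else 0)
        + ∑' n : ℕ, if K + 1 ≤ n then qe n else 0 := ENNReal.tsum_add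
    _ ≤ ENNReal.ofReal (1 / M) + ENNReal.ofReal (2 / M) := by
        gcongr
        · rw [tsum_eq_sum (s := Finset.Icc 1 K)
            (fun n hn => if_neg (fun hc => hn (Finset.mem_Icc.mpr ⟨hc.1, hc.2⟩)))]
          have : ∀ n ∈ Finset.Icc 1 K, (if 0 < n ∧ n ≤ K then ENNReal.ofReal (1 / M ^ 2) else 0)
              = ENNReal.ofReal (1 / M ^ 2) := by
            intro n hn
            rw [Finset.mem_Icc] at hn
            exact if_pos ⟨hn.1, hn.2⟩
          rw [Finset.sum_congr rfl this, Finset.sum_const, Nat.card_Icc]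
          simp only [Nat.add_sub_cancel, nsmul_eq_mul]
          calc (K : ℝ≥0∞) * ENNReal.ofReal (1 / M ^ 2)
              = ENNReal.ofReal ((K : ℝ) * (1 / M ^ 2)) := by
                rw [ENNReal.ofReal_mul (by positivity), ENNReal.ofReal_natCast]
            _ ≤ ENNReal.ofReal (1 / M) := by
                apply ENNReal.ofReal_le_ofReal
                rw [mul_one_div, div_le_div_iff₀ (by positivity) hM0]
                nlinarith
        · have : (∑' n : ℕ, if K + 1 ≤ n then qe n else 0) = Stail (K+1) := rfl
          rw [this]
          refine (Stail_le (K+1) (by omega)).trans (ENNReal.ofReal_le_ofReal ?_)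
          apply div_le_div_of_nonneg_left (by norm_num) hM0
          push_cast
          linarith
    _ = ENNReal.ofReal (3 / M) := by
        rw [← ENNReal.ofReal_add (by positivity) (by positivity)]
        congr 1
        ring

lemma V_one_lower (M : ℝ) (hM : 2 ≤ M) : ENNReal.ofReal (1 / (2 * M)) ≤ V 1 M := by
  have hM0 : (0:ℝ) < M := by linarith
  set K := ⌊M⌋₊ with hK
  have hKM : (K : ℝ) ≤ M := Nat.floor_le hM0.le
  have hMK : M < (K : ℝ) + 1 := Nat.lt_floor_add_one M
  have hK2 : 2 ≤ K := Nat.le_floor (by exact_mod_cast hM)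
  rw [V_succ 0 M]
  refine le_trans ?_ (ENNReal.sum_le_tsum (Finset.Icc 1 K))
  have heval : ∀ n ∈ Finset.Icc 1 K, (if 0 < n then qe n * V 0 (M / n) else 0)
      = ENNReal.ofReal (1 / M ^ 2) := by
    intro n hn
    rw [Finset.mem_Icc] at hn
    have hn1 : 0 < n := hn.1
    rw [if_pos hn1, V_zero, mu_div_one]
    have : min 1 ((n:ℝ)/M) = (n:ℝ)/M := by
      apply min_eq_right
      rw [div_le_one hM0]
      calc (n:ℝ) ≤ K := by exact_mod_cast hn.2
        _ ≤ M := hKM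
    rw [this]
    exact qe_mul_ofReal_sq n hn1 M hM0
  rw [Finset.sum_congr rfl heval, Finset.sum_const, Nat.card_Icc]
  simp only [Nat.add_sub_cancel, nsmul_eq_mul]
  calc ENNReal.ofReal (1 / (2 * M))
      ≤ ENNReal.ofReal ((K : ℝ) * (1 / M ^ 2)) := by
        apply ENNReal.ofReal_le_ofReal
        rw [mul_one_div, div_le_div_iff₀ (by positivity) (by positivity)]
        nlinarith
    _ = (K : ℝ≥0∞) * ENNReal.ofReal (1 / M ^ 2) := by
        rw [ENNReal.ofReal_mul (by positivity), ENNReal.ofReal_natCast]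

lemma qe_mul_ofReal (n : ℕ) (hn : 0 < n) (y : ℝ) :
    qe n * ENNReal.ofReal y = ENNReal.ofReal (y / (n : ℝ) ^ 2) := by
  rw [qe_eq_ofReal n hn, ← ENNReal.ofReal_mul (by positivity), div_eq_mul_inv, mul_comm]

lemma sum_Icc_inv_eq_harmonic (K : ℕ) :
    ∑ n ∈ Finset.Icc 1 K, ((n : ℝ))⁻¹ = (harmonic K : ℝ) := by
  simp only [harmonic_eq_sum_Icc, Rat.cast_sum, Rat.cast_inv, Rat.cast_natCast]

section Step

variable {j : ℕ} (hj1 : 0 < j) (a b M₀ : ℝ) (ha : 0 < a) (hb : 0 < b) (hM₀ : 3 ≤ M₀)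
  (H : ∀ M : ℝ, M₀ ≤ M →
    ENNReal.ofReal (a * Real.log M ^ (j-1) / M) ≤ V j M ∧
    V j M ≤ ENNReal.ofReal (b * Real.log M ^ (j-1) / M))
  (M : ℝ) (hM : M₀^2 ≤ M)

include hj1 ha hM₀ H hM in
lemma step_lower : ENNReal.ofReal ((a * (1/2)^j) * Real.log M ^ j / M) ≤ V (j+1) M := by
  have hM₀0 : (0:ℝ) < M₀ := by linarith
  have hM9 : (9:ℝ) ≤ M := by nlinarith
  have hM0 : (0:ℝ) < M := by linarith
  have hlog1 : 1 ≤ Real.log M := by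
    rw [Real.le_log_iff_exp_le hM0]
    have := Real.exp_one_lt_d9
    linarith
  have hlog0 : 0 ≤ Real.log M := by linarith
  have hjj : j - 1 + 1 = j := by omega
  rw [V_succ]
  set K' := ⌊Real.sqrt M⌋₊ with hK'
  have hsqrt0 : 0 < Real.sqrt M := Real.sqrt_pos.mpr hM0
  have hsqrtM₀ : M₀ ≤ Real.sqrt M := by
    calc M₀ = Real.sqrt (M₀^2) := by rw [Real.sqrt_sq hM₀0.le]
      _ ≤ Real.sqrt M := Real.sqrt_le_sqrt hM
  set d := (Real.log M / 2) ^ (j-1) with hd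
  have hd0 : 0 ≤ d := by positivity
  have key : ∀ n ∈ Finset.Icc 1 K',
      ENNReal.ofReal ((a * d / M) * ((n:ℝ))⁻¹)
        ≤ (if 0 < n then qe n * V j (M / n) else 0) := by
    intro n hn
    rw [Finset.mem_Icc] at hn
    have hn1 : 0 < n := hn.1
    have hn' : (0:ℝ) < n := by exact_mod_cast hn1
    have hnK : (n:ℝ) ≤ Real.sqrt M := le_trans (by exact_mod_cast hn.2) (Nat.floor_le hsqrt0.le)
    have hMn : Real.sqrt M ≤ M / n := by
      rw [le_div_iff₀ hn']
      calc Real.sqrt M * n ≤ Real.sqrt M * Real.sqrt M := by gcongr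
        _ = M := Real.mul_self_sqrt hM0.le
    have hMnM₀ : M₀ ≤ M / n := le_trans hsqrtM₀ hMn
    have hlogn : Real.log M / 2 ≤ Real.log (M / n) := by
      calc Real.log M / 2 = Real.log (Real.sqrt M) := (Real.log_sqrt hM0.le).symm
        _ ≤ Real.log (M / n) := Real.log_le_log hsqrt0 hMn
    have hpow : d ≤ Real.log (M / n) ^ (j-1) := by
      rw [hd]
      exact pow_le_pow_left₀ (by positivity) hlogn _
    have hVlow := (H (M/n) hMnM₀).1
    rw [if_pos hn1]
    calc ENNReal.ofReal ((a * d / M) * ((n:ℝ))⁻¹)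
        = qe n * ENNReal.ofReal (a * d * n / M) := by
          rw [qe_mul_ofReal n hn1]
          congr 1
          field_simp
      _ ≤ qe n * V j (M / n) := by
          gcongr
          refine le_trans (ENNReal.ofReal_le_ofReal ?_) hVlow
          rw [div_div_eq_mul_div]
          gcongr
  have h1 : (Real.log M / 2) ^ (j-1) * (Real.log M / 2) = (Real.log M / 2) ^ j := by
    rw [← pow_succ, hjj]
  have h2 : (Real.log M / 2) ^ j = Real.log M ^ j * (1/2)^j := by
    rw [div_pow, one_div, inv_pow, div_eq_mul_inv]
  calc ENNReal.ofReal (a * (1/2)^j * Real.log M ^ j / M)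
      = ENNReal.ofReal ((a * d / M) * (Real.log M / 2)) := by
        congr 1
        rw [hd]
        have h3 : a * (Real.log M / 2) ^ (j-1) / M * (Real.log M / 2)
            = a * ((Real.log M / 2) ^ j) / M := by rw [← h1]; ring
        rw [h3, h2]
        ring
    _ ≤ ENNReal.ofReal ((a * d / M) * ∑ n ∈ Finset.Icc 1 K', ((n:ℝ))⁻¹) := by
        apply ENNReal.ofReal_le_ofReal
        have hlogsqrt : Real.log M / 2 ≤ ∑ n ∈ Finset.Icc 1 K', ((n:ℝ))⁻¹ := by
          rw [sum_Icc_inv_eq_harmonic, ← Real.log_sqrt hM0.le]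
          exact log_le_harmonic_floor _ hsqrt0.le
        have hnn : 0 ≤ a * d / M := by positivity
        nlinarith
    _ = ∑ n ∈ Finset.Icc 1 K', ENNReal.ofReal ((a * d / M) * ((n:ℝ))⁻¹) := by
        rw [Finset.mul_sum, ENNReal.ofReal_sum_of_nonneg (fun n hn => by positivity)]
    _ ≤ ∑ n ∈ Finset.Icc 1 K', (if 0 < n then qe n * V j (M / n) else 0) :=
        Finset.sum_le_sum key
    _ ≤ ∑' n : ℕ, (if 0 < n then qe n * V j (M / n) else 0) :=
        ENNReal.sum_le_tsum _

include hj1 hb hM₀ H hM in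
lemma step_upper : V (j+1) M ≤ ENNReal.ofReal ((2*b + 2^(j+1)*M₀) * Real.log M ^ j / M) := by
  have hM₀0 : (0:ℝ) < M₀ := by linarith
  have hM9 : (9:ℝ) ≤ M := by nlinarith
  have hM0 : (0:ℝ) < M := by linarith
  have hlog1 : 1 ≤ Real.log M := by
    rw [Real.le_log_iff_exp_le hM0]
    have := Real.exp_one_lt_d9
    linarith
  have hlog0 : 0 ≤ Real.log M := by linarith
  have hjj : j - 1 + 1 = j := by omega
  rw [V_succ]
  set K := ⌊M / M₀⌋₊ with hKdef
  have hMM₀0 : 0 < M / M₀ := by positivity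
  have hKle : (K:ℝ) ≤ M / M₀ := Nat.floor_le hMM₀0.le
  have hKM : (K:ℝ) ≤ M := hKle.trans (by rw [div_le_iff₀ hM₀0]; nlinarith)
  set c := Real.log M ^ (j-1) with hc
  have hc0 : 0 ≤ c := by positivity
  have hpw : ∀ n : ℕ, (if 0 < n then qe n * V j (M / n) else 0)
      ≤ (if 0 < n ∧ n ≤ K then ENNReal.ofReal (b * c / (M * n)) else 0)
        + (if K + 1 ≤ n then qe n else 0) * 2^j := by
    intro n
    by_cases hn : 0 < n
    · have hn' : (0:ℝ) < n := by exact_mod_cast hn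
      rcases le_or_gt n K with h | h
      · rw [if_pos hn, if_pos ⟨hn, h⟩, if_neg (by omega), zero_mul, add_zero]
        have hnM₀ : (n:ℝ) ≤ M / M₀ := le_trans (by exact_mod_cast h) hKle
        have hMn : M₀ ≤ M / n := by
          rw [le_div_iff₀ hn']
          rw [le_div_iff₀ hM₀0] at hnM₀
          linarith [hnM₀]
        have hMn1 : (1:ℝ) ≤ M / n := by linarith
        have hlogle : Real.log (M / n) ≤ Real.log M :=
          Real.log_le_log (by positivity) (div_le_self hM0.le (by exact_mod_cast hn))
        have hlognn : 0 ≤ Real.log (M / n) := Real.log_nonneg hMn1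
        have hpow : Real.log (M/n) ^ (j-1) ≤ c := pow_le_pow_left₀ hlognn hlogle _
        have hVup := (H (M/n) hMn).2
        calc qe n * V j (M / n)
            ≤ qe n * ENNReal.ofReal (b * c * n / M) := by
              gcongr
              refine hVup.trans (ENNReal.ofReal_le_ofReal ?_)
              rw [div_div_eq_mul_div]
              gcongr
          _ = ENNReal.ofReal (b * c / (M * n)) := by
              rw [qe_mul_ofReal n hn]
              congr 1
              field_simp
      · rw [if_pos hn, if_neg (by omega), if_pos (by omega), zero_add]
        gcongr
        exact V_le_two_pow j (M / n)
    · rw [if_neg hn]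
      exact zero_le
  calc (∑' n : ℕ, if 0 < n then qe n * V j (M / n) else 0)
      ≤ ∑' n : ℕ, ((if 0 < n ∧ n ≤ K then ENNReal.ofReal (b * c / (M * n)) else 0)
        + (if K + 1 ≤ n then qe n else 0) * 2^j) :=
        Summable.tsum_le_tsum hpw ENNReal.summable ENNReal.summable
    _ = (∑' n : ℕ, if 0 < n ∧ n ≤ K then ENNReal.ofReal (b * c / (M * n)) else 0)
        + (∑' n : ℕ, if K + 1 ≤ n then qe n else 0) * 2^j := by
        rw [ENNReal.tsum_add, ENNReal.tsum_mul_right]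
    _ ≤ ENNReal.ofReal (2 * b * c * Real.log M / M)
        + ENNReal.ofReal (2^(j+1) * M₀ * Real.log M ^ j / M) := by
        gcongr
        · rw [tsum_eq_sum (s := Finset.Icc 1 K)
            (fun n hn => if_neg (fun hcc => hn (Finset.mem_Icc.mpr ⟨hcc.1, hcc.2⟩)))]
          have heval : ∀ n ∈ Finset.Icc 1 K,
              (if 0 < n ∧ n ≤ K then ENNReal.ofReal (b * c / (M * n)) else 0)
              = ENNReal.ofReal ((b * c / M) * ((n:ℝ))⁻¹) := by
            intro n hn
            rw [Finset.mem_Icc] at hn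
            have hn' : (0:ℝ) < n := by exact_mod_cast hn.1
            rw [if_pos ⟨hn.1, hn.2⟩]
            congr 1
            field_simp
          rw [Finset.sum_congr rfl heval,
            ← ENNReal.ofReal_sum_of_nonneg (fun n hn => by positivity), ← Finset.mul_sum]
          apply ENNReal.ofReal_le_ofReal
          rw [sum_Icc_inv_eq_harmonic]
          have hharm : (harmonic K : ℝ) ≤ 1 + Real.log K := harmonic_le_one_add_log K
          have hharm0 : (0:ℝ) ≤ harmonic K := by
            rcases Nat.eq_zero_or_pos K with h0 | hKpos
            · rw [h0]; simp
            · exact_mod_cast (harmonic_pos (Nat.pos_iff_ne_zero.mp hKpos)).le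
          have hlogK : Real.log K ≤ Real.log M := by
            rcases Nat.eq_zero_or_pos K with h0 | hKpos
            · rw [h0]
              simp only [Nat.cast_zero, Real.log_zero]
              exact hlog0
            · exact Real.log_le_log (by exact_mod_cast hKpos) hKM
          have h2log : (harmonic K : ℝ) ≤ 2 * Real.log M := by linarith
          have hbcM : 0 ≤ b * c / M := by positivity
          calc b * c / M * (harmonic K : ℝ) ≤ b * c / M * (2 * Real.log M) := by nlinarith
            _ = 2 * b * c * Real.log M / M := by ring
        · have hSt : (∑' n : ℕ, if K + 1 ≤ n then qe n else 0) = Stail (K+1) := rfl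
          rw [hSt]
          calc Stail (K+1) * 2^j ≤ ENNReal.ofReal (2 / ((K:ℝ)+1)) * 2^j := by
                gcongr
                refine (Stail_le (K+1) (by omega)).trans (le_of_eq ?_)
                congr 1
                push_cast
                ring
            _ ≤ ENNReal.ofReal (2 * M₀ / M) * 2^j := by
                refine mul_le_mul_left (ENNReal.ofReal_le_ofReal ?_) _
                have hK1 : M / M₀ ≤ (K:ℝ) + 1 := by
                  have := Nat.lt_floor_add_one (M / M₀)
                  linarith
                rw [div_le_div_iff₀ (by positivity) hM0]
                rw [div_le_iff₀ hM₀0] at hK1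
                nlinarith
            _ = ENNReal.ofReal (2 * M₀ / M * 2^j) := by
                rw [ENNReal.ofReal_mul (by positivity), ENNReal.ofReal_pow (by norm_num)]
                norm_num
            _ ≤ ENNReal.ofReal (2^(j+1) * M₀ * Real.log M ^ j / M) := by
                apply ENNReal.ofReal_le_ofReal
                have hlogj : 1 ≤ Real.log M ^ j := by
                  calc (1:ℝ) = 1 ^ j := (one_pow j).symm
                    _ ≤ Real.log M ^ j := pow_le_pow_left₀ zero_le_one hlog1 j
                have h1 : 2 * M₀ / M * 2^j = 2^(j+1) * M₀ / M * 1 := by ring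
                rw [h1]
                calc 2^(j+1) * M₀ / M * 1 ≤ 2^(j+1) * M₀ / M * Real.log M ^ j := by
                      gcongr
                  _ = 2^(j+1) * M₀ * Real.log M ^ j / M := by ring
    _ = ENNReal.ofReal (2 * b * c * Real.log M / M + 2^(j+1) * M₀ * Real.log M ^ j / M) := by
        rw [← ENNReal.ofReal_add (by positivity) (by positivity)]
    _ = ENNReal.ofReal ((2*b + 2^(j+1)*M₀) * Real.log M ^ j / M) := by
        congr 1
        rw [hc]
        have hcc : Real.log M ^ (j-1) * Real.log M = Real.log M ^ j := by
          rw [← pow_succ, hjj]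
        rw [← hcc]
        ring

end Step

lemma V_bounds (j : ℕ) (hj : 1 ≤ j) : ∃ a b M₀ : ℝ, 0 < a ∧ 0 < b ∧ 3 ≤ M₀ ∧
    ∀ M : ℝ, M₀ ≤ M →
      ENNReal.ofReal (a * Real.log M ^ (j-1) / M) ≤ V j M ∧
      V j M ≤ ENNReal.ofReal (b * Real.log M ^ (j-1) / M) := by
  induction j with
  | zero => omega
  | succ j ih =>
    rcases Nat.eq_zero_or_pos j with rfl | hj1
    · refine ⟨1/2, 3, 3, by norm_num, by norm_num, le_refl 3, fun M hM => ⟨?_, ?_⟩⟩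
      · refine le_trans (le_of_eq ?_) (V_one_lower M (by linarith))
        simp only [Nat.sub_self, pow_zero]
        congr 1
        ring
      · refine (V_one_upper M (by linarith)).trans (le_of_eq ?_)
        simp only [Nat.sub_self, pow_zero]
        congr 1
        ring
    obtain ⟨a, b, M₀, ha, hb, hM₀, H⟩ := ih hj1
    have hM₀0 : (0:ℝ) < M₀ := by linarith
    refine ⟨a * (1/2)^j, 2*b + 2^(j+1)*M₀, M₀^2, by positivity, by positivity,
      by nlinarith, fun M hM => ⟨?_, ?_⟩⟩
    · exact step_lower hj1 a b M₀ ha hM₀ H M hM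
    · exact step_upper hj1 a b M₀ hb hM₀ H M hM

lemma a_sum (M : ℝ) (hM : 0 < M) (B : ℕ) (hB : 0 < B) :
    (∑' n : ℕ, if 0 < n ∧ M ≤ ((n * B : ℕ) : ℝ) then qe n else 0) = SB M B := by
  rw [SB, Stail]
  refine tsum_congr fun n => ?_
  refine if_congr ?_ rfl rfl
  have hB' : (0:ℝ) < B := by exact_mod_cast hB
  constructor
  · rintro ⟨h1, h2⟩
    refine max_le h1 (Nat.ceil_le.mpr ?_)
    rw [div_le_iff₀ hB']
    push_cast at h2
    exact h2
  · intro h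
    have h1 : 1 ≤ n := le_trans (le_max_left _ _) h
    have h2 := Nat.ceil_le.mp (le_trans (le_max_right _ _) h)
    rw [div_le_iff₀ hB'] at h2
    exact ⟨h1, by push_cast; exact h2⟩

lemma c_sum (M : ℝ) (hM : 0 < M) (B : ℕ) (hB : 0 < B) :
    (∑' n : ℕ, if 0 < n ∧ M ≤ ((B * n : ℕ) : ℝ) then qe n else 0) = SB M B := by
  rw [← a_sum M hM B hB]
  refine tsum_congr fun n => if_congr ?_ rfl rfl
  rw [Nat.mul_comm]

lemma tsum_full_eq_Ae (j : ℕ) (M : ℝ) (hM : 0 < M) :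
    (∑' p : ℕ × (Fin j → ℕ) × ℕ,
      if (0 < p.1 ∧ (∀ i, 0 < p.2.1 i) ∧ 0 < p.2.2 ∧
          M ≤ ((p.1 * ∏ i, p.2.1 i : ℕ) : ℝ) ∧ M ≤ (((∏ i, p.2.1 i) * p.2.2 : ℕ) : ℝ))
        then qe p.1 * (∏ i, qe (p.2.1 i)) * qe p.2.2 else 0)
    = Ae j M := by
  rw [ENNReal.tsum_prod']
  have h1 : ∀ a : ℕ, (∑' y : (Fin j → ℕ) × ℕ,
      if (0 < a ∧ (∀ i, 0 < y.1 i) ∧ 0 < y.2 ∧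
          M ≤ ((a * ∏ i, y.1 i : ℕ) : ℝ) ∧ M ≤ (((∏ i, y.1 i) * y.2 : ℕ) : ℝ))
        then qe a * (∏ i, qe (y.1 i)) * qe y.2 else 0)
      = ∑' (b : Fin j → ℕ) (c : ℕ),
        (if (0 < a ∧ (∀ i, 0 < b i) ∧ 0 < c ∧
          M ≤ ((a * ∏ i, b i : ℕ) : ℝ) ∧ M ≤ (((∏ i, b i) * c : ℕ) : ℝ))
        then qe a * (∏ i, qe (b i)) * qe c else 0) := fun a => ENNReal.tsum_prod'
  rw [tsum_congr h1, ENNReal.tsum_comm]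
  rw [Ae]
  refine tsum_congr fun b => ?_
  by_cases ht : ∀ i, 0 < b i
  · rw [if_pos ht]
    set B := ∏ i, b i with hBdef
    have hB : 0 < B := Finset.prod_pos fun i _ => ht i
    set Q := ∏ i, qe (b i) with hQdef
    have step1 : ∀ a : ℕ,
        (∑' c : ℕ, if (0 < a ∧ (∀ i, 0 < b i) ∧ 0 < c ∧
            M ≤ ((a * B : ℕ) : ℝ) ∧ M ≤ ((B * c : ℕ) : ℝ))
          then qe a * Q * qe c else 0)
        = if (0 < a ∧ M ≤ ((a * B : ℕ) : ℝ)) then (qe a * Q) * SB M B else 0 := by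
      intro a
      by_cases ha : 0 < a ∧ M ≤ ((a * B : ℕ) : ℝ)
      · rw [if_pos ha]
        have hcongr : ∀ c : ℕ, (if (0 < a ∧ (∀ i, 0 < b i) ∧ 0 < c ∧
              M ≤ ((a * B : ℕ) : ℝ) ∧ M ≤ ((B * c : ℕ) : ℝ))
            then qe a * Q * qe c else 0)
            = (qe a * Q) * (if (0 < c ∧ M ≤ ((B * c : ℕ) : ℝ)) then qe c else 0) := by
          intro c
          by_cases hc : 0 < c ∧ M ≤ ((B * c : ℕ) : ℝ)
          · rw [if_pos ⟨ha.1, ht, hc.1, ha.2, hc.2⟩, if_pos hc]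
          · rw [if_neg (fun hh => hc ⟨hh.2.2.1, hh.2.2.2.2⟩), if_neg hc, mul_zero]
        rw [tsum_congr hcongr, ENNReal.tsum_mul_left, c_sum M hM B hB]
      · rw [if_neg ha]
        refine (tsum_congr fun c => if_neg (fun hh => ha ⟨hh.1, hh.2.2.2.1⟩)).trans tsum_zero
    rw [tsum_congr step1]
    have step2 : ∀ a : ℕ,
        (if (0 < a ∧ M ≤ ((a * B : ℕ) : ℝ)) then (qe a * Q) * SB M B else 0)
        = (Q * SB M B) * (if (0 < a ∧ M ≤ ((a * B : ℕ) : ℝ)) then qe a else 0) := by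
      intro a
      by_cases ha : 0 < a ∧ M ≤ ((a * B : ℕ) : ℝ)
      · rw [if_pos ha, if_pos ha]
        ring
      · rw [if_neg ha, if_neg ha, mul_zero]
    rw [tsum_congr step2, ENNReal.tsum_mul_left, a_sum M hM B hB]
    ring
  · rw [if_neg ht]
    refine (tsum_congr fun a => ?_).trans tsum_zero
    refine (tsum_congr fun c => if_neg (fun hh => ht hh.2.1)).trans tsum_zero

lemma overlapSum_eq_toReal (j : ℕ) (M : ℝ) (hM : 0 < M) :
    overlapSum j M = (Ae j M).toReal := by
  rw [← tsum_full_eq_Ae j M hM]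
  set P : ℕ × (Fin j → ℕ) × ℕ → Prop := fun p =>
    0 < p.1 ∧ (∀ i, 0 < p.2.1 i) ∧ 0 < p.2.2 ∧
      M ≤ ((p.1 * ∏ i, p.2.1 i : ℕ) : ℝ) ∧ M ≤ (((∏ i, p.2.1 i) * p.2.2 : ℕ) : ℝ) with hP
  set f : ℕ × (Fin j → ℕ) × ℕ → ℝ := fun p =>
    (1:ℝ) / ((p.1:ℝ)^2 * (∏ i, (p.2.1 i : ℝ)^2) * (p.2.2:ℝ)^2) with hf
  have hfnn : ∀ p, 0 ≤ f p := fun p => by rw [hf]; positivity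
  have hfe : ∀ p, P p →
      qe p.1 * (∏ i, qe (p.2.1 i)) * qe p.2.2 = ENNReal.ofReal (f p) := by
    rintro ⟨A, bb, C⟩ ⟨h1, h2, h3, _, _⟩
    have hprod : (∏ i, qe (bb i)) = ENNReal.ofReal (∏ i, (((bb i : ℝ))^2)⁻¹) := by
      rw [ENNReal.ofReal_prod_of_nonneg (fun i _ => by positivity)]
      exact Finset.prod_congr rfl fun i _ => qe_eq_ofReal _ (h2 i)
    rw [qe_eq_ofReal _ h1, qe_eq_ofReal _ h3, hprod,
      ← ENNReal.ofReal_mul (by positivity), ← ENNReal.ofReal_mul (by positivity)]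
    congr 1
    rw [hf]
    simp only []
    rw [one_div, mul_inv, mul_inv, ← Finset.prod_inv_distrib]
  have hne : ∀ p : ℕ × (Fin j → ℕ) × ℕ,
      (if P p then qe p.1 * (∏ i, qe (p.2.1 i)) * qe p.2.2 else 0) ≠ ∞ := by
    intro p
    by_cases hp : P p
    · rw [if_pos hp, hfe p hp]
      exact ENNReal.ofReal_ne_top
    · rw [if_neg hp]
      exact ENNReal.zero_ne_top
  rw [ENNReal.tsum_toReal_eq hne]
  have : overlapSum j M = ∑' x : {p | P p}, f x := rfl
  rw [this, tsum_subtype {p | P p} f]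
  refine tsum_congr fun p => ?_
  rw [Set.indicator_apply]
  simp only [Set.mem_setOf_eq]
  by_cases hp : P p
  · rw [if_pos hp, if_pos hp, hfe p hp, ENNReal.toReal_ofReal (hfnn p)]
  · rw [if_neg hp, if_neg hp, ENNReal.toReal_zero]

theorem stmt_7 (j : ℕ) (hj : 1 ≤ j) :
    ∃ c₁ c₂ M₀ : ℝ, 0 < c₁ ∧ 0 < c₂ ∧ 1 < M₀ ∧
      ∀ M : ℝ, M₀ ≤ M →
        c₁ * (Real.log M) ^ (j - 1) / M ≤ overlapSum j M ∧
        overlapSum j M ≤ c₂ * (Real.log M) ^ (j - 1) / M := by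

  obtain ⟨a, b, M₀, ha, hb, hM₀3, H⟩ := V_bounds j hj
  refine ⟨a/4, 4*b, M₀, by positivity, by positivity, by linarith, fun M hM => ?_⟩
  have hM0 : (0:ℝ) < M := by linarith
  have hM1 : (1:ℝ) ≤ M := by linarith
  have hlog0 : 0 ≤ Real.log M := Real.log_nonneg hM1
  obtain ⟨hlow, hup⟩ := H M hM
  have hov : overlapSum j M = (Ae j M).toReal := overlapSum_eq_toReal j M hM0
  have h4 : (4:ℝ≥0∞) = ENNReal.ofReal 4 := by rw [ENNReal.ofReal_ofNat]
  have hAe_up : Ae j M ≤ ENNReal.ofReal (4 * (b * Real.log M ^ (j-1) / M)) := by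
    calc Ae j M ≤ 4 * V j M := Ae_le_V j M hM1
      _ ≤ 4 * ENNReal.ofReal (b * Real.log M ^ (j-1) / M) := by gcongr
      _ = ENNReal.ofReal (4 * (b * Real.log M ^ (j-1) / M)) := by
          rw [h4, ← ENNReal.ofReal_mul (by norm_num)]
  have hAe_ne : Ae j M ≠ ∞ := ne_top_of_le_ne_top ENNReal.ofReal_ne_top hAe_up
  constructor
  · -- lower
    have hVA : V j M ≤ 4 * Ae j M := V_le_Ae j M hM1
    have hchain : ENNReal.ofReal (a * Real.log M ^ (j-1) / M) ≤ 4 * Ae j M :=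
      hlow.trans hVA
    have h4ne : (4:ℝ≥0∞) * Ae j M ≠ ∞ := ENNReal.mul_ne_top (by norm_num) hAe_ne
    have := ENNReal.toReal_mono h4ne hchain
    rw [ENNReal.toReal_ofReal (by positivity), ENNReal.toReal_mul] at this
    simp only [ENNReal.toReal_ofNat] at this
    rw [hov]
    have haL : a * Real.log M ^ (j-1) / M ≤ 4 * (Ae j M).toReal := this
    have : a/4 * Real.log M ^ (j-1) / M = (a * Real.log M ^ (j-1) / M) / 4 := by ring
    rw [this]
    linarith
  · -- upper
    have := ENNReal.toReal_mono ENNReal.ofReal_ne_top hAe_up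
    rw [ENNReal.toReal_ofReal (by positivity)] at this
    rw [hov]
    have heq : 4 * (b * Real.log M ^ (j-1) / M) = 4*b * Real.log M ^ (j-1) / M := by ring
    linarith [heq ▸ this]
end

section
/- There exist absolute constants c₁, c₂ > 0 and M₀ > 1 such that for all real M ≥ M₀: c₁/M ≤ ∑ 1/(a₁²·a₂²·b²·c₁²·c₂²) ≤ c₂/M, where the sum ranges over all tuples (a₁, a₂, b, c₁, c₂) of positive integers satisfying a₁·a₂·b ≥ M and b·c₁·c₂ ≥ M. -/
open MeasureTheory Filter Set

/-- The series ∑ 1/(a₁²·a₂²·b²·c₁²·c₂²) over positive integer tuples with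
a₁·a₂·b ≥ M and b·c₁·c₂ ≥ M. -/
noncomputable def overlapSum5 (M : ℝ) : ℝ :=
  ∑' p : {p : ℕ × ℕ × ℕ × ℕ × ℕ //
      0 < p.1 ∧ 0 < p.2.1 ∧ 0 < p.2.2.1 ∧ 0 < p.2.2.2.1 ∧ 0 < p.2.2.2.2 ∧
      M ≤ ((p.1 * p.2.1 * p.2.2.1 : ℕ) : ℝ) ∧
      M ≤ ((p.2.2.1 * p.2.2.2.1 * p.2.2.2.2 : ℕ) : ℝ)},
    (1 : ℝ) /
      ((p.1.1 : ℝ) ^ 2 * (p.1.2.1 : ℝ) ^ 2 * (p.1.2.2.1 : ℝ) ^ 2 *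
        (p.1.2.2.2.1 : ℝ) ^ 2 * (p.1.2.2.2.2 : ℝ) ^ 2)

/-! ### Auxiliary definitions -/

noncomputable def usq (n : ℕ) : ℝ := 1 / (n : ℝ) ^ 2

noncomputable def gg (n : ℕ) : ℝ := (n : ℝ) ^ (-(5 / 4) : ℝ)

noncomputable def ww (M : ℝ) (b : ℕ) : ℝ :=
  if (b : ℝ) ≤ M then M ^ (-(3 / 2) : ℝ) * (1 / Real.sqrt b) else 1 / (b : ℝ) ^ 2

noncomputable def ff (p : ℕ × ℕ × ℕ × ℕ × ℕ) : ℝ :=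
  usq p.1 * (usq p.2.1 * (usq p.2.2.1 * (usq p.2.2.2.1 * usq p.2.2.2.2)))

noncomputable def GG (M : ℝ) (p : ℕ × ℕ × ℕ × ℕ × ℕ) : ℝ :=
  gg p.1 * (gg p.2.1 * (ww M p.2.2.1 * (gg p.2.2.2.1 * gg p.2.2.2.2)))

lemma usq_nonneg (n : ℕ) : 0 ≤ usq n := by unfold usq; positivity

lemma usq_summable : Summable usq := by
  have := Real.summable_one_div_nat_pow (p := 2)
  exact this.2 one_lt_two

lemma gg_nonneg (n : ℕ) : 0 ≤ gg n := Real.rpow_nonneg (Nat.cast_nonneg n) _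

lemma gg_summable : Summable gg := Real.summable_nat_rpow.2 (by norm_num)

lemma ww_nonneg (M : ℝ) (hM : 0 ≤ M) (b : ℕ) : 0 ≤ ww M b := by
  unfold ww
  split
  · have h1 : (0:ℝ) ≤ M ^ (-(3 / 2) : ℝ) := Real.rpow_nonneg hM _
    have h2 : (0:ℝ) ≤ 1 / Real.sqrt b := by positivity
    exact mul_nonneg h1 h2
  · positivity

lemma ww_shift (M : ℝ) (n : ℕ) :
    ww M (n + (⌊M⌋₊ + 1)) = 1 / ((n + (⌊M⌋₊ + 1) : ℕ) : ℝ) ^ 2 := by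
  unfold ww
  rw [if_neg]
  push_cast
  have h1 : M < (⌊M⌋₊ : ℝ) + 1 := Nat.lt_floor_add_one M
  have h2 : (0:ℝ) ≤ (n : ℝ) := Nat.cast_nonneg n
  push_cast
  linarith

lemma ww_summable (M : ℝ) : Summable (ww M) := by
  rw [← summable_nat_add_iff (⌊M⌋₊ + 1)]
  have : (fun n => ww M (n + (⌊M⌋₊ + 1))) =
      fun n => usq (n + (⌊M⌋₊ + 1)) := by
    funext n; rw [ww_shift]; rfl
  rw [this]
  exact (summable_nat_add_iff (⌊M⌋₊ + 1)).2 usq_summable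

/-- product of two summable nonneg families over a product type -/
lemma tsum_mul_pair {α β : Type*} {f : α → ℝ} {g : β → ℝ}
    (hf : Summable f) (hg : Summable g) (hf0 : ∀ a, 0 ≤ f a) (hg0 : ∀ b, 0 ≤ g b) :
    Summable (fun z : α × β => f z.1 * g z.2) ∧
      (∑' z : α × β, f z.1 * g z.2) = (∑' a, f a) * ∑' b, g b := by
  have hs : Summable (fun z : α × β => f z.1 * g z.2) :=
    hf.mul_of_nonneg hg hf0 hg0
  refine ⟨hs, ?_⟩
  rw [Summable.tsum_prod' hs fun a => (hg.mul_left (f a))]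
  simp_rw [tsum_mul_left]
  exact tsum_mul_right

/-- partial-sum estimate for 1/√n -/
lemma sqrt_partial_sum : ∀ N : ℕ,
    ∑ i ∈ Finset.range (N + 1), 1 / Real.sqrt i ≤ 2 * Real.sqrt N := by
  intro N
  induction N with
  | zero => simp
  | succ N ih =>
    rw [Finset.sum_range_succ]
    have hb : (0:ℝ) < Real.sqrt (N + 1) := Real.sqrt_pos.2 (by positivity)
    have ha : (0:ℝ) ≤ Real.sqrt N := Real.sqrt_nonneg _
    have ha2 : (Real.sqrt N) ^ 2 = (N : ℝ) := Real.sq_sqrt (by positivity)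
    have hb2 : (Real.sqrt (N + 1)) ^ 2 = (N : ℝ) + 1 := by
      rw [Real.sq_sqrt (by positivity)]
    have hab : Real.sqrt N ≤ Real.sqrt (N + 1) :=
      Real.sqrt_le_sqrt (by push_cast; linarith)
    have key : 1 / Real.sqrt ((N : ℕ) + 1 : ℕ) ≤
        2 * Real.sqrt (N + 1) - 2 * Real.sqrt N := by
      have hcast : ((N + 1 : ℕ) : ℝ) = (N : ℝ) + 1 := by push_cast; ring
      rw [hcast, div_le_iff₀ hb]
      nlinarith [sq_nonneg (Real.sqrt (N + 1) - Real.sqrt N)]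
    have hc : ((N + 1 : ℕ) : ℝ) = (N : ℝ) + 1 := by push_cast; ring
    calc ∑ i ∈ Finset.range (N + 1), 1 / Real.sqrt i + 1 / Real.sqrt (N + 1 : ℕ)
        ≤ 2 * Real.sqrt N + (2 * Real.sqrt (N + 1) - 2 * Real.sqrt N) := by
          exact add_le_add ih key
      _ = 2 * Real.sqrt (N + 1) := by ring
      _ = 2 * Real.sqrt ((N + 1 : ℕ) : ℝ) := by rw [hc]

set_option maxHeartbeats 1000000 in
lemma sq_tail_sum (N : ℕ) (hN : 1 ≤ N) :
    ∑' i : ℕ, (1 : ℝ) / ((i + N + 1 : ℕ) : ℝ) ^ 2 ≤ 1 / (N : ℝ) := by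
  have hNpos : (0:ℝ) < (N : ℝ) := by exact_mod_cast hN
  have hpos : ∀ i : ℕ, (0:ℝ) < (i : ℝ) + N := fun i =>
    add_pos_of_nonneg_of_pos (Nat.cast_nonneg i) hNpos
  have hnn : ∀ i : ℕ, 0 ≤ 1 / ((i : ℝ) + N) - 1 / (((i + 1 : ℕ) : ℝ) + N) := by
    intro i
    have h2 : 1 / (((i + 1 : ℕ) : ℝ) + N) ≤ 1 / ((i : ℝ) + N) := by
      apply one_div_le_one_div_of_le (hpos i)
      push_cast; linarith
    linarith
  have hHasSum : HasSum (fun i : ℕ => 1 / ((i : ℝ) + N) - 1 / (((i + 1 : ℕ) : ℝ) + N))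
      (1 / (N : ℝ)) := by
    rw [hasSum_iff_tendsto_nat_of_nonneg hnn]
    have key : ∀ n : ℕ, ∑ i ∈ Finset.range n,
        (1 / ((i : ℝ) + N) - 1 / (((i + 1 : ℕ) : ℝ) + N)) = 1 / (N : ℝ) - 1 / ((n : ℝ) + N) := by
      intro n
      have h := Finset.sum_range_sub' (fun i : ℕ => 1 / ((i : ℝ) + N)) n
      simpa using h
    simp only [key]
    have h0 : Filter.Tendsto (fun n : ℕ => 1 / ((n : ℝ) + N)) Filter.atTop (nhds 0) := by
      have h1 : Filter.Tendsto (fun n : ℕ => (n : ℝ) + N) Filter.atTop Filter.atTop :=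
        Filter.tendsto_atTop_add_const_right _ _ tendsto_natCast_atTop_atTop
      simpa [one_div, Function.comp_def] using tendsto_inv_atTop_zero.comp h1
    simpa using tendsto_const_nhds.sub h0
  have hsum2 : Summable (fun i : ℕ => (1 : ℝ) / ((i + N + 1 : ℕ) : ℝ) ^ 2) :=
    (summable_nat_add_iff (N + 1)).2 usq_summable
  have hle : ∀ i : ℕ, (1 : ℝ) / ((i + N + 1 : ℕ) : ℝ) ^ 2 ≤
      1 / ((i : ℝ) + N) - 1 / (((i + 1 : ℕ) : ℝ) + N) := by
    intro i
    have hx := hpos i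
    have hne1 : ((i : ℝ) + N) ≠ 0 := ne_of_gt hx
    have e : 1 / ((i : ℝ) + N) - 1 / (((i + 1 : ℕ) : ℝ) + N) =
        1 / (((i : ℝ) + N) * ((i : ℝ) + N + 1)) := by
      have hne3 : ((i : ℝ) + 1 + (N : ℝ)) ≠ 0 := by positivity
      push_cast
      rw [div_sub_div _ _ hne1 hne3, div_eq_div_iff (by positivity) (by positivity)]
      ring
    rw [e, show ((i + N + 1 : ℕ) : ℝ) = (i : ℝ) + N + 1 by push_cast; ring]
    apply one_div_le_one_div_of_le (by positivity)
    nlinarith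
  calc ∑' i : ℕ, (1 : ℝ) / ((i + N + 1 : ℕ) : ℝ) ^ 2
      ≤ ∑' i : ℕ, (1 / ((i : ℝ) + N) - 1 / (((i + 1 : ℕ) : ℝ) + N)) :=
        Summable.tsum_le_tsum hle hsum2 hHasSum.summable
    _ = 1 / (N : ℝ) := hHasSum.tsum_eq

lemma rpow_split (x : ℝ) (hx : 0 < x) :
    x ^ 2 = x ^ ((5:ℝ)/4) * x ^ ((3:ℝ)/4) := by
  rw [← Real.rpow_natCast x 2, ← Real.rpow_add hx]
  norm_num

lemma rpow_splitB (x : ℝ) (hx : 0 < x) :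
    x ^ 2 = x ^ ((3:ℝ)/4) * x ^ ((3:ℝ)/4) * x ^ ((1:ℝ)/2) := by
  rw [← Real.rpow_natCast x 2, ← Real.rpow_add hx, ← Real.rpow_add hx]
  norm_num

/-- key inequality for the case of the first branch of `ww` -/
lemma key1 {M A1 A2 B C1 C2 : ℝ} (hA1 : 1 ≤ A1) (hA2 : 1 ≤ A2) (hB : 1 ≤ B)
    (hC1 : 1 ≤ C1) (hC2 : 1 ≤ C2) (hM : 0 < M)
    (hA : M ≤ A1 * A2 * B) (hC : M ≤ B * C1 * C2) :
    A1 ^ ((5:ℝ)/4) * (A2 ^ ((5:ℝ)/4) *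
        ((M ^ ((3:ℝ)/2) * Real.sqrt B) * (C1 ^ ((5:ℝ)/4) * C2 ^ ((5:ℝ)/4)))) ≤
      A1 ^ 2 * A2 ^ 2 * B ^ 2 * C1 ^ 2 * C2 ^ 2 := by
  have pA1 : (0:ℝ) < A1 := lt_of_lt_of_le one_pos hA1
  have pA2 : (0:ℝ) < A2 := lt_of_lt_of_le one_pos hA2
  have pB : (0:ℝ) < B := lt_of_lt_of_le one_pos hB
  have pC1 : (0:ℝ) < C1 := lt_of_lt_of_le one_pos hC1
  have pC2 : (0:ℝ) < C2 := lt_of_lt_of_le one_pos hC2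
  have h34 : M ^ ((3:ℝ)/4) ≤ (A1 * A2 * B) ^ ((3:ℝ)/4) :=
    Real.rpow_le_rpow hM.le hA (by norm_num)
  have h34' : M ^ ((3:ℝ)/4) ≤ (B * C1 * C2) ^ ((3:ℝ)/4) :=
    Real.rpow_le_rpow hM.le hC (by norm_num)
  have hM32 : M ^ ((3:ℝ)/2) ≤ (A1 * A2 * B) ^ ((3:ℝ)/4) * (B * C1 * C2) ^ ((3:ℝ)/4) := by
    have e : M ^ ((3:ℝ)/2) = M ^ ((3:ℝ)/4) * M ^ ((3:ℝ)/4) := by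
      rw [← Real.rpow_add hM]; norm_num
    rw [e]
    exact mul_le_mul h34 h34' (Real.rpow_nonneg hM.le _) (Real.rpow_nonneg (by positivity) _)
  have main : A1 ^ ((5:ℝ)/4) * (A2 ^ ((5:ℝ)/4) *
      ((((A1 * A2 * B) ^ ((3:ℝ)/4) * (B * C1 * C2) ^ ((3:ℝ)/4)) * Real.sqrt B) *
        (C1 ^ ((5:ℝ)/4) * C2 ^ ((5:ℝ)/4)))) =
      A1 ^ 2 * A2 ^ 2 * B ^ 2 * C1 ^ 2 * C2 ^ 2 := by
    rw [Real.mul_rpow (by positivity) (by positivity),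
        Real.mul_rpow (by positivity) (by positivity),
        Real.mul_rpow (by positivity) (by positivity),
        Real.mul_rpow (by positivity) (by positivity),
        Real.sqrt_eq_rpow,
        rpow_split A1 pA1, rpow_split A2 pA2, rpow_split C1 pC1, rpow_split C2 pC2,
        rpow_splitB B pB]
    try ring
  calc A1 ^ ((5:ℝ)/4) * (A2 ^ ((5:ℝ)/4) *
        ((M ^ ((3:ℝ)/2) * Real.sqrt B) * (C1 ^ ((5:ℝ)/4) * C2 ^ ((5:ℝ)/4))))
      ≤ A1 ^ ((5:ℝ)/4) * (A2 ^ ((5:ℝ)/4) *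
        ((((A1 * A2 * B) ^ ((3:ℝ)/4) * (B * C1 * C2) ^ ((3:ℝ)/4)) * Real.sqrt B) *
          (C1 ^ ((5:ℝ)/4) * C2 ^ ((5:ℝ)/4)))) := by
        gcongr
    _ = _ := main

/-- key inequality for the second branch of `ww` -/
lemma key2 {A1 A2 B C1 C2 : ℝ} (hA1 : 1 ≤ A1) (hA2 : 1 ≤ A2) (hB : 1 ≤ B)
    (hC1 : 1 ≤ C1) (hC2 : 1 ≤ C2) :
    A1 ^ ((5:ℝ)/4) * (A2 ^ ((5:ℝ)/4) * (B ^ 2 * (C1 ^ ((5:ℝ)/4) * C2 ^ ((5:ℝ)/4)))) ≤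
      A1 ^ 2 * A2 ^ 2 * B ^ 2 * C1 ^ 2 * C2 ^ 2 := by
  have haux : ∀ x : ℝ, 1 ≤ x → x ^ ((5:ℝ)/4) ≤ x ^ 2 := by
    intro x hx
    have := Real.rpow_le_rpow_of_exponent_le hx (by norm_num : (5:ℝ)/4 ≤ 2)
    rwa [show ((2:ℝ)) = ((2:ℕ):ℝ) by norm_num, Real.rpow_natCast] at this
  calc A1 ^ ((5:ℝ)/4) * (A2 ^ ((5:ℝ)/4) * (B ^ 2 * (C1 ^ ((5:ℝ)/4) * C2 ^ ((5:ℝ)/4))))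
      ≤ A1 ^ 2 * (A2 ^ 2 * (B ^ 2 * (C1 ^ 2 * C2 ^ 2))) := by
        gcongr ?_ * (?_ * (?_ * (?_ * ?_)))
        · exact haux A1 hA1
        · exact haux A2 hA2
        · exact haux C1 hC1
        · exact haux C2 hC2
    _ = _ := by ring

theorem stmt_8 :
    ∃ c₁ c₂ M₀ : ℝ, 0 < c₁ ∧ 0 < c₂ ∧ 1 < M₀ ∧
      ∀ M : ℝ, M₀ ≤ M →
        c₁ / M ≤ overlapSum5 M ∧ overlapSum5 M ≤ c₂ / M := by
  set K : ℝ := ∑' n, gg n with hKdef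
  have hK1 : 1 ≤ K := by
    have h := Summable.le_tsum gg_summable 1 (fun j _ => gg_nonneg j)
    have : gg 1 = 1 := by simp [gg]
    linarith
  have hKpos : (0:ℝ) < K := lt_of_lt_of_le one_pos hK1
  refine ⟨1/8, 4 * K ^ 4, 2, by norm_num, by positivity, by norm_num, ?_⟩
  intro M hM
  have hM0 : (0:ℝ) < M := by linarith
  set s : Set (ℕ × ℕ × ℕ × ℕ × ℕ) := {p | 0 < p.1 ∧ 0 < p.2.1 ∧ 0 < p.2.2.1 ∧
      0 < p.2.2.2.1 ∧ 0 < p.2.2.2.2 ∧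
      M ≤ ((p.1 * p.2.1 * p.2.2.1 : ℕ) : ℝ) ∧
      M ≤ ((p.2.2.1 * p.2.2.2.1 * p.2.2.2.2 : ℕ) : ℝ)} with hsdef
  have ffeq : ∀ p : ℕ × ℕ × ℕ × ℕ × ℕ,
      (1 : ℝ) / ((p.1 : ℝ) ^ 2 * (p.2.1 : ℝ) ^ 2 * (p.2.2.1 : ℝ) ^ 2 *
        (p.2.2.2.1 : ℝ) ^ 2 * (p.2.2.2.2 : ℝ) ^ 2) = ff p := by
    intro p
    simp only [ff, usq, one_div, mul_inv]
    ring
  have heq : overlapSum5 M = ∑' p, s.indicator ff p := by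
    rw [← tsum_subtype s ff]
    unfold overlapSum5
    exact tsum_congr fun p => ffeq p.1
  have hffsum : Summable ff := by
    have p45 := tsum_mul_pair usq_summable usq_summable usq_nonneg usq_nonneg
    have p345 := tsum_mul_pair usq_summable p45.1 usq_nonneg
      (fun z => mul_nonneg (usq_nonneg _) (usq_nonneg _))
    have p2345 := tsum_mul_pair usq_summable p345.1 usq_nonneg
      (fun z => mul_nonneg (usq_nonneg _)
        (mul_nonneg (usq_nonneg _) (usq_nonneg _)))
    have p12345 := tsum_mul_pair usq_summable p2345.1 usq_nonneg
      (fun z => mul_nonneg (usq_nonneg _) (mul_nonneg (usq_nonneg _)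
        (mul_nonneg (usq_nonneg _) (usq_nonneg _))))
    exact p12345.1
  have hindsum : Summable (s.indicator ff) := hffsum.indicator s
  have hff0 : ∀ p, 0 ≤ ff p := fun p => by
    exact mul_nonneg (usq_nonneg _) (mul_nonneg (usq_nonneg _)
      (mul_nonneg (usq_nonneg _) (mul_nonneg (usq_nonneg _) (usq_nonneg _))))
  constructor
  · -- lower bound
    set N : ℕ := ⌈M⌉₊ with hNdef
    have hN1 : 1 ≤ N := Nat.one_le_ceil_iff.2 hM0
    have hMN : M ≤ (N : ℝ) := Nat.le_ceil M
    have hNM : (N : ℝ) ≤ 2 * M := by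
      have := Nat.ceil_lt_add_one hM0.le
      have h1 : (1:ℝ) ≤ M := by linarith
      linarith
    have hNr : (1:ℝ) ≤ (N : ℝ) := by exact_mod_cast hN1
    set t : Finset (ℕ × ℕ × ℕ × ℕ × ℕ) :=
      (Finset.Icc N (2 * N)).image (fun b => (1, 1, b, 1, 1)) with htdef
    have hinj : ∀ x ∈ Finset.Icc N (2 * N), ∀ y ∈ Finset.Icc N (2 * N),
        (fun b => ((1, 1, b, 1, 1) : ℕ × ℕ × ℕ × ℕ × ℕ)) x =
        (fun b => ((1, 1, b, 1, 1) : ℕ × ℕ × ℕ × ℕ × ℕ)) y → x = y := by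
      intro x _ y _ h
      simpa using h
    have hval : ∀ b ∈ Finset.Icc N (2 * N),
        s.indicator ff (1, 1, b, 1, 1) = 1 / (b : ℝ) ^ 2 := by
      intro b hb
      rw [Finset.mem_Icc] at hb
      have hbN : N ≤ b := hb.1
      have hb0 : 0 < b := lt_of_lt_of_le hN1 hbN
      have hbr : M ≤ (b : ℝ) := le_trans hMN (by exact_mod_cast hbN)
      have hmem : (1, 1, b, 1, 1) ∈ s := by
        refine ⟨one_pos, one_pos, hb0, one_pos, one_pos, ?_, ?_⟩
        · simpa using hbr
        · simpa using hbr
      rw [Set.indicator_of_mem hmem]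
      simp [ff, usq]
    have hsum_eq : ∑ p ∈ t, s.indicator ff p =
        ∑ b ∈ Finset.Icc N (2 * N), 1 / (b : ℝ) ^ 2 := by
      rw [htdef, Finset.sum_image hinj]
      exact Finset.sum_congr rfl hval
    have hcard : (Finset.Icc N (2 * N)).card = N + 1 := by
      rw [Nat.card_Icc]; omega
    have hterm : ∀ b ∈ Finset.Icc N (2 * N),
        (1 : ℝ) / (4 * (N:ℝ) ^ 2) ≤ 1 / (b : ℝ) ^ 2 := by
      intro b hb
      rw [Finset.mem_Icc] at hb
      have hb0 : 0 < b := lt_of_lt_of_le hN1 hb.1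
      have hbr : (b : ℝ) ≤ 2 * N := by exact_mod_cast hb.2
      have hbp : (0:ℝ) < (b : ℝ) := by exact_mod_cast hb0
      apply one_div_le_one_div_of_le (by positivity)
      nlinarith
    have hlow : ((N : ℝ) + 1) * (1 / (4 * (N:ℝ) ^ 2)) ≤
        ∑ b ∈ Finset.Icc N (2 * N), 1 / (b : ℝ) ^ 2 := by
      have := Finset.card_nsmul_le_sum (Finset.Icc N (2 * N))
        (fun b => 1 / (b : ℝ) ^ 2) (1 / (4 * (N:ℝ) ^ 2)) hterm
      rw [hcard, nsmul_eq_mul] at this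
      push_cast at this
      linarith
    have hfrac : (1:ℝ) / 8 / M ≤ ((N : ℝ) + 1) * (1 / (4 * (N:ℝ) ^ 2)) := by
      rw [mul_one_div, div_div, div_le_div_iff₀ (by positivity) (by positivity)]
      have h1 : (N:ℝ) * (N:ℝ) ≤ (N:ℝ) * (2 * M) :=
        mul_le_mul_of_nonneg_left hNM (by positivity)
      nlinarith
    have htsum_ge : ∑ p ∈ t, s.indicator ff p ≤ ∑' p, s.indicator ff p :=
      Summable.sum_le_tsum t (fun p _ => Set.indicator_nonneg (fun q _ => hff0 q) p) hindsum
    rw [heq]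
    calc (1:ℝ) / 8 / M ≤ ((N : ℝ) + 1) * (1 / (4 * (N:ℝ) ^ 2)) := hfrac
      _ ≤ ∑ b ∈ Finset.Icc N (2 * N), 1 / (b : ℝ) ^ 2 := hlow
      _ = ∑ p ∈ t, s.indicator ff p := hsum_eq.symm
      _ ≤ ∑' p, s.indicator ff p := htsum_ge
  · -- upper bound
    have hww0 := ww_nonneg M hM0.le
    have p45 := tsum_mul_pair gg_summable gg_summable gg_nonneg gg_nonneg
    have p345 := tsum_mul_pair (ww_summable M) p45.1 hww0
      (fun z => mul_nonneg (gg_nonneg _) (gg_nonneg _))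
    have p2345 := tsum_mul_pair gg_summable p345.1 gg_nonneg
      (fun z => mul_nonneg (hww0 _)
        (mul_nonneg (gg_nonneg _) (gg_nonneg _)))
    have p12345 := tsum_mul_pair gg_summable p2345.1 gg_nonneg
      (fun z => mul_nonneg (gg_nonneg _) (mul_nonneg (hww0 _)
        (mul_nonneg (gg_nonneg _) (gg_nonneg _))))
    have hGsum : Summable (GG M) := p12345.1
    have hGG0 : ∀ p, 0 ≤ GG M p := fun p =>
      mul_nonneg (gg_nonneg _) (mul_nonneg (gg_nonneg _)
        (mul_nonneg (hww0 _) (mul_nonneg (gg_nonneg _) (gg_nonneg _))))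
    -- pointwise bound
    have hpoint : ∀ p, s.indicator ff p ≤ GG M p := by
      intro p
      by_cases hp : p ∈ s
      · rw [Set.indicator_of_mem hp]
        obtain ⟨a1, a2, b, c1, c2⟩ := p
        obtain ⟨h1, h2, h3, h4, h5, hA, hC⟩ := hp
        simp only at h1 h2 h3 h4 h5 hA hC
        have hA1 : (1:ℝ) ≤ (a1 : ℝ) := by exact_mod_cast h1
        have hA2 : (1:ℝ) ≤ (a2 : ℝ) := by exact_mod_cast h2
        have hB : (1:ℝ) ≤ (b : ℝ) := by exact_mod_cast h3
        have hC1 : (1:ℝ) ≤ (c1 : ℝ) := by exact_mod_cast h4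
        have hC2 : (1:ℝ) ≤ (c2 : ℝ) := by exact_mod_cast h5
        have hAr : M ≤ (a1 : ℝ) * (a2 : ℝ) * (b : ℝ) := by push_cast at hA; linarith
        have hCr : M ≤ (b : ℝ) * (c1 : ℝ) * (c2 : ℝ) := by push_cast at hC; linarith
        have hffval : ff (a1, a2, b, c1, c2) =
            1 / ((a1:ℝ)^2 * (a2:ℝ)^2 * (b:ℝ)^2 * (c1:ℝ)^2 * (c2:ℝ)^2) := by
          simp only [ff, usq, one_div, mul_inv]
          ring
        rw [hffval]
        by_cases hb : (b : ℝ) ≤ M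
        · have hGval : GG M (a1, a2, b, c1, c2) =
              1 / ((a1:ℝ) ^ ((5:ℝ)/4) * ((a2:ℝ) ^ ((5:ℝ)/4) *
                ((M ^ ((3:ℝ)/2) * Real.sqrt b) * ((c1:ℝ) ^ ((5:ℝ)/4) * (c2:ℝ) ^ ((5:ℝ)/4))))) := by
            simp only [GG, gg, ww, if_pos hb]
            rw [show (-(5/4) : ℝ) = -(5/4 : ℝ) by norm_num]
            rw [Real.rpow_neg (Nat.cast_nonneg a1), Real.rpow_neg (Nat.cast_nonneg a2),
                Real.rpow_neg (Nat.cast_nonneg c1), Real.rpow_neg (Nat.cast_nonneg c2),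
                show (-(3/2) : ℝ) = -(3/2 : ℝ) by norm_num,
                Real.rpow_neg hM0.le]
            simp only [one_div, mul_inv]
            try ring
          rw [hGval]
          apply one_div_le_one_div_of_le
          · have hsb : (0:ℝ) < Real.sqrt b := Real.sqrt_pos.2 (by linarith)
            positivity
          · exact key1 hA1 hA2 hB hC1 hC2 hM0 hAr hCr
        · have hGval : GG M (a1, a2, b, c1, c2) =
              1 / ((a1:ℝ) ^ ((5:ℝ)/4) * ((a2:ℝ) ^ ((5:ℝ)/4) *
                ((b:ℝ) ^ 2 * ((c1:ℝ) ^ ((5:ℝ)/4) * (c2:ℝ) ^ ((5:ℝ)/4))))) := by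
            simp only [GG, gg, ww, if_neg hb]
            rw [show (-(5/4) : ℝ) = -(5/4 : ℝ) by norm_num]
            rw [Real.rpow_neg (Nat.cast_nonneg a1), Real.rpow_neg (Nat.cast_nonneg a2),
                Real.rpow_neg (Nat.cast_nonneg c1), Real.rpow_neg (Nat.cast_nonneg c2)]
            simp only [one_div, mul_inv]
            try ring
          rw [hGval]
          apply one_div_le_one_div_of_le
          · positivity
          · exact key2 hA1 hA2 hB hC1 hC2
      · rw [Set.indicator_of_notMem hp]
        exact hGG0 p
    -- sum of GG
    set W : ℝ := ∑' b, ww M b with hWdef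
    have hGGsum_eq : ∑' p, GG M p = K * (K * (W * (K * K))) := by
      calc ∑' p, GG M p
          = K * ∑' z : ℕ × ℕ × ℕ × ℕ,
              gg z.1 * (ww M z.2.1 * (gg z.2.2.1 * gg z.2.2.2)) := p12345.2
        _ = K * (K * ∑' z : ℕ × ℕ × ℕ, ww M z.1 * (gg z.2.1 * gg z.2.2)) := by
            rw [p2345.2]
        _ = K * (K * (W * ∑' z : ℕ × ℕ, gg z.1 * gg z.2)) := by rw [p345.2]
        _ = K * (K * (W * (K * K))) := by rw [p45.2]
    -- bound W
    have hWb : W ≤ 4 / M := by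
      set N1 : ℕ := ⌊M⌋₊ with hN1def
      have hN1 : 1 ≤ N1 := Nat.le_floor (by exact_mod_cast (by linarith : (1:ℝ) ≤ M))
      have hN1r : (1:ℝ) ≤ (N1 : ℝ) := by exact_mod_cast hN1
      have hsplit := Summable.sum_add_tsum_nat_add (f := ww M) (N1 + 1) (ww_summable M)
      have hsqM : (0:ℝ) < Real.sqrt M := Real.sqrt_pos.2 hM0
      -- head
      have hhead : ∑ i ∈ Finset.range (N1 + 1), ww M i ≤ 2 / M := by
        have hcong : ∀ i ∈ Finset.range (N1 + 1),
            ww M i = M ^ (-(3 / 2) : ℝ) * (1 / Real.sqrt i) := by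
          intro i hi
          rw [Finset.mem_range] at hi
          have hiN : i ≤ N1 := Nat.lt_succ_iff.1 hi
          have : (i : ℝ) ≤ M := by
            calc (i : ℝ) ≤ (N1 : ℝ) := by exact_mod_cast hiN
              _ ≤ M := Nat.floor_le hM0.le
          rw [ww, if_pos this]
        rw [Finset.sum_congr rfl hcong, ← Finset.mul_sum]
        have h1 : ∑ i ∈ Finset.range (N1 + 1), 1 / Real.sqrt i ≤ 2 * Real.sqrt M := by
          calc ∑ i ∈ Finset.range (N1 + 1), 1 / Real.sqrt i
              ≤ 2 * Real.sqrt N1 := sqrt_partial_sum N1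
            _ ≤ 2 * Real.sqrt M := by
                have := Real.sqrt_le_sqrt (Nat.floor_le hM0.le)
                linarith
        have h2 : (0:ℝ) ≤ M ^ (-(3 / 2) : ℝ) := Real.rpow_nonneg hM0.le _
        calc M ^ (-(3 / 2) : ℝ) * ∑ i ∈ Finset.range (N1 + 1), 1 / Real.sqrt i
            ≤ M ^ (-(3 / 2) : ℝ) * (2 * Real.sqrt M) := by
              exact mul_le_mul_of_nonneg_left h1 h2
          _ = 2 / M := by
              rw [Real.rpow_neg hM0.le,
                show (3 / 2 : ℝ) = 1 + 1 / 2 by norm_num,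
                Real.rpow_add hM0, Real.rpow_one, ← Real.sqrt_eq_rpow]
              rw [eq_div_iff (ne_of_gt hM0)]
              field_simp
      -- tail
      have htail : ∑' i : ℕ, ww M (i + (N1 + 1)) ≤ 2 / M := by
        have hcong : ∑' i : ℕ, ww M (i + (N1 + 1)) =
            ∑' i : ℕ, (1 : ℝ) / ((i + N1 + 1 : ℕ) : ℝ) ^ 2 :=
          tsum_congr fun i => ww_shift M i
        rw [hcong]
        calc ∑' i : ℕ, (1 : ℝ) / ((i + N1 + 1 : ℕ) : ℝ) ^ 2
            ≤ 1 / (N1 : ℝ) := sq_tail_sum N1 hN1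
          _ ≤ 2 / M := by
              rw [div_le_div_iff₀ (by positivity) hM0]
              have := Nat.sub_one_lt_floor M
              rw [← hN1def] at this
              nlinarith
      have : W = (∑ i ∈ Finset.range (N1 + 1), ww M i) + ∑' i : ℕ, ww M (i + (N1 + 1)) := by
        rw [hWdef, ← hsplit]
      rw [this]
      calc (∑ i ∈ Finset.range (N1 + 1), ww M i) + ∑' i : ℕ, ww M (i + (N1 + 1))
          ≤ 2 / M + 2 / M := add_le_add hhead htail
        _ = 4 / M := by ring
    rw [heq]
    calc ∑' p, s.indicator ff p ≤ ∑' p, GG M p := Summable.tsum_le_tsum hpoint hindsum hGsum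
      _ = K * (K * (W * (K * K))) := hGGsum_eq
      _ = W * K ^ 4 := by ring
      _ ≤ (4 / M) * K ^ 4 := mul_le_mul_of_nonneg_right hWb (by positivity)
      _ = 4 * K ^ 4 / M := by ring
end
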